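/- arXiv:math/9902042 — 8 statements merged into one kernel-verified Lean document; each statement's English description precedes it below -/
import Mathlib

section
/- Let p be a prime and n ≥ 1 an integer. For every s ∈ ℂ with Re(s) > n, the function x ↦ max(1,‖x‖_p)^{−Re(s)} is integrable on ℚ_p^n with respect to μ, and ∫_{ℚ_p^n} max(1,‖x‖_p)^{−s} dμ(x) = (1 − p^{−s})/(1 − p^{n−s}). -/
open MeasureTheory Pointwise ENNReal NNReal

noncomputable instance (p : ℕ) [Fact p.Prime] : MeasurableSpace ℚ_[p] := borel _
instance (p : ℕ) [Fact p.Prime] : BorelSpace ℚ_[p] := ⟨rfl⟩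

namespace Stmt0Aux

variable (p : ℕ) [Fact p.Prime] (n : ℕ)

/-- closed ball of radius `p^k` in `ℚ_p^n`. -/
def B (k : ℤ) : Set (Fin n → ℚ_[p]) := {x | ‖x‖ ≤ (p : ℝ) ^ k}

variable {p n}

lemma hp1 : 1 < (p : ℝ) := by exact_mod_cast (Fact.out : p.Prime).one_lt

lemma measurableSet_B (k : ℤ) : MeasurableSet (B p n k) :=
  (isClosed_le continuous_norm continuous_const).measurableSet

lemma mem_B {k : ℤ} {x : Fin n → ℚ_[p]} : x ∈ B p n k ↔ ∀ i, ‖x i‖ ≤ (p : ℝ) ^ k := by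
  refine pi_norm_le_iff_of_nonneg ?_
  positivity

lemma B_mono {k l : ℤ} (h : k ≤ l) : B p n k ⊆ B p n l := fun x hx =>
  le_trans hx (zpow_le_zpow_right₀ hp1.le h)

lemma cover_disjoint :
    Pairwise (Function.onFun Disjoint
      (fun v : Fin n → Fin p => ((fun i => ((v i : ℕ) : ℚ_[p])) +ᵥ B p n (-1)))) := by
  intro v w hvw
  rw [Function.onFun, Set.disjoint_left]
  intro x hxv hxw
  obtain ⟨i, hi⟩ := Function.ne_iff.mp hvw
  rw [Set.mem_vadd_set_iff_neg_vadd_mem] at hxv hxw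
  have h1 := mem_B.mp hxv i
  have h2 := mem_B.mp hxw i
  simp only [Pi.vadd_apply, Pi.neg_apply, vadd_eq_add, neg_add_eq_sub] at h1 h2
  -- h1 : ‖x i - v i‖ ≤ p⁻¹ etc
  set d : ℤ := (v i : ℕ) - (w i : ℕ) with hd
  have hdne : d ≠ 0 := by
    simp only [hd, sub_ne_zero]
    exact_mod_cast fun h => hi (Fin.ext (by exact_mod_cast h))
  have hdlt : |d| < p := by
    have h1 : ((v i : ℕ) : ℤ) < p := by exact_mod_cast (v i).2
    have h2 : ((w i : ℕ) : ℤ) < p := by exact_mod_cast (w i).2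
    rw [abs_sub_lt_iff]
    omega
  have hndvd : ¬ (p : ℤ) ∣ d := by
    intro hdvd
    have := Int.le_of_dvd (abs_pos.mpr hdne) ((dvd_abs _ _).mpr hdvd)
    omega
  have hnorm1 : ¬ (‖((d : ℤ) : ℚ_[p])‖ < 1) := by
    rw [Padic.norm_intCast_lt_one_iff]
    exact_mod_cast hndvd
  apply hnorm1
  have key : ((d : ℤ) : ℚ_[p]) = (x i - ((w i : ℕ) : ℚ_[p])) + (((v i : ℕ) : ℚ_[p]) - x i) := by
    push_cast [hd]; ring
  calc ‖((d : ℤ) : ℚ_[p])‖ ≤ max ‖x i - ((w i : ℕ) : ℚ_[p])‖ ‖((v i : ℕ) : ℚ_[p]) - x i‖ := by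
        rw [key]; exact Padic.nonarchimedean _ _
    _ ≤ (p : ℝ) ^ (-1 : ℤ) := by
        apply max_le h2
        rw [norm_sub_rev]; exact h1
    _ < 1 := by
        rw [zpow_neg_one]
        exact inv_lt_one_of_one_lt₀ hp1

lemma cover_eq :
    B p n 0 = ⋃ v : Fin n → Fin p, ((fun i => ((v i : ℕ) : ℚ_[p])) +ᵥ B p n (-1)) := by
  apply Set.Subset.antisymm
  · intro x hx
    have hxi : ∀ i, ‖x i‖ ≤ 1 := by
      intro i
      simpa using mem_B.mp hx i
    set z : ∀ i, ℤ_[p] := fun i => ⟨x i, hxi i⟩ with hz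
    have hva : ∀ i, (z i).appr 1 < p := by
      intro i; simpa using (z i).appr_lt 1
    refine Set.mem_iUnion.mpr ⟨fun i => ⟨(z i).appr 1, hva i⟩, ?_⟩
    rw [Set.mem_vadd_set_iff_neg_vadd_mem]
    rw [mem_B]
    intro i
    simp only [Pi.vadd_apply, Pi.neg_apply, vadd_eq_add, neg_add_eq_sub]
    have hsp := (z i).appr_spec 1
    have hle : ‖(z i) - ((z i).appr 1 : ℤ_[p])‖ ≤ (p : ℝ) ^ (-1 : ℤ) := by
      have := (PadicInt.norm_le_pow_iff_mem_span_pow ((z i) - ((z i).appr 1 : ℤ_[p])) 1).mpr hsp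
      simpa using this
    have : ((z i - ((z i).appr 1 : ℤ_[p]) : ℤ_[p]) : ℚ_[p]) = x i - (((z i).appr 1 : ℕ) : ℚ_[p]) := by
      push_cast
      rfl
    calc ‖x i - (((z i).appr 1 : ℕ) : ℚ_[p])‖ = ‖(z i) - ((z i).appr 1 : ℤ_[p])‖ := by
          rw [PadicInt.norm_def, this]
      _ ≤ (p : ℝ) ^ (-1 : ℤ) := hle
  · refine Set.iUnion_subset fun v => ?_
    intro x hx
    rw [Set.mem_vadd_set_iff_neg_vadd_mem] at hx
    rw [mem_B]
    intro i
    have h1 := mem_B.mp hx i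
    simp only [Pi.vadd_apply, Pi.neg_apply, vadd_eq_add, neg_add_eq_sub] at h1
    have h2 : ‖((v i : ℕ) : ℚ_[p])‖ ≤ 1 := by
      have := Padic.norm_int_le_one (p := p) ((v i : ℕ) : ℤ)
      rwa [Int.cast_natCast] at this
    have : x i = (x i - ((v i : ℕ) : ℚ_[p])) + ((v i : ℕ) : ℚ_[p]) := by ring
    rw [this, zpow_zero]
    calc ‖(x i - ((v i : ℕ) : ℚ_[p])) + ((v i : ℕ) : ℚ_[p])‖
        ≤ max ‖x i - ((v i : ℕ) : ℚ_[p])‖ ‖((v i : ℕ) : ℚ_[p])‖ := Padic.nonarchimedean _ _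
      _ ≤ 1 := by
        apply max_le _ h2
        refine le_trans h1 ?_
        rw [zpow_neg_one]
        exact (inv_lt_one_of_one_lt₀ hp1).le

lemma measure_B_neg_one (μ : Measure (Fin n → ℚ_[p])) [μ.IsAddHaarMeasure]
    (hμ1 : μ (B p n 0) = 1) : ((p : ℝ≥0∞) ^ n) * μ (B p n (-1)) = 1 := by
  conv_rhs => rw [← hμ1]
  rw [cover_eq, measure_iUnion cover_disjoint (fun v => (measurableSet_B _).const_vadd _),
    tsum_fintype]
  have : ∀ v : Fin n → Fin p,
      μ ((fun i => ((v i : ℕ) : ℚ_[p])) +ᵥ B p n (-1)) = μ (B p n (-1)) :=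
    fun v => measure_vadd _ _ _
  rw [Finset.sum_congr rfl (fun v _ => this v), Finset.sum_const, Finset.card_univ]
  simp [Fintype.card_fun, nsmul_eq_mul]

lemma measure_B (μ : Measure (Fin n → ℚ_[p])) [μ.IsAddHaarMeasure]
    (hμ1 : μ (B p n 0) = 1) (k : ℤ) : μ (B p n k) = ((p : ℝ≥0∞) ^ n) ^ k := by
  set P : ℝ≥0∞ := (p : ℝ≥0∞) ^ n with hP
  have hppos : (0:ℝ) < p := by exact_mod_cast (Fact.out : p.Prime).pos
  have hP0 : P ≠ 0 :=
    pow_ne_zero n (by exact_mod_cast (Fact.out : p.Prime).ne_zero)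
  have hPtop : P ≠ ⊤ := by
    exact ENNReal.pow_ne_top (ENNReal.natCast_ne_top p)
  have hpne : ((p : ℕ) : ℚ_[p]) ≠ 0 := by
    exact_mod_cast (Fact.out : p.Prime).ne_zero
  set e : (Fin n → ℚ_[p]) ≃+ (Fin n → ℚ_[p]) :=
    (LinearEquiv.smulOfNeZero (K := ℚ_[p]) (M := Fin n → ℚ_[p]) _ hpne).toAddEquiv with he
  have hecoe : ⇑e = fun x : Fin n → ℚ_[p] => ((p : ℕ) : ℚ_[p]) • x := rfl
  have hecont : Continuous e := by rw [hecoe]; exact continuous_const_smul _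
  have hesymm : Continuous e.symm := by
    have hco : ⇑e.symm = fun x : Fin n → ℚ_[p] => (((p : ℕ) : ℚ_[p]))⁻¹ • x := by
      funext y
      apply e.injective
      rw [AddEquiv.apply_symm_apply, hecoe]
      simp [smul_smul, mul_inv_cancel₀ hpne]
    rw [hco]; exact continuous_const_smul _
  set ν : Measure (Fin n → ℚ_[p]) := μ.map e with hν
  have : ν.IsAddHaarMeasure := AddEquiv.isAddHaarMeasure_map μ e hecont hesymm
  set c : ℝ≥0∞ := (Measure.addHaarScalarFactor ν μ : ℝ≥0∞) with hcdef
  have hc : ∀ A : Set (Fin n → ℚ_[p]), MeasurableSet A → ν A = c * μ A := by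
    intro A _
    rw [Measure.isAddLeftInvariant_eq_smul ν μ]
    simp [hcdef]
  have hpre : ∀ k : ℤ, ⇑e ⁻¹' (B p n k) = B p n (k + 1) := by
    intro k
    ext x
    have hex : e x = (p : ℚ_[p]) • x := rfl
    simp only [Set.mem_preimage, B, Set.mem_setOf_eq, hex, norm_smul, Padic.norm_p]
    rw [inv_mul_le_iff₀ hppos, zpow_add_one₀ (ne_of_gt hppos), mul_comm]
  have hscale : ∀ k : ℤ, μ (B p n (k + 1)) = c * μ (B p n k) := by
    intro k
    rw [← hpre k, ← Measure.map_apply hecont.measurable (measurableSet_B k)]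
    exact hc _ (measurableSet_B k)
  have h2 := measure_B_neg_one μ hμ1
  have h1 : c * μ (B p n (-1)) = 1 := by
    have := hscale (-1)
    norm_num at this
    rw [← this, hμ1]
  have hm0 : μ (B p n (-1)) ≠ 0 := by
    intro h; rw [h, mul_zero] at h2; exact zero_ne_one h2
  have hmtop : μ (B p n (-1)) ≠ ⊤ := by
    intro h; rw [h, ENNReal.mul_top hP0] at h2; exact ENNReal.top_ne_one h2
  have hcP : c = P := by
    have : μ (B p n (-1)) * c = μ (B p n (-1)) * P := by
      rw [mul_comm _ c, mul_comm _ P, h1, h2]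
    exact (ENNReal.mul_right_inj hm0 hmtop).mp this
  induction k using Int.induction_on with
  | zero => simpa using hμ1
  | succ k ih =>
      rw [hscale k, ih, hcP, ENNReal.zpow_add hP0 hPtop k 1, zpow_one, mul_comm]
  | pred k ih =>
      have harg : (-(k:ℤ) - 1 + 1) = -k := by ring
      have := hscale (-(k:ℤ) - 1)
      rw [harg, ih, hcP] at this
      have hz := ENNReal.zpow_add hP0 hPtop (-(k:ℤ) - 1) 1
      rw [harg, zpow_one] at hz
      have hgoal : P * P ^ (-(k:ℤ) - 1) = P * μ (B p n (-(k:ℤ) - 1)) := by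
        rw [← this, hz, mul_comm]
      exact ((ENNReal.mul_right_inj hP0 hPtop).mp hgoal).symm

variable (p n) in
/-- shells -/
def T : ℕ → Set (Fin n → ℚ_[p])
  | 0 => B p n 0
  | (k+1) => B p n ((k : ℤ)+1) \ B p n (k : ℤ)

lemma measurableSet_T (k : ℕ) : MeasurableSet (T p n k) := by
  cases k with
  | zero => exact measurableSet_B 0
  | succ k => exact (measurableSet_B _).diff (measurableSet_B _)

lemma T_subset (k : ℕ) : T p n k ⊆ B p n (k : ℤ) := by
  cases k with
  | zero => exact subset_rfl
  | succ k => exact Set.diff_subset.trans (by push_cast; exact subset_rfl)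

lemma disjoint_T : Pairwise (Function.onFun Disjoint (T p n)) := by
  rw [pairwise_disjoint_on]
  intro i j hij
  cases j with
  | zero => omega
  | succ m =>
    have h1 : T p n i ⊆ B p n (m : ℤ) :=
      (T_subset i).trans (B_mono (by exact_mod_cast Nat.lt_succ_iff.mp hij))
    have h2 : Disjoint (B p n (m : ℤ)) (T p n (m+1)) := Set.disjoint_sdiff_right
    exact (h2.symm.mono_right h1).symm

lemma iUnion_T : (⋃ k, T p n k) = Set.univ := by
  refine Set.eq_univ_of_forall fun x => ?_
  classical
  have hex : ∃ m : ℕ, x ∈ B p n (m : ℤ) := by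
    obtain ⟨m, hm⟩ := exists_nat_gt ‖x‖
    refine ⟨m, le_trans hm.le ?_⟩
    calc ((m:ℝ)) ≤ (2:ℝ)^m := by exact_mod_cast Nat.lt_two_pow_self (n := m) |>.le
      _ ≤ (p:ℝ)^m := by
          apply pow_le_pow_left₀ (by norm_num)
          exact_mod_cast (Fact.out : p.Prime).two_le
      _ = (p:ℝ)^(m:ℤ) := by rw [zpow_natCast]
  set k := Nat.find hex with hk
  have hmem : x ∈ B p n (k : ℤ) := Nat.find_spec hex
  refine Set.mem_iUnion.mpr ⟨k, ?_⟩
  cases hkk : k with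
  | zero => rw [hkk] at hmem; exact hmem
  | succ m =>
    have hnot : ¬ x ∈ B p n (m : ℤ) := Nat.find_min hex (by omega)
    rw [hkk] at hmem
    exact ⟨by exact_mod_cast hmem, hnot⟩

lemma norm_on_T (hn : 1 ≤ n) {k : ℕ} {x : Fin n → ℚ_[p]} (hx : x ∈ T p n (k+1)) :
    ‖x‖ = (p : ℝ) ^ ((k : ℤ) + 1) := by
  haveI : Nonempty (Fin n) := ⟨⟨0, hn⟩⟩
  obtain ⟨hx1, hx2⟩ := hx
  rw [B, Set.mem_setOf_eq] at hx1
  have hx2' : ¬ ‖x‖ ≤ (p : ℝ) ^ (k : ℤ) := hx2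
  obtain ⟨i, hi⟩ := Finset.exists_mem_eq_sup (Finset.univ : Finset (Fin n))
    Finset.univ_nonempty (fun i => ‖x i‖₊)
  have hnx : ‖x‖ = ‖x i‖ := by
    rw [Pi.norm_def, hi.2]
    rfl
  have hxi0 : x i ≠ 0 := by
    intro h
    apply hx2'
    rw [hnx, h, norm_zero]
    positivity
  obtain ⟨m, hm⟩ : ∃ m : ℤ, ‖x‖ = (p : ℝ) ^ m := by
    exact ⟨-(x i).valuation, by rw [hnx]; exact Padic.norm_eq_zpow_neg_valuation hxi0⟩
  rw [hm] at hx1 hx2' ⊢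
  have h1 : m ≤ (k : ℤ) + 1 := by
    by_contra h
    exact absurd hx1 (not_le.mpr ((zpow_lt_zpow_right₀ hp1 (by omega))))
  have h2 : (k : ℤ) < m := by
    by_contra h
    exact hx2' (zpow_le_zpow_right₀ hp1.le (not_lt.mp h))
  congr 1
  omega

end Stmt0Aux

open Stmt0Aux Complex in
/-- For a prime `p`, an integer `n ≥ 1`, and the additive Haar
measure `μ` on `ℚ_p^n` normalized by `μ(ℤ_p^n) = 1`, for every complex `s` with
`Re s > n`, the function `x ↦ max(1, ‖x‖_p) ^ (-Re s)` is integrable and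
`∫ max(1,‖x‖_p)^(-s) dμ = (1 - p^(-s)) / (1 - p^(n-s))`. -/
theorem stmt0 (p : ℕ) [Fact p.Prime] (n : ℕ) (hn : 1 ≤ n)
    (μ : Measure (Fin n → ℚ_[p])) (hμ : μ.IsAddHaarMeasure)
    (hμ1 : μ {x | ∀ i, ‖x i‖ ≤ 1} = 1)
    (s : ℂ) (hs : (n : ℝ) < s.re) :
    Integrable (fun x : Fin n → ℚ_[p] => (max 1 ‖x‖) ^ (-s.re)) μ ∧
    ∫ x : Fin n → ℚ_[p], ((max 1 ‖x‖ : ℝ) : ℂ) ^ (-s) ∂μ =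
      (1 - (p : ℂ) ^ (-s)) / (1 - (p : ℂ) ^ ((n : ℂ) - s)) := by
  haveI := hμ
  have hppos : (0:ℝ) < p := by exact_mod_cast (Fact.out : p.Prime).pos
  have hp1R : (1:ℝ) < p := hp1
  -- basic measure facts
  have hB0 : μ (B p n 0) = 1 := by
    rw [← hμ1]
    congr 1
    ext x
    rw [B, Set.mem_setOf_eq, Set.mem_setOf_eq, zpow_zero, pi_norm_le_iff_of_nonneg zero_le_one]
  set P : ℝ≥0∞ := (p : ℝ≥0∞) ^ n with hPdef
  have hPtop : P ≠ ⊤ := ENNReal.pow_ne_top (ENNReal.natCast_ne_top p)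
  have hμB : ∀ k : ℤ, μ (B p n k) = P ^ k := measure_B μ hB0
  have hμT0 : μ (T p n 0) = 1 := hB0
  have hμT : ∀ k : ℕ, μ (T p n (k+1)) = P ^ (k+1) - P ^ k := by
    intro k
    rw [show T p n (k+1) = B p n ((k:ℤ)+1) \ B p n (k:ℤ) from rfl,
      measure_diff (B_mono (by omega)) (measurableSet_B _).nullMeasurableSet
        (by rw [hμB, zpow_natCast]; exact ENNReal.pow_ne_top hPtop),
      hμB, hμB]
    congr 1
    · rw [show ((k:ℤ)+1) = ((k+1 : ℕ) : ℤ) by push_cast; ring, zpow_natCast]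
    · rw [zpow_natCast]
  have hμTle : ∀ k : ℕ, μ (T p n (k+1)) ≤ P ^ (k+1) := by
    intro k
    rw [hμT k]; exact tsub_le_self
  -- the real integrand
  have hFcont : Continuous fun x : Fin n → ℚ_[p] => (max 1 ‖x‖) ^ (-s.re) := by
    apply Continuous.rpow_const (continuous_const.max continuous_norm)
    intro x
    exact Or.inl (by positivity)
  -- value of max on T
  have hmax0 : ∀ x ∈ T p n 0, max 1 ‖x‖ = 1 := fun x hx =>
    max_eq_left (by simpa [T, B, zpow_zero] using hx)
  have hmaxk : ∀ (k : ℕ), ∀ x ∈ T p n (k+1), max 1 ‖x‖ = (p:ℝ) ^ ((k:ℤ)+1) := by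
    intro k x hx
    rw [norm_on_T hn hx]
    exact max_eq_right (one_le_zpow₀ hp1R.le (by omega))
  -- lintegral of the real integrand
  set F : (Fin n → ℚ_[p]) → ℝ≥0∞ := fun x => ENNReal.ofReal ((max 1 ‖x‖) ^ (-s.re)) with hFdef
  have hr : ∀ k : ℕ, ((p:ℝ) ^ ((k:ℤ)+1)) ^ (-s.re) = ((p:ℝ) ^ (-s.re)) ^ (k+1) := by
    intro k
    rw [show ((k:ℤ)+1) = ((k+1 : ℕ) : ℤ) by push_cast; ring, zpow_natCast,
      ← Real.rpow_natCast (p:ℝ) (k+1), ← Real.rpow_natCast ((p:ℝ) ^ (-s.re)) (k+1),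
      ← Real.rpow_mul hppos.le, ← Real.rpow_mul hppos.le, mul_comm]
  have hF1 : ∀ x ∈ T p n 0, F x = (1:ℝ≥0∞) := by
    intro x hx
    simp only [hFdef, hmax0 x hx, Real.one_rpow, ENNReal.ofReal_one]
  have hlinT0 : ∫⁻ x in T p n 0, F x ∂μ = 1 := by
    rw [setLIntegral_congr_fun (measurableSet_T 0) hF1, setLIntegral_const,
      hμT0, one_mul]
  have hlinT : ∀ k : ℕ, ∫⁻ x in T p n (k+1), F x ∂μ
      = ENNReal.ofReal ((p:ℝ) ^ (-s.re)) ^ (k+1) * μ (T p n (k+1)) := by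
    intro k
    have hFk : ∀ x ∈ T p n (k+1), F x = ENNReal.ofReal ((p:ℝ) ^ (-s.re)) ^ (k+1) := by
      intro x hx
      simp only [hFdef, hmaxk k x hx, hr k, ENNReal.ofReal_pow (Real.rpow_nonneg hppos.le _)]
    rw [setLIntegral_congr_fun (measurableSet_T (k+1)) hFk, setLIntegral_const]
  set r : ℝ≥0∞ := ENNReal.ofReal ((p:ℝ) ^ (-s.re)) * P with hrdef
  have hrofReal : r = ENNReal.ofReal ((p:ℝ) ^ ((n:ℝ) - s.re)) := by
    rw [hrdef, hPdef, show ((p:ℕ) : ℝ≥0∞) = ENNReal.ofReal (p:ℝ) by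
        rw [ENNReal.ofReal_natCast],
      ← ENNReal.ofReal_pow hppos.le, ← ENNReal.ofReal_mul (Real.rpow_nonneg hppos.le _)]
    congr 1
    rw [← Real.rpow_natCast (p:ℝ) n, ← Real.rpow_add hppos]
    congr 1
    ring
  have hrlt : r < 1 := by
    rw [hrofReal]
    apply ENNReal.ofReal_lt_one.mpr
    exact Real.rpow_lt_one_of_one_lt_of_neg hp1R (by linarith)
  have hlintotal : ∫⁻ x, F x ∂μ < ⊤ := by
    have hsplit : ∫⁻ x, F x ∂μ = ∑' k, ∫⁻ x in T p n k, F x ∂μ := by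
      rw [← setLIntegral_univ, ← iUnion_T, lintegral_iUnion measurableSet_T disjoint_T]
    rw [hsplit]
    have hbound : ∀ k : ℕ, ∫⁻ x in T p n k, F x ∂μ ≤ r ^ k := by
      intro k
      cases k with
      | zero => rw [hlinT0]; simp
      | succ k =>
        rw [hlinT k, hrdef, mul_pow]
        exact mul_le_mul_right (hμTle k) _
    calc ∑' k, ∫⁻ x in T p n k, F x ∂μ ≤ ∑' k, r ^ k := ENNReal.tsum_le_tsum hbound
      _ = (1 - r)⁻¹ := ENNReal.tsum_geometric r
      _ < ⊤ := ENNReal.inv_lt_top.mpr (tsub_pos_of_lt hrlt)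
  -- integrability of the real function
  have hInt : Integrable (fun x : Fin n → ℚ_[p] => (max 1 ‖x‖) ^ (-s.re)) μ := by
    refine ⟨hFcont.aestronglyMeasurable, ?_⟩
    rw [hasFiniteIntegral_iff_ofReal (ae_of_all _ (fun x => Real.rpow_nonneg (by positivity) _))]
    exact hlintotal
  refine ⟨hInt, ?_⟩
  -- the complex integrand
  set f : (Fin n → ℚ_[p]) → ℂ := fun x => ((max 1 ‖x‖ : ℝ) : ℂ) ^ (-s) with hfdef
  have habs : ∀ x : Fin n → ℚ_[p], ‖f x‖ = (max 1 ‖x‖) ^ (-s.re) := by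
    intro x
    rw [hfdef]
    rw [Complex.norm_cpow_eq_rpow_re_of_pos (lt_of_lt_of_le one_pos (le_max_left _ _))]
    simp
  have hfcont : Continuous f := by
    apply Continuous.cpow (Complex.continuous_ofReal.comp (continuous_const.max continuous_norm))
      continuous_const
    intro x
    exact Complex.ofReal_mem_slitPlane.mpr (lt_of_lt_of_le one_pos (le_max_left _ _))
  have hIntC : Integrable f μ :=
    hInt.mono' hfcont.aestronglyMeasurable (ae_of_all _ (fun x => (habs x).le))
  -- constants
  have hpC0 : ((p:ℕ) : ℂ) ≠ 0 := by exact_mod_cast (Fact.out : p.Prime).ne_zero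
  set t : ℂ := (p : ℂ) ^ (-s) with htdef
  set u : ℂ := (p : ℂ) ^ ((n : ℂ) - s) with hudef
  have hPn0 : ((p:ℂ) ^ n) ≠ 0 := pow_ne_zero _ hpC0
  have huet : u = (p:ℂ) ^ n * t := by
    rw [hudef, htdef, sub_eq_add_neg, Complex.cpow_add _ _ hpC0, Complex.cpow_natCast]
  have hu1 : ‖u‖ < 1 := by
    rw [hudef, show ((p:ℕ):ℂ) = (((p:ℕ):ℝ):ℂ) by push_cast; rfl,
      Complex.norm_cpow_eq_rpow_re_of_pos hppos]
    have : ((n : ℂ) - s).re = (n : ℝ) - s.re := by simp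
    rw [this]
    exact Real.rpow_lt_one_of_one_lt_of_neg hp1R (by linarith)
  have h1u : (1 : ℂ) - u ≠ 0 := by
    intro h
    have : u = 1 := by linear_combination -h
    rw [this] at hu1
    simp at hu1
  -- value of f on shells
  have hcpowk : ∀ k : ℕ, (((p:ℝ) ^ ((k:ℤ)+1) : ℝ) : ℂ) ^ (-s) = t ^ (k+1) := by
    intro k
    have hbase : (((p:ℝ) ^ ((k:ℤ)+1) : ℝ) : ℂ) = ((p:ℕ):ℂ) ^ ((k+1 : ℕ) : ℂ) := by
      rw [Complex.cpow_natCast]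
      push_cast
      rw [show ((k:ℤ)+1) = ((k+1 : ℕ) : ℤ) by push_cast; ring, zpow_natCast]
    have him : (Complex.log ((p:ℕ):ℂ) * ((k+1 : ℕ) : ℂ)).im = 0 := by
      simp [Complex.mul_im, Complex.log_im]
    have hmul := Complex.cpow_mul (x := ((p:ℕ):ℂ)) (y := ((k+1:ℕ) : ℂ)) (-s)
      (by rw [him]; exact neg_neg_iff_pos.mpr Real.pi_pos)
      (by rw [him]; exact Real.pi_pos.le)
    have hnat := Complex.cpow_nat_mul ((p:ℕ):ℂ) (k+1) (-s)
    rw [hbase, ← hmul]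
    rw [show ((k+1:ℕ) : ℂ) * (-s) = ((k+1:ℕ) : ℂ) * (-s) from rfl] at hnat ⊢
    rw [hnat, htdef]
  -- set integrals on shells
  have hTfin : ∀ k : ℕ, μ (T p n k) ≠ ⊤ := by
    intro k
    cases k with
    | zero => rw [hμT0]; exact one_ne_top
    | succ k =>
      exact ne_top_of_le_ne_top (ENNReal.pow_ne_top hPtop) (hμTle k)
  -- set integral values
  have hval0 : ∫ x in T p n 0, f x ∂μ = 1 := by
    have heq : Set.EqOn f (fun _ => (1:ℂ)) (T p n 0) := by
      intro x hx
      simp only [hfdef, hmax0 x hx, Complex.ofReal_one, Complex.one_cpow]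
    rw [setIntegral_congr_fun (measurableSet_T 0) heq, setIntegral_const, measureReal_def, hμT0]
    simp
  have hP1 : (1:ℝ≥0∞) ≤ P := by
    rw [hPdef]
    exact one_le_pow_of_one_le' (by exact_mod_cast (Fact.out : p.Prime).one_lt.le) n
  have hPR : ∀ m : ℕ, (P ^ m).toReal = ((p:ℝ)^n) ^ m := by
    intro m
    rw [hPdef]
    simp [ENNReal.toReal_pow]
  have hμTreal : ∀ k : ℕ, (μ (T p n (k+1))).toReal = ((p:ℝ)^n)^(k+1) - ((p:ℝ)^n)^k := by
    intro k
    rw [hμT k, ENNReal.toReal_sub_of_le (pow_le_pow_right₀ hP1 (by omega))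
      (ENNReal.pow_ne_top hPtop), hPR, hPR]
  set c : ℂ := ((p:ℂ)^n)⁻¹ with hcdef
  have hvalk : ∀ k : ℕ, ∫ x in T p n (k+1), f x ∂μ = (1 - c) * u ^ (k+1) := by
    intro k
    have heq : Set.EqOn f (fun _ => t ^ (k+1)) (T p n (k+1)) := by
      intro x hx
      simp only [hfdef]
      rw [hmaxk k x hx, hcpowk k]
    rw [setIntegral_congr_fun (measurableSet_T (k+1)) heq, setIntegral_const, measureReal_def, hμTreal k]
    rw [huet, mul_pow, Complex.real_smul]
    push_cast
    field_simp [hcdef, hPn0]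
    have hc1 : (p:ℂ)^n * c = 1 := by rw [hcdef]; exact mul_inv_cancel₀ hPn0
    linear_combination ((p:ℂ) ^ (n * k) * t * t ^ k) * hc1
  have hgsum : HasSum (fun k => ∫ x in T p n k, f x ∂μ) (c + (1 - c) * (1 - u)⁻¹) := by
    have h1 : HasSum (fun k : ℕ => if k = 0 then c else 0) c := hasSum_ite_eq 0 c
    have h2 : HasSum (fun k : ℕ => (1 - c) * u ^ k) ((1 - c) * (1 - u)⁻¹) :=
      (hasSum_geometric_of_norm_lt_one hu1).mul_left _
    have h3 := h1.add h2
    have hfun : (fun k : ℕ => ∫ x in T p n k, f x ∂μ)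
        = fun k : ℕ => (if k = 0 then c else 0) + (1 - c) * u ^ k := by
      funext k
      cases k with
      | zero => rw [hval0]; simp
      | succ k => rw [hvalk k]; simp
    rw [hfun]
    exact h3
  have hintegral : ∫ x, f x ∂μ = c + (1 - c) * (1 - u)⁻¹ := by
    rw [← setIntegral_univ, ← iUnion_T,
      integral_iUnion measurableSet_T disjoint_T hIntC.integrableOn]
    exact hgsum.tsum_eq
  rw [hintegral]
  have h1u' : (1:ℂ) - (p:ℂ)^n * t ≠ 0 := by rw [← huet]; exact h1u
  rw [huet, hcdef]
  field_simp
  ring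
end

section
/- Let p be a prime, n ≥ 1 an integer, ψ a standard additive character of ℚ_p, and a = (a_1,…,a_n) ∈ ℤ^n such that p does not divide all of a_1,…,a_n. Then for every s ∈ ℂ with Re(s) > n, ∫_{ℚ_p^n} max(1,‖x‖_p)^{−s} ψ_a(x) dμ(x) = 1 − p^{−s}. -/
open MeasureTheory Filter Set Topology
open scoped ENNReal NNReal

/-- Let `p` be a prime, `n ≥ 1`, `ψ` a standard additive character of
`ℚ_p` (continuous, with values on the unit circle, trivial on `ℤ_p`, nontrivial on
`p⁻¹ℤ_p`), and `a ∈ ℤ^n` not all of whose coordinates are divisible by `p`. Then for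
`Re s > n`, `∫ max(1,‖x‖_p)^(-s) ψ(a·x) dμ(x) = 1 - p^(-s)`. -/
theorem stmt1 (p : ℕ) [Fact p.Prime] (n : ℕ) (hn : 1 ≤ n)
    (μ : Measure (Fin n → ℚ_[p])) (hμ : μ.IsAddHaarMeasure)
    (hμ1 : μ {x | ∀ i, ‖x i‖ ≤ 1} = 1)
    (ψ : ℚ_[p] → ℂ) (hψcont : Continuous ψ)
    (hψadd : ∀ x y : ℚ_[p], ψ (x + y) = ψ x * ψ y)
    (hψabs : ∀ x : ℚ_[p], ‖ψ x‖ = 1)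
    (hψtriv : ∀ x : ℚ_[p], ‖x‖ ≤ 1 → ψ x = 1)
    (hψnontriv : ∃ x : ℚ_[p], ‖x‖ ≤ p ∧ ψ x ≠ 1)
    (a : Fin n → ℤ) (ha : ¬ ∀ i, (p : ℤ) ∣ a i)
    (s : ℂ) (hs : (n : ℝ) < s.re) :
    ∫ x : Fin n → ℚ_[p], ((max 1 ‖x‖ : ℝ) : ℂ) ^ (-s) * ψ (∑ i, (a i : ℚ_[p]) * x i) ∂μ =
      1 - (p : ℂ) ^ (-s) := by
  classical
  haveI := hμ
  obtain ⟨i₀, hi₀⟩ := not_forall.mp ha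
  obtain ⟨x₀, hx₀norm, hx₀ne⟩ := hψnontriv
  have hp : p.Prime := Fact.out
  have hp1 : (1:ℝ) < p := by exact_mod_cast hp.one_lt
  have hp0 : (0:ℝ) < p := lt_trans one_pos hp1
  set G : (Fin n → ℚ_[p]) → ℂ := fun x => ψ (∑ i, (a i : ℚ_[p]) * x i) with hG
  set F : (Fin n → ℚ_[p]) → ℂ :=
    fun x => ((max 1 ‖x‖ : ℝ) : ℂ) ^ (-s) * ψ (∑ i, (a i : ℚ_[p]) * x i) with hF
  set B : ℕ → Set (Fin n → ℚ_[p]) := fun j => {x | ‖x‖ ≤ (p:ℝ)^j} with hB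
  -- basic properties of the balls
  have hBball : ∀ j, B j = Metric.closedBall 0 ((p:ℝ)^j) := by
    intro j; ext x; simp [hB, Metric.mem_closedBall, dist_zero_right]
  have hBclosed : ∀ j, IsClosed (B j) := fun j => (hBball j) ▸ Metric.isClosed_closedBall
  have hBmeas : ∀ j, MeasurableSet (B j) := fun j => (hBclosed j).measurableSet
  have hBcompact : ∀ j, IsCompact (B j) := fun j => (hBball j) ▸ isCompact_closedBall _ _
  have hBmono : Monotone B := by
    intro j k hjk x hx
    exact le_trans hx (pow_le_pow_right₀ hp1.le hjk)
  have hBU : (⋃ j, B j) = univ := by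
    ext x
    simp only [mem_iUnion, mem_univ, iff_true]
    obtain ⟨k, hk⟩ := exists_nat_gt ‖x‖
    exact ⟨k, le_trans hk.le (by exact_mod_cast Nat.le_of_lt (Nat.lt_pow_self (n := k) hp.one_lt))⟩
  have hμB0 : μ (B 0) = 1 := by
    rw [← hμ1]
    congr 1
    ext x
    simp only [hB, mem_setOf_eq, pow_zero]
    exact ⟨fun h i => le_trans (norm_le_pi_norm x i) h,
      fun h => (pi_norm_le_iff_of_nonneg zero_le_one).mpr h⟩
  -- continuity
  have hcontL : Continuous (fun x : Fin n → ℚ_[p] => ∑ i, (a i : ℚ_[p]) * x i) := by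
    exact continuous_finset_sum _ fun i _ => by fun_prop
  have hcontG : Continuous G := hψcont.comp hcontL
  have hcontF : Continuous F := by
    rw [hF]
    apply Continuous.mul _ hcontG
    rw [continuous_iff_continuousAt]
    intro x
    refine ContinuousAt.cpow ?_ continuousAt_const ?_
    · exact (Complex.continuous_ofReal.comp (continuous_const.max continuous_norm)).continuousAt
    · exact Or.inl (by simpa using lt_of_lt_of_le one_pos (le_max_left 1 ‖x‖))
  -- norm of F
  have hnormF : ∀ x, ‖F x‖ = (max 1 ‖x‖) ^ (-s.re) := by
    intro x
    rw [hF]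
    simp only [norm_mul, hψabs, mul_one]
    rw [Complex.norm_cpow_eq_rpow_re_of_pos (lt_of_lt_of_le one_pos (le_max_left _ _))]
    simp
  -- shells have exact norm
  have hshell : ∀ (j : ℕ) (x : Fin n → ℚ_[p]), x ∈ B (j+1) \ B j → ‖x‖ = (p:ℝ)^(j+1) := by
    intro j x hx
    obtain ⟨hx1, hx2⟩ := hx
    have hex : ∃ i, (p:ℝ)^j < ‖x i‖ := by
      by_contra h
      push_neg at h
      exact hx2 ((pi_norm_le_iff_of_nonneg (by positivity)).mpr h)
    obtain ⟨i, hi⟩ := hex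
    have hxi0 : x i ≠ 0 := by
      intro h
      rw [h, norm_zero] at hi
      exact absurd hi (not_lt.mpr (by positivity))
    have hval := Padic.norm_eq_zpow_neg_valuation hxi0
    have hile : ‖x i‖ ≤ (p:ℝ)^(j+1) := le_trans (norm_le_pi_norm x i) hx1
    have hpowj : ((p:ℝ)^j : ℝ) = (p:ℝ)^((j:ℤ)) := by rw [zpow_natCast]
    have hpowj1 : ((p:ℝ)^(j+1) : ℝ) = (p:ℝ)^((j:ℤ)+1) := by
      rw [show ((j:ℤ)+1) = ((j+1 : ℕ) : ℤ) by push_cast; ring, zpow_natCast]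
    have heq : ‖x i‖ = (p:ℝ)^(j+1) := by
      rw [hval] at hi hile ⊢
      rw [hpowj] at hi
      rw [hpowj1] at hile
      have h1 : (j:ℤ) < -(x i).valuation := (zpow_lt_zpow_iff_right₀ hp1).mp hi
      have h2 : -(x i).valuation ≤ ((j:ℤ)+1) := (zpow_le_zpow_iff_right₀ hp1).mp hile
      have h3 : -(x i).valuation = (j:ℤ)+1 := le_antisymm h2 (by omega)
      rw [h3, hpowj1]
    exact le_antisymm hx1 (heq ▸ norm_le_pi_norm x i)
  -- measure bound on balls
  have hμBle : ∀ j, μ (B j) ≤ (p:ℝ≥0∞) ^ (j*n) := by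
    intro j
    have hcover : B j ⊆ ⋃ (c : Fin n → Fin (p^j)),
        (fun x => -(fun i => ((c i : ℕ) : ℚ_[p]) * (p:ℚ_[p])^(-(j:ℤ))) + x) ⁻¹' (B 0) := by
      intro x hx
      have hz : ∀ i, ‖(p:ℚ_[p])^(j:ℕ) * x i‖ ≤ 1 := by
        intro i
        rw [norm_mul, Padic.norm_p_pow]
        calc ((p:ℝ)^(-(j:ℕ):ℤ)) * ‖x i‖ ≤ (p:ℝ)^(-(j:ℕ):ℤ) * (p:ℝ)^(j:ℕ) := by
              apply mul_le_mul_of_nonneg_left (le_trans (norm_le_pi_norm x i) hx) (by positivity)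
          _ = 1 := by
              rw [← zpow_natCast (p:ℝ) j, ← zpow_add₀ (ne_of_gt hp0)]
              simp
      set w : Fin n → ℤ_[p] := fun i => ⟨(p:ℚ_[p])^(j:ℕ) * x i, hz i⟩ with hw
      refine mem_iUnion.mpr ⟨fun i => ⟨(w i).appr j, PadicInt.appr_lt _ _⟩, ?_⟩
      simp only [mem_preimage]
      show ‖(-(fun i => ((((w i).appr j : ℕ) : ℚ_[p]) * (p:ℚ_[p])^(-(j:ℤ)))) + x)‖ ≤ (p:ℝ)^(0:ℕ)
      refine (pi_norm_le_iff_of_nonneg (by positivity)).mpr ?_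
      intro i
      show ‖(-(((((w i).appr j : ℕ) : ℚ_[p]) * (p:ℚ_[p])^(-(j:ℤ)))) + x i)‖ ≤ (p:ℝ)^(0:ℕ)
      have hspec := PadicInt.appr_spec j (w i)
      rw [Ideal.mem_span_singleton] at hspec
      obtain ⟨u, hu⟩ := hspec
      have hxirw : x i = ((w i : ℚ_[p])) * (p:ℚ_[p])^(-(j:ℤ)) := by
        show x i = ((p:ℚ_[p])^(j:ℕ) * x i) * (p:ℚ_[p])^(-(j:ℤ))
        rw [mul_comm ((p:ℚ_[p])^(j:ℕ)) (x i), mul_assoc, ← zpow_natCast (p:ℚ_[p]) j,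
          ← zpow_add₀ (by exact_mod_cast hp.ne_zero), add_neg_cancel, zpow_zero, mul_one]
      rw [hxirw, ← sub_eq_neg_add, ← sub_mul, norm_mul, Padic.norm_p_zpow]
      have h1 : ((w i : ℚ_[p])) - (((w i).appr j : ℕ) : ℚ_[p]) =
          (((w i - (((w i).appr j : ℕ) : ℤ_[p])) : ℤ_[p]) : ℚ_[p]) := by
        push_cast
        ring
      rw [h1, hu]
      have hnorm1 : ‖((p:ℤ_[p])^j * u : ℤ_[p])‖ ≤ (p:ℝ)^(-(j:ℤ)) := by
        rw [norm_mul, PadicInt.norm_p_pow]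
        calc (p:ℝ)^(-(j:ℤ)) * ‖u‖ ≤ (p:ℝ)^(-(j:ℤ)) * 1 :=
              mul_le_mul_of_nonneg_left u.norm_le_one (by positivity)
          _ = _ := mul_one _
      calc ‖(((p:ℤ_[p])^j * u : ℤ_[p]) : ℚ_[p])‖ * (p:ℝ)^(-(-(j:ℤ))) ≤ (p:ℝ)^(-(j:ℤ)) * (p:ℝ)^((j:ℤ)) := by
            rw [neg_neg, ← PadicInt.norm_def]
            exact mul_le_mul_of_nonneg_right hnorm1 (by positivity)
        _ = 1 := by rw [← zpow_add₀ (ne_of_gt hp0)]; simp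
        _ ≤ (p:ℝ)^(0:ℕ) := by simp
    calc μ (B j) ≤ ∑' (c : Fin n → Fin (p^j)),
          μ ((fun x => -(fun i => ((c i : ℕ) : ℚ_[p]) * (p:ℚ_[p])^(-(j:ℤ))) + x) ⁻¹' (B 0)) :=
          le_trans (measure_mono hcover) (measure_iUnion_le _)
      _ = ∑' (c : Fin n → Fin (p^j)), μ (B 0) := by
          congr 1; funext c; exact measure_preimage_add μ _ _
      _ = (p:ℝ≥0∞) ^ (j*n) := by
          rw [tsum_fintype]
          simp only [hμB0, Finset.sum_const, Finset.card_univ, Fintype.card_fun, Fintype.card_fin,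
            nsmul_eq_mul, mul_one]
          push_cast
          rw [← pow_mul]
  -- integrability
  have hsre : (0:ℝ) < s.re := lt_of_le_of_lt (Nat.cast_nonneg n) hs
  set r : ℝ≥0∞ := ENNReal.ofReal ((p:ℝ) ^ ((n:ℝ) - s.re)) with hr
  have hrlt1 : r < 1 := by
    rw [hr]
    apply ENNReal.ofReal_lt_one.mpr
    exact Real.rpow_lt_one_of_one_lt_of_neg hp1 (by linarith)
  set D : ℕ → Set (Fin n → ℚ_[p]) := fun j => Nat.casesOn j (B 0) (fun k => B (k+1) \ B k) with hD
  have hDmeas : ∀ j, MeasurableSet (D j) := by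
    intro j
    cases j with
    | zero => exact hBmeas 0
    | succ k => exact (hBmeas (k+1)).diff (hBmeas k)
  have hDsub : ∀ j, D j ⊆ B j := by
    intro j
    cases j with
    | zero => exact subset_rfl
    | succ k => exact diff_subset
  have hDU : (⋃ j, D j) = univ := by
    rw [eq_univ_iff_forall]
    intro x
    have hex : ∃ j, x ∈ B j := mem_iUnion.mp (hBU ▸ mem_univ x)
    have hxk := Nat.find_spec hex
    refine mem_iUnion.mpr ⟨Nat.find hex, ?_⟩
    cases hfind : Nat.find hex with
    | zero => rw [hfind] at hxk; exact hxk
    | succ k =>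
      rw [hfind] at hxk
      exact ⟨hxk, Nat.find_min hex (by omega)⟩
  have hDbound : ∀ j, (∫⁻ x in D j, ‖F x‖₊ ∂μ) ≤ r ^ j := by
    intro j
    cases j with
    | zero =>
      have hb : ∀ x ∈ D 0, (‖F x‖₊ : ℝ≥0∞) ≤ 1 := by
        intro x hx
        have h1 : ‖F x‖ = 1 := by
          rw [hnormF, max_eq_left (by simpa [hB] using (show x ∈ B 0 from hx)), Real.one_rpow]
        rw [← ENNReal.ofReal_coe_nnreal, coe_nnnorm, h1]
        simp
      calc (∫⁻ x in D 0, ‖F x‖₊ ∂μ) ≤ ∫⁻ _ in D 0, 1 ∂μ := setLIntegral_mono' (hDmeas 0) hb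
        _ = 1 * μ (B 0) := setLIntegral_const _ _
        _ = r ^ 0 := by rw [hμB0, one_mul, pow_zero]
    | succ k =>
      have hb : ∀ x ∈ D (k+1), (‖F x‖₊ : ℝ≥0∞) ≤
          ENNReal.ofReal ((p:ℝ) ^ ((-(s.re)) * ((k:ℝ)+1))) := by
        intro x hx
        have h1 : ‖F x‖ = (p:ℝ) ^ ((-(s.re)) * ((k:ℝ)+1)) := by
          rw [hnormF, max_eq_right (by rw [hshell k x hx]; exact one_le_pow₀ hp1.le),
            hshell k x hx, ← Real.rpow_natCast (p:ℝ) (k+1), ← Real.rpow_mul hp0.le]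
          push_cast
          ring_nf
        rw [← ENNReal.ofReal_coe_nnreal, coe_nnnorm, h1]
      calc (∫⁻ x in D (k+1), ‖F x‖₊ ∂μ)
          ≤ ∫⁻ _ in D (k+1), ENNReal.ofReal ((p:ℝ) ^ ((-(s.re)) * ((k:ℝ)+1))) ∂μ :=
            setLIntegral_mono' (hDmeas (k+1)) hb
        _ = ENNReal.ofReal ((p:ℝ) ^ ((-(s.re)) * ((k:ℝ)+1))) * μ (D (k+1)) :=
            setLIntegral_const _ _
        _ ≤ ENNReal.ofReal ((p:ℝ) ^ ((-(s.re)) * ((k:ℝ)+1))) * (p:ℝ≥0∞)^((k+1)*n) :=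
            mul_le_mul_right (le_trans (measure_mono (hDsub (k+1))) (hμBle (k+1))) _
        _ = r ^ (k+1) := by
            rw [hr, show ((p:ℝ≥0∞)) = ENNReal.ofReal (p:ℝ) by simp,
              ← ENNReal.ofReal_pow hp0.le, ← ENNReal.ofReal_mul (by positivity),
              ← ENNReal.ofReal_pow (by positivity)]
            congr 1
            rw [← Real.rpow_natCast ((p:ℝ) ^ ((n:ℝ) - s.re)) (k+1), ← Real.rpow_mul hp0.le,
              ← Real.rpow_natCast (p:ℝ) ((k+1)*n), ← Real.rpow_add hp0]
            congr 1
            push_cast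
            ring
  have hInt : Integrable F μ := by
    refine ⟨hcontF.aestronglyMeasurable, ?_⟩
    show (∫⁻ x, (‖F x‖₊ : ℝ≥0∞) ∂μ) < ⊤
    have heq : (∫⁻ x, (‖F x‖₊ : ℝ≥0∞) ∂μ) = ∫⁻ x in ⋃ j, D j, (‖F x‖₊ : ℝ≥0∞) ∂μ := by
      rw [hDU, Measure.restrict_univ]
    rw [heq]
    calc (∫⁻ x in ⋃ j, D j, (‖F x‖₊ : ℝ≥0∞) ∂μ) ≤ ∑' j, ∫⁻ x in D j, ‖F x‖₊ ∂μ :=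
          lintegral_iUnion_le _ _
      _ ≤ ∑' j, r ^ j := ENNReal.tsum_le_tsum hDbound
      _ = (1 - r)⁻¹ := ENNReal.tsum_geometric r
      _ < ⊤ := ENNReal.inv_lt_top.mpr (tsub_pos_iff_lt.mpr hrlt1)
  -- integrability on balls
  have hIntOnF : ∀ j, IntegrableOn F (B j) μ := fun j =>
    hcontF.continuousOn.integrableOn_compact (hBcompact j)
  have hIntOnG : ∀ j, IntegrableOn G (B j) μ := fun j =>
    hcontG.continuousOn.integrableOn_compact (hBcompact j)
  -- the character integrates to 1 on the unit ball
  have hI0 : (∫ x in B 0, G x ∂μ) = 1 := by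
    have hone : EqOn G (fun _ => (1:ℂ)) (B 0) := by
      intro x hx
      rw [hG]
      apply hψtriv
      apply IsUltrametricDist.norm_sum_le_of_forall_le_of_nonneg zero_le_one
      intro i _
      rw [norm_mul]
      exact mul_le_one₀ (Padic.norm_int_le_one _) (norm_nonneg _)
        (le_trans (norm_le_pi_norm x i) (by simpa [hB] using hx))
    rw [setIntegral_congr_fun (hBmeas 0) hone]
    simp [Measure.real, hμB0]
  -- closure of balls under addition and negation
  have hadd : ∀ (j : ℕ) (u v : Fin n → ℚ_[p]), u ∈ B j → v ∈ B j → u + v ∈ B j := by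
    intro j u v hu hv
    refine (pi_norm_le_iff_of_nonneg (by positivity)).mpr fun i => ?_
    refine le_trans (Padic.nonarchimedean _ _) (max_le ?_ ?_)
    · exact le_trans (norm_le_pi_norm u i) hu
    · exact le_trans (norm_le_pi_norm v i) hv
  have hneg : ∀ (j : ℕ) (u : Fin n → ℚ_[p]), u ∈ B j → -u ∈ B j := by
    intro j u hu
    show ‖-u‖ ≤ (p:ℝ)^j
    rw [norm_neg]
    exact hu
  -- the character integrates to 0 on bigger balls
  have hIj : ∀ j : ℕ, (∫ x in B (j+1), G x ∂μ) = 0 := by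
    intro j
    set t : Fin n → ℚ_[p] := fun i => if i = i₀ then x₀ / (a i₀ : ℚ_[p]) else 0 with ht
    have hanorm : ‖((a i₀ : ℚ_[p]))‖ = 1 := by
      refine le_antisymm (Padic.norm_int_le_one _) (not_lt.mp fun h => hi₀ ?_)
      exact Padic.norm_intCast_lt_one_iff.mp h
    have hane : (a i₀ : ℚ_[p]) ≠ 0 := by
      intro h
      rw [h, norm_zero] at hanorm
      exact one_ne_zero hanorm.symm
    have htmem : t ∈ B (j+1) := by
      refine (pi_norm_le_iff_of_nonneg (by positivity)).mpr fun i => ?_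
      by_cases h : i = i₀
      · simp only [ht, h, if_pos rfl]
        rw [norm_div, hanorm, div_one]
        calc ‖x₀‖ ≤ (p:ℝ) := hx₀norm
          _ = (p:ℝ)^1 := (pow_one _).symm
          _ ≤ (p:ℝ)^(j+1) := pow_le_pow_right₀ hp1.le (by omega)
      · simp only [ht, if_neg h, norm_zero]
        positivity
    have hLt : (∑ i, (a i : ℚ_[p]) * t i) = x₀ := by
      rw [Finset.sum_eq_single i₀]
      · simp only [ht, if_pos rfl]
        rw [mul_comm, div_mul_cancel₀ _ hane]
      · intro b _ hb
        simp [ht, hb]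
      · intro h
        exact absurd (Finset.mem_univ i₀) h
    have hpre : ((fun x => t + x) ⁻¹' (B (j+1))) = B (j+1) := by
      ext x
      simp only [mem_preimage]
      constructor
      · intro hx
        have hxeq : x = -t + (t + x) := (neg_add_cancel_left t x).symm
        rw [hxeq]
        exact hadd _ _ _ (hneg _ _ htmem) hx
      · intro hx
        exact hadd _ _ _ htmem hx
    have hkey := (measurePreserving_add_left μ t).setIntegral_preimage_emb
      (measurableEmbedding_addLeft t) G (B (j+1))
    rw [hpre] at hkey
    have hGt : ∀ x, G (t + x) = ψ x₀ * G x := by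
      intro x
      rw [hG]
      simp only
      have hsum : (∑ i, (a i : ℚ_[p]) * (t + x) i) =
          (∑ i, (a i : ℚ_[p]) * t i) + ∑ i, (a i : ℚ_[p]) * x i := by
        rw [← Finset.sum_add_distrib]
        congr 1
        ext i
        rw [Pi.add_apply, mul_add]
      rw [hsum, hψadd, hLt]
    simp_rw [hGt] at hkey
    rw [integral_const_mul] at hkey
    have hsub : (ψ x₀ - 1) * (∫ x in B (j+1), G x ∂μ) = 0 := by
      rw [sub_mul, one_mul, hkey, sub_self]
    rcases mul_eq_zero.mp hsub with h | h
    · exact absurd (sub_eq_zero.mp h) hx₀ne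
    · exact h
  -- computing the truncated integrals
  set c : ℕ → ℂ := fun j => (((p:ℝ)^j : ℝ) : ℂ) ^ (-s) with hc
  have hJstep : ∀ j : ℕ, (∫ x in B (j+1), F x ∂μ) =
      (∫ x in B j, F x ∂μ) + c (j+1) * ((∫ x in B (j+1), G x ∂μ) - ∫ x in B j, G x ∂μ) := by
    intro j
    have hsplit : B (j+1) = B j ∪ (B (j+1) \ B j) :=
      (union_diff_cancel (hBmono (Nat.le_succ j))).symm
    have hdisj : Disjoint (B j) (B (j+1) \ B j) := disjoint_sdiff_right
    have hmeas' : MeasurableSet (B (j+1) \ B j) := (hBmeas _).diff (hBmeas _)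
    have hFd : EqOn F (fun x => c (j+1) * G x) (B (j+1) \ B j) := by
      intro x hx
      rw [hF, hG, hc]
      simp only
      rw [max_eq_right (by rw [hshell j x hx]; exact one_le_pow₀ hp1.le), hshell j x hx]
    have e1 : (∫ x in B (j+1), F x ∂μ) =
        (∫ x in B j, F x ∂μ) + ∫ x in B (j+1) \ B j, F x ∂μ := by
      conv_lhs => rw [hsplit]
      exact setIntegral_union hdisj hmeas' (hIntOnF j) ((hIntOnF (j+1)).mono_set diff_subset)
    have e2 : (∫ x in B (j+1), G x ∂μ) =
        (∫ x in B j, G x ∂μ) + ∫ x in B (j+1) \ B j, G x ∂μ := by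
      conv_lhs => rw [hsplit]
      exact setIntegral_union hdisj hmeas' (hIntOnG j) ((hIntOnG (j+1)).mono_set diff_subset)
    have e3 : (∫ x in B (j+1) \ B j, F x ∂μ) = c (j+1) * ∫ x in B (j+1) \ B j, G x ∂μ := by
      rw [setIntegral_congr_fun hmeas' hFd, integral_const_mul]
    rw [e1, e3, e2]
    ring
  have hJ0 : (∫ x in B 0, F x ∂μ) = 1 := by
    have hFG : EqOn F G (B 0) := by
      intro x hx
      rw [hF, hG]
      simp only
      rw [max_eq_left (by simpa [hB] using hx), Complex.ofReal_one, Complex.one_cpow, one_mul]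
    rw [setIntegral_congr_fun (hBmeas 0) hFG, hI0]
  have hJ : ∀ k : ℕ, (∫ x in B (k+1), F x ∂μ) = 1 - c 1 := by
    intro k
    induction k with
    | zero =>
      rw [hJstep 0, hJ0, hI0, hIj 0]
      ring
    | succ m ih =>
      rw [hJstep (m+1), ih, hIj (m+1), hIj m]
      ring
  -- pass to the limit
  have hlim : Tendsto (fun k : ℕ => ∫ x in B k, F x ∂μ) atTop (𝓝 (∫ x, F x ∂μ)) := by
    have h := tendsto_setIntegral_of_monotone hBmeas hBmono (by rw [hBU]; exact hInt.integrableOn)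
    rwa [hBU, Measure.restrict_univ] at h
  have hlim2 : Tendsto (fun k : ℕ => ∫ x in B k, F x ∂μ) atTop (𝓝 (1 - c 1)) := by
    apply Tendsto.congr' _ tendsto_const_nhds
    filter_upwards [eventually_ge_atTop 1] with k hk
    obtain ⟨m, rfl⟩ := Nat.exists_eq_add_of_le hk
    rw [show 1 + m = m + 1 by omega]
    exact (hJ m).symm
  have hfinal := tendsto_nhds_unique hlim hlim2
  rw [hfinal]
  congr 1
  rw [hc]
  norm_num
end

section
/- Let n ≥ 1 be an integer. For every ε > 0 there exist constants c > 0 and δ > 0 with the following property: for every a = (a_1,…,a_n) ∈ ℤ^n \ {0}, every s ∈ ℂ with Re(s) ≥ n + ε, and every family (ψ^{(p)})_{p ∈ S(a)} where, for each p ∈ S(a), ψ^{(p)} is a standard additive character of ℚ_p, one has ∏_{p ∈ S(a)} |∫_{ℚ_p^n} max(1,‖x‖_p)^{−s} ψ^{(p)}_a(x) dμ_p(x)| ≤ c·(1 + max_j |a_j|)^δ. -/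
open MeasureTheory ENNReal

instance (q : Nat.Primes) : Fact q.1.Prime := ⟨q.2⟩

lemma ball_measure_le (p : ℕ) [hp : Fact p.Prime] (n : ℕ)
    (μ : Measure (Fin n → ℚ_[p])) [μ.IsAddHaarMeasure]
    (h1 : μ {x | ∀ i, ‖x i‖ ≤ 1} = 1) (k : ℕ) :
    μ {x : Fin n → ℚ_[p] | ‖x‖ ≤ (p : ℝ) ^ k} ≤ ((p : ℝ≥0∞)) ^ (k * n) := by
  have hp1 : (1 : ℝ) ≤ (p : ℝ) := by exact_mod_cast hp.out.one_lt.le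
  set U : Set (Fin n → ℚ_[p]) := {x | ∀ i, ‖x i‖ ≤ 1} with hU
  set c : (Fin n → Fin (p ^ k)) → (Fin n → ℚ_[p]) :=
    fun r i => ((r i : ℕ) : ℚ_[p]) * (p : ℚ_[p]) ^ (-(k : ℤ)) with hc
  have hsub : {x : Fin n → ℚ_[p] | ‖x‖ ≤ (p : ℝ) ^ k} ⊆
      ⋃ r : Fin n → Fin (p ^ k), (fun y => -(c r) + y) ⁻¹' U := by
    intro x hx
    simp only [Set.mem_setOf_eq] at hx
    have hxi : ∀ i, ‖x i‖ ≤ (p : ℝ) ^ k := fun i =>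
      (norm_le_pi_norm x i).trans hx
    have hy : ∀ i, ‖(p : ℚ_[p]) ^ k * x i‖ ≤ 1 := by
      intro i
      rw [norm_mul, Padic.norm_p_pow]
      calc (p:ℝ) ^ (-(k:ℤ)) * ‖x i‖ ≤ (p:ℝ) ^ (-(k:ℤ)) * (p:ℝ)^k := by
            apply mul_le_mul_of_nonneg_left (hxi i)
            positivity
        _ = 1 := by
            rw [← zpow_natCast (p:ℝ) k, ← zpow_add₀ (by positivity : (p:ℝ) ≠ 0)]
            simp
    set z : Fin n → ℤ_[p] := fun i => ⟨(p : ℚ_[p]) ^ k * x i, hy i⟩ with hz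
    set r : Fin n → Fin (p ^ k) := fun i => ⟨(z i).appr k, PadicInt.appr_lt _ _⟩ with hr
    refine Set.mem_iUnion.2 ⟨r, ?_⟩
    intro i
    obtain ⟨w, hw⟩ : ∃ w : ℤ_[p], z i - ((z i).appr k : ℤ_[p]) = (p : ℤ_[p]) ^ k * w := by
      have := PadicInt.appr_spec k (z i)
      rw [Ideal.mem_span_singleton, dvd_iff_exists_eq_mul_left] at this
      obtain ⟨w, hw⟩ := this
      exact ⟨w, by rw [hw, mul_comm]⟩
    have hcoe : (p : ℚ_[p]) ^ k * x i - (((z i).appr k : ℕ) : ℚ_[p])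
        = (p : ℚ_[p]) ^ k * (w : ℚ_[p]) := by
      have := congrArg (fun t : ℤ_[p] => (t : ℚ_[p])) hw
      push_cast at this
      simpa [hz] using this
    have hpk : (p : ℚ_[p]) ^ k ≠ 0 := by
      have : (p : ℚ_[p]) ≠ 0 := by exact_mod_cast (Nat.cast_ne_zero (R := ℚ_[p])).2 hp.out.ne_zero
      exact pow_ne_zero _ this
    have key : (-(c r) + x) i = (w : ℚ_[p]) := by
      simp only [Pi.add_apply, Pi.neg_apply, hc, hr]
      rw [zpow_neg, zpow_natCast]
      field_simp
      linear_combination hcoe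
    show ‖(-(c r) + x) i‖ ≤ 1
    rw [key, ← PadicInt.norm_def]
    exact w.norm_le_one
  have hmeas : ∀ r : Fin n → Fin (p ^ k), μ ((fun y => -(c r) + y) ⁻¹' U) = 1 := by
    intro r
    rw [measure_preimage_add]
    exact h1
  calc μ {x : Fin n → ℚ_[p] | ‖x‖ ≤ (p : ℝ) ^ k}
      ≤ μ (⋃ r : Fin n → Fin (p ^ k), (fun y => -(c r) + y) ⁻¹' U) := measure_mono hsub
    _ ≤ ∑ r : Fin n → Fin (p ^ k), μ ((fun y => -(c r) + y) ⁻¹' U) :=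
        measure_iUnion_fintype_le _ _
    _ = ∑ _r : Fin n → Fin (p ^ k), 1 := by simp [hmeas]
    _ = (Fintype.card (Fin n → Fin (p ^ k)) : ℝ≥0∞) := by
        simp [Finset.sum_const]
    _ = ((p : ℝ≥0∞)) ^ (k * n) := by
        simp [Fintype.card_fun, ← pow_mul, mul_comm]

lemma pi_padic_norm_pow (p : ℕ) [hp : Fact p.Prime] (n : ℕ) (hn : 1 ≤ n)
    (x : Fin n → ℚ_[p]) (hx : 1 < ‖x‖) : ∃ m : ℕ, 1 ≤ m ∧ ‖x‖ = (p : ℝ) ^ m := by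
  have hne : (Finset.univ : Finset (Fin n)).Nonempty := by
    simpa [Finset.univ_nonempty_iff] using Fin.pos_iff_nonempty.1 hn
  obtain ⟨i, -, hi⟩ := Finset.exists_mem_eq_sup Finset.univ hne fun i => ‖x i‖₊
  have hnorm : ‖x‖ = ‖x i‖ := by
    rw [Pi.norm_def, hi]
    rfl
  rw [hnorm] at hx ⊢
  have hxi : x i ≠ 0 := by
    intro h0
    rw [h0, norm_zero] at hx
    linarith
  rw [Padic.norm_eq_zpow_neg_valuation hxi] at hx ⊢
  have hp1 : (1 : ℝ) < (p : ℝ) := by exact_mod_cast hp.out.one_lt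
  have hv : 0 < -(x i).valuation := by
    by_contra h
    push_neg at h
    have := zpow_le_one_of_nonpos₀ hp1.le h
    linarith
  refine ⟨(-(x i).valuation).toNat, by omega, ?_⟩
  rw [← zpow_natCast, Int.toNat_of_nonneg hv.le]

lemma lintegral_bound (p : ℕ) [hp : Fact p.Prime] (n : ℕ) (hn : 1 ≤ n)
    (μ : Measure (Fin n → ℚ_[p])) [μ.IsAddHaarMeasure]
    (h1 : μ {x | ∀ i, ‖x i‖ ≤ 1} = 1) (ε σ : ℝ) (hε : 0 < ε) (hσ : (n : ℝ) + ε ≤ σ) :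
    ∫⁻ x, ENNReal.ofReal ((max 1 ‖x‖) ^ (-σ)) ∂μ
      ≤ ENNReal.ofReal (1 + (2:ℝ)^(-ε) / (1 - (2:ℝ)^(-ε))) := by
  have hp1 : (1 : ℝ) < (p : ℝ) := by exact_mod_cast hp.out.one_lt
  have hp2 : (2 : ℝ) ≤ (p : ℝ) := by exact_mod_cast hp.out.two_le
  set B : ℕ → Set (Fin n → ℚ_[p]) := fun j => {x | ‖x‖ ≤ (p : ℝ) ^ j} with hB
  have hBmeas : ∀ j, MeasurableSet (B j) := fun j =>
    (isClosed_le continuous_norm continuous_const).measurableSet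
  set coeff : ℕ → ℝ≥0∞ := fun k => ENNReal.ofReal ((p : ℝ) ^ (-((k+1 : ℕ) : ℝ) * σ)) with hcoeff
  set F : (Fin n → ℚ_[p]) → ℝ≥0∞ := fun x =>
    (B 0).indicator (fun _ => (1:ℝ≥0∞)) x + ∑' k : ℕ, (B (k+1)).indicator (fun _ => coeff k) x with hF
  have hpt : ∀ x, ENNReal.ofReal ((max 1 ‖x‖) ^ (-σ)) ≤ F x := by
    intro x
    rcases le_or_gt ‖x‖ 1 with h | h
    · have : max 1 ‖x‖ = 1 := max_eq_left h
      rw [this, Real.one_rpow]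
      have hx0 : x ∈ B 0 := by simpa [hB] using h
      calc ENNReal.ofReal 1 = (B 0).indicator (fun _ => (1:ℝ≥0∞)) x := by
            rw [Set.indicator_of_mem hx0]; simp
        _ ≤ F x := le_self_add
    · obtain ⟨m, hm1, hm⟩ := pi_padic_norm_pow p n hn x h
      have : max 1 ‖x‖ = ‖x‖ := max_eq_right h.le
      rw [this, hm]
      have hxB : x ∈ B m := le_of_eq hm
      have hm' : m - 1 + 1 = m := by omega
      have hterm : (B (m-1+1)).indicator (fun _ => coeff (m-1)) x = coeff (m-1) := by
        rw [Set.indicator_of_mem]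
        rw [hm']
        exact hxB
      calc ENNReal.ofReal (((p:ℝ) ^ m) ^ (-σ)) = coeff (m-1) := by
            rw [hcoeff]
            congr 1
            rw [← Real.rpow_natCast (p:ℝ) m, ← Real.rpow_mul (by positivity)]
            congr 1
            have : (m - 1 + 1 : ℕ) = m := Nat.succ_pred_eq_of_pos hm1
            rw [this]
            ring
        _ = (B (m-1+1)).indicator (fun _ => coeff (m-1)) x := hterm.symm
        _ ≤ ∑' k : ℕ, (B (k+1)).indicator (fun _ => coeff k) x := ENNReal.le_tsum _
        _ ≤ F x := le_add_self
  have hμB0 : μ (B 0) = 1 := by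
    have : B 0 = {x : Fin n → ℚ_[p] | ∀ i, ‖x i‖ ≤ 1} := by
      ext x
      simp only [hB, pow_zero, Set.mem_setOf_eq]
      exact pi_norm_le_iff_of_nonneg zero_le_one
    rw [this, h1]
  have hFint : ∫⁻ x, F x ∂μ = μ (B 0) + ∑' k : ℕ, coeff k * μ (B (k+1)) := by
    simp only [hF]
    rw [lintegral_add_left ((measurable_const.indicator (hBmeas 0)))]
    rw [lintegral_tsum (fun k => (measurable_const.indicator (hBmeas (k+1))).aemeasurable)]
    congr 1
    · rw [lintegral_indicator_const (hBmeas 0), one_mul]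
    · exact tsum_congr fun k => lintegral_indicator_const (hBmeas (k+1)) _
  set r : ℝ := (2:ℝ) ^ (-ε) with hr
  have hr0 : 0 ≤ r := Real.rpow_nonneg (by norm_num) _
  have hr1 : r < 1 := by
    rw [hr]
    apply Real.rpow_lt_one_of_one_lt_of_neg (by norm_num) (by linarith)
  have hterm_le : ∀ k : ℕ, coeff k * μ (B (k+1)) ≤ ENNReal.ofReal (r ^ (k+1)) := by
    intro k
    calc coeff k * μ (B (k+1)) ≤ coeff k * ((p : ℝ≥0∞)) ^ ((k+1) * n) := by
          exact mul_le_mul_right (ball_measure_le p n μ h1 (k+1)) _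
      _ = ENNReal.ofReal ((p : ℝ) ^ (-((k+1:ℕ):ℝ) * σ) * (p:ℝ) ^ (((k+1)*n : ℕ))) := by
          rw [ENNReal.ofReal_mul (by positivity)]
          congr 1
          rw [← ENNReal.ofReal_natCast p, ← ENNReal.ofReal_pow (by positivity)]
      _ ≤ ENNReal.ofReal (r ^ (k+1)) := by
          apply ENNReal.ofReal_le_ofReal
          rw [← Real.rpow_natCast (p:ℝ) ((k+1)*n), ← Real.rpow_add (by linarith)]
          have hexp : (-((k+1:ℕ):ℝ) * σ + (((k+1)*n : ℕ) : ℝ)) = ((k+1:ℕ):ℝ) * ((n:ℝ) - σ) := by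
            push_cast
            ring
          rw [hexp]
          have hbase : (p:ℝ) ^ ((n:ℝ) - σ) ≤ r := by
            have ha : (p:ℝ) ^ ((n:ℝ) - σ) ≤ (p:ℝ) ^ (-ε) :=
              Real.rpow_le_rpow_of_exponent_le hp1.le (by linarith)
            have hb : (p:ℝ) ^ (-ε) ≤ (2:ℝ) ^ (-ε) := by
              rw [Real.rpow_neg (by norm_num), Real.rpow_neg (by positivity)]
              exact inv_anti₀ (Real.rpow_pos_of_pos (by norm_num) _)
                (Real.rpow_le_rpow (by norm_num) hp2 hε.le)
            exact ha.trans hb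
          calc (p:ℝ) ^ (((k+1:ℕ):ℝ) * ((n:ℝ) - σ))
              = ((p:ℝ) ^ ((n:ℝ) - σ)) ^ (k+1) := by
                rw [mul_comm, Real.rpow_mul (by positivity), Real.rpow_natCast]
            _ ≤ r ^ (k+1) := pow_le_pow_left₀ (Real.rpow_nonneg (by positivity) _) hbase _
  have hsummable : Summable (fun k : ℕ => r ^ (k+1)) := by
    apply Summable.congr ((summable_geometric_of_lt_one hr0 hr1).mul_left r)
    intro k
    ring
  have hsum : ∑' k : ℕ, r ^ (k+1) = r / (1-r) := by
    have h' : ∑' k : ℕ, r ^ (k+1) = r * ∑' k : ℕ, r ^ k := by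
      rw [← tsum_mul_left]
      congr 1
      ext k
      ring
    rw [h', tsum_geometric_of_lt_one hr0 hr1, div_eq_mul_inv]
  calc ∫⁻ x, ENNReal.ofReal ((max 1 ‖x‖) ^ (-σ)) ∂μ ≤ ∫⁻ x, F x ∂μ := lintegral_mono hpt
    _ = μ (B 0) + ∑' k : ℕ, coeff k * μ (B (k+1)) := hFint
    _ ≤ 1 + ∑' k : ℕ, ENNReal.ofReal (r ^ (k+1)) :=
        add_le_add hμB0.le (ENNReal.tsum_le_tsum hterm_le)
    _ = ENNReal.ofReal (1 + r / (1-r)) := by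
        rw [← ENNReal.ofReal_tsum_of_nonneg (fun k => pow_nonneg hr0 _) hsummable, hsum,
          ENNReal.ofReal_add (by norm_num) (div_nonneg hr0 (by linarith)), ENNReal.ofReal_one]

lemma prime_factor_bound (p : ℕ) [hp : Fact p.Prime] (n : ℕ) (hn : 1 ≤ n)
    (μ : Measure (Fin n → ℚ_[p])) [μ.IsAddHaarMeasure]
    (h1 : μ {x | ∀ i, ‖x i‖ ≤ 1} = 1) (ε : ℝ) (hε : 0 < ε)
    (s : ℂ) (hs : (n : ℝ) + ε ≤ s.re)
    (Φ : (Fin n → ℚ_[p]) → ℂ) (hΦ : ∀ x, ‖Φ x‖ = 1) :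
    ‖∫ x, ((max 1 ‖x‖ : ℝ) : ℂ) ^ (-s) * Φ x ∂μ‖
      ≤ 1 + (2:ℝ)^(-ε) / (1 - (2:ℝ)^(-ε)) := by
  set C : ℝ := 1 + (2:ℝ)^(-ε) / (1 - (2:ℝ)^(-ε)) with hC
  have hr0 : (0:ℝ) ≤ (2:ℝ)^(-ε) := Real.rpow_nonneg (by norm_num) _
  have hr1 : (2:ℝ)^(-ε) < 1 :=
    Real.rpow_lt_one_of_one_lt_of_neg (by norm_num) (by linarith)
  have hC0 : 0 ≤ C := by
    have : 0 ≤ (2:ℝ)^(-ε) / (1 - (2:ℝ)^(-ε)) := div_nonneg hr0 (by linarith)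
    rw [hC]
    linarith
  set g : (Fin n → ℚ_[p]) → ℝ := fun x => (max 1 ‖x‖) ^ (-s.re) with hg
  have hfg : ∀ x, ‖((max 1 ‖x‖ : ℝ) : ℂ) ^ (-s) * Φ x‖ = g x := by
    intro x
    rw [norm_mul]
    have h01 : (0:ℝ) < max 1 ‖x‖ := lt_of_lt_of_le one_pos (le_max_left _ _)
    have : ‖((max 1 ‖x‖ : ℝ) : ℂ) ^ (-s)‖ = (max 1 ‖x‖) ^ (-s).re := by
      rw [Complex.norm_cpow_eq_rpow_re_of_pos h01]
    rw [this, hΦ x, mul_one, hg]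
    simp [Complex.neg_re]
  refine le_trans (norm_integral_le_integral_norm _) ?_
  rw [integral_congr_ae (Filter.Eventually.of_forall hfg)]
  by_cases hInt : Integrable g μ
  · rw [integral_eq_lintegral_of_nonneg_ae
      (Filter.Eventually.of_forall fun x => Real.rpow_nonneg
        (le_of_lt (lt_of_lt_of_le one_pos (le_max_left _ _))) _)
      hInt.aestronglyMeasurable]
    refine ENNReal.toReal_le_of_le_ofReal hC0 ?_
    have h2 := lintegral_bound p n hn μ h1 ε s.re hε hs
    rw [hC]
    simpa [hg] using h2
  · rw [integral_undef hInt]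
    exact hC0


/-- For every `ε > 0` there are `c, δ > 0` such that for every
nonzero `a ∈ ℤ^n`, every `s` with `Re s ≥ n + ε`, and every family of standard
additive characters `ψ^(p)` (and normalized Haar measures `μ_p`) indexed by the
primes, the product over the primes `p ∈ S(a)` dividing all coordinates of `a` of
`|∫ max(1,‖x‖_p)^(-s) ψ^(p)(a·x) dμ_p|` is at most `c (1 + max_j |a_j|)^δ`. -/
theorem stmt2 (n : ℕ) (hn : 1 ≤ n) :
    ∀ ε > (0 : ℝ), ∃ c > (0 : ℝ), ∃ δ > (0 : ℝ),
      ∀ (a : Fin n → ℤ), a ≠ 0 →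
      ∀ (s : ℂ), (n : ℝ) + ε ≤ s.re →
      ∀ (μ : (q : Nat.Primes) → Measure (Fin n → ℚ_[q.1])),
        (∀ (q : Nat.Primes), (μ q).IsAddHaarMeasure) →
        (∀ (q : Nat.Primes), μ q {x | ∀ i, ‖x i‖ ≤ 1} = 1) →
      ∀ (ψ : (q : Nat.Primes) → ℚ_[q.1] → ℂ),
        (∀ (q : Nat.Primes), Continuous (ψ q)) →
        (∀ (q : Nat.Primes), ∀ x y : ℚ_[q.1], ψ q (x + y) = ψ q x * ψ q y) →
        (∀ (q : Nat.Primes), ∀ x : ℚ_[q.1], ‖ψ q x‖ = 1) →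
        (∀ (q : Nat.Primes), ∀ x : ℚ_[q.1], ‖x‖ ≤ 1 → ψ q x = 1) →
        (∀ (q : Nat.Primes), ∃ x : ℚ_[q.1], ‖x‖ ≤ (q.1 : ℝ) ∧ ψ q x ≠ 1) →
      (∏ᶠ q : {q : Nat.Primes // ∀ j, (q.1 : ℤ) ∣ a j},
          ‖(∫ x : Fin n → ℚ_[q.1.1],
            ((max 1 ‖x‖ : ℝ) : ℂ) ^ (-s) * ψ q.1 (∑ i, (a i : ℚ_[q.1.1]) * x i) ∂(μ q.1))‖)
        ≤ c * (1 + ((Finset.univ.sup fun j => (a j).natAbs : ℕ) : ℝ)) ^ δ := by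
  intro ε hε
  set C : ℝ := 1 + (2:ℝ)^(-ε) / (1 - (2:ℝ)^(-ε)) with hC
  have hr0 : (0:ℝ) ≤ (2:ℝ)^(-ε) := Real.rpow_nonneg (by norm_num) _
  have hr1 : (2:ℝ)^(-ε) < 1 :=
    Real.rpow_lt_one_of_one_lt_of_neg (by norm_num) (by linarith)
  have hC1 : 1 ≤ C := by
    have : 0 ≤ (2:ℝ)^(-ε) / (1 - (2:ℝ)^(-ε)) := div_nonneg hr0 (by linarith)
    rw [hC]; linarith
  refine ⟨1, one_pos, max 1 (Real.logb 2 C),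
    lt_of_lt_of_le one_pos (le_max_left _ _), ?_⟩
  intro a ha s hs μ hHaar hμ1 ψ hcont hmul habs htriv hnontriv
  obtain ⟨j₀, hj₀⟩ : ∃ j, a j ≠ 0 := by
    by_contra h
    push_neg at h
    exact ha (funext h)
  set M : ℕ := Finset.univ.sup fun j => (a j).natAbs with hM
  have hMj : (a j₀).natAbs ≤ M := by
    rw [hM]
    exact Finset.le_sup (f := fun j => (a j).natAbs) (Finset.mem_univ j₀)
  have haj0 : 1 ≤ (a j₀).natAbs := Int.natAbs_pos.2 hj₀
  have hM1 : 1 ≤ M := le_trans haj0 hMj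
  have hdvd : ∀ q : {q : Nat.Primes // ∀ j, (q.1 : ℤ) ∣ a j},
      q.1.1 ∣ (a j₀).natAbs :=
    fun q => Int.natCast_dvd_natCast.mp (Int.dvd_natAbs.mpr (q.2 j₀))
  have hinj : Function.Injective
      (fun q : {q : Nat.Primes // ∀ j, (q.1 : ℤ) ∣ a j} => q.1.1) := by
    intro q q' h
    exact Subtype.ext (Subtype.ext h)
  haveI hfin : Finite {q : Nat.Primes // ∀ j, (q.1 : ℤ) ∣ a j} := by
    refine Finite.of_injective (fun q => (⟨q.1.1, ?_⟩ : Fin (M+1))) ?_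
    · have := Nat.le_of_dvd haj0 (hdvd q)
      omega
    · intro q q' h
      exact hinj (by simpa using congrArg Fin.val h)
  haveI := Fintype.ofFinite {q : Nat.Primes // ∀ j, (q.1 : ℤ) ∣ a j}
  rw [finprod_eq_prod_of_fintype]
  set N := Fintype.card {q : Nat.Primes // ∀ j, (q.1 : ℤ) ∣ a j} with hN
  have hNbound : 2 ^ N ≤ M := by
    set sN : Finset ℕ :=
      Finset.univ.image (fun q : {q : Nat.Primes // ∀ j, (q.1 : ℤ) ∣ a j} => q.1.1)
      with hsN
    have hcard : sN.card = N := by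
      rw [hsN, Finset.card_image_of_injective _ hinj, Finset.card_univ]
    have hprimes : ∀ d ∈ sN, Prime d := by
      intro d hd
      obtain ⟨q, -, rfl⟩ := Finset.mem_image.mp hd
      exact q.1.2.prime
    have hddvd : ∀ d ∈ sN, d ∣ (a j₀).natAbs := by
      intro d hd
      obtain ⟨q, -, rfl⟩ := Finset.mem_image.mp hd
      exact hdvd q
    have hproddvd : ∏ d ∈ sN, d ∣ (a j₀).natAbs :=
      Finset.prod_primes_dvd _ hprimes hddvd
    have hle : ∏ d ∈ sN, d ≤ (a j₀).natAbs := Nat.le_of_dvd haj0 hproddvd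
    have h2N : 2 ^ N ≤ ∏ d ∈ sN, d := by
      rw [← hcard, ← Finset.prod_const]
      exact Finset.prod_le_prod' fun d hd => (Nat.prime_iff.mpr (hprimes d hd)).two_le
    exact le_trans (h2N.trans hle) hMj
  have hfactor : ∀ q : {q : Nat.Primes // ∀ j, (q.1 : ℤ) ∣ a j},
      ‖(∫ x : Fin n → ℚ_[q.1.1],
        ((max 1 ‖x‖ : ℝ) : ℂ) ^ (-s) * ψ q.1 (∑ i, (a i : ℚ_[q.1.1]) * x i) ∂(μ q.1))‖
      ≤ C := by
    intro q
    haveI := hHaar q.1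
    exact prime_factor_bound q.1.1 n hn (μ q.1) (hμ1 q.1) ε hε s hs _
      (fun x => habs q.1 _)
  have hprod : (∏ q : {q : Nat.Primes // ∀ j, (q.1 : ℤ) ∣ a j},
      ‖(∫ x : Fin n → ℚ_[q.1.1],
        ((max 1 ‖x‖ : ℝ) : ℂ) ^ (-s) * ψ q.1 (∑ i, (a i : ℚ_[q.1.1]) * x i) ∂(μ q.1))‖)
      ≤ C ^ N := by
    rw [hN, ← Finset.card_univ, ← Finset.prod_const]
    exact Finset.prod_le_prod (fun q _ => norm_nonneg _)
      (fun q _ => hfactor q)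
  refine le_trans hprod ?_
  rw [one_mul]
  have hlogb0 : 0 ≤ Real.logb 2 C := Real.logb_nonneg (by norm_num) hC1
  have hbase1 : (1:ℝ) ≤ 1 + (M:ℝ) := by
    have : (0:ℝ) ≤ (M:ℝ) := Nat.cast_nonneg _
    linarith
  have hCN : C ^ N ≤ (1 + (M:ℝ)) ^ Real.logb 2 C := by
    have hC2 : C = (2:ℝ) ^ Real.logb 2 C :=
      (Real.rpow_logb (by norm_num) (by norm_num) (by linarith)).symm
    calc C ^ N = ((2:ℝ) ^ Real.logb 2 C) ^ N := by rw [← hC2]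
      _ = ((2:ℝ) ^ (N:ℝ)) ^ Real.logb 2 C := by
          rw [← Real.rpow_natCast ((2:ℝ) ^ Real.logb 2 C) N,
            ← Real.rpow_mul (by norm_num), mul_comm,
            Real.rpow_mul (by norm_num), Real.rpow_natCast]
      _ ≤ (1 + (M:ℝ)) ^ Real.logb 2 C := by
          apply Real.rpow_le_rpow (by positivity) ?_ hlogb0
          rw [Real.rpow_natCast]
          have h1 : ((2:ℝ)) ^ N = ((2 ^ N : ℕ) : ℝ) := by push_cast; ring
          have h2 : ((2 ^ N : ℕ) : ℝ) ≤ (M:ℝ) := Nat.cast_le.2 hNbound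
          rw [h1]
          linarith
  refine le_trans hCN ?_
  exact Real.rpow_le_rpow_of_exponent_le hbase1 (le_max_right _ _)
end

section
/- Let n ≥ 1 be an integer. For every s ∈ ℂ with Re(s) > n, the function x ↦ (1+‖x‖²)^{−Re(s)/2} is Lebesgue-integrable on ℝ^n and ∫_{ℝ^n} (1 + x_1² + ⋯ + x_n²)^{−s/2} dx = π^{n/2} · Γ((s−n)/2)/Γ(s/2). -/
open MeasureTheory

open Set Complex in
/-- cpow of a positive real raised to a natural power. -/
lemma aux_cpow_ofReal_pow {x : ℝ} (hx : 0 < x) (k : ℕ) (w : ℂ) :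
    ((x ^ k : ℝ) : ℂ) ^ w = (x : ℂ) ^ ((k : ℂ) * w) := by
  have hx' : (x : ℂ) ≠ 0 := by exact_mod_cast hx.ne'
  have hxk : ((x ^ k : ℝ) : ℂ) ≠ 0 := by exact_mod_cast (pow_pos hx k).ne'
  rw [Complex.cpow_def_of_ne_zero hxk, Complex.cpow_def_of_ne_zero hx']
  congr 1
  rw [← Complex.ofReal_log (pow_pos hx k).le, ← Complex.ofReal_log hx.le, Real.log_pow]
  push_cast
  ring

open Set Complex in
/-- The Beta integral in its `Ioi` form. -/
lemma aux_betaIoi {u v : ℂ} (hu : 0 < u.re) (hv : 0 < v.re) :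
    ∫ t in Ioi (0 : ℝ), (t : ℂ) ^ (u - 1) * ((1 + t : ℝ) : ℂ) ^ (-(u + v)) =
      Complex.Gamma u * Complex.Gamma v / Complex.Gamma (u + v) := by
  have himg : (fun x : ℝ => x / (1 - x)) '' Ioo 0 1 = Ioi (0 : ℝ) := by
    ext t
    constructor
    · rintro ⟨x, ⟨hx0, hx1⟩, rfl⟩
      exact div_pos hx0 (by linarith)
    · intro ht
      refine ⟨t / (1 + t), ⟨div_pos ht (by linarith [ht.out]), ?_⟩, ?_⟩
      · rw [div_lt_one (by linarith [ht.out])]; linarith [ht.out]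
      · have h1 : (1 : ℝ) + t ≠ 0 := by have := ht.out; positivity
        field_simp; ring
  have hderiv : ∀ x ∈ Ioo (0:ℝ) 1, HasDerivWithinAt (fun x : ℝ => x / (1 - x))
      (((1 - x) ^ 2)⁻¹) (Ioo 0 1) x := by
    intro x hx
    have h1 : (1 : ℝ) - x ≠ 0 := by have := hx.2; nlinarith [hx.1, hx.2]
    have := (hasDerivAt_id x).div ((hasDerivAt_id x).const_sub 1) h1
    refine this.hasDerivWithinAt.congr_deriv ?_
    simp only [id]; field_simp; ring
  have hinj : InjOn (fun x : ℝ => x / (1 - x)) (Ioo 0 1) := by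
    intro a ha b hb h
    have h1 : (1 : ℝ) - a ≠ 0 := by have := ha.2; intro hh; linarith
    have h2 : (1 : ℝ) - b ≠ 0 := by have := hb.2; intro hh; linarith
    field_simp at h
    linarith
  have key := integral_image_eq_integral_abs_deriv_smul measurableSet_Ioo hderiv hinj
    (fun t : ℝ => (t : ℂ) ^ (u - 1) * ((1 + t : ℝ) : ℂ) ^ (-(u + v)))
  rw [himg] at key
  rw [key]
  have hIoo : ∀ x ∈ Ioo (0:ℝ) 1,
      |((1 - x) ^ 2)⁻¹| • ((((x / (1 - x) : ℝ)) : ℂ) ^ (u - 1) *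
        ((1 + x / (1 - x) : ℝ) : ℂ) ^ (-(u + v))) =
      (x : ℂ) ^ (u - 1) * ((1 - x : ℝ) : ℂ) ^ (v - 1) := by
    intro x hx
    have hx0 := hx.1
    have hx1 : (0:ℝ) < 1 - x := by linarith [hx.2]
    have h1x : ((1 - x : ℝ) : ℂ) ≠ 0 := by exact_mod_cast hx1.ne'
    have harg : ((1 - x : ℝ) : ℂ).arg ≠ Real.pi := by
      rw [Complex.arg_ofReal_of_nonneg hx1.le]; exact Real.pi_ne_zero.symm
    have h1 : (1:ℝ) + x / (1 - x) = (1 - x)⁻¹ := by field_simp; ring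
    have h2 : (x / (1 - x) : ℝ) = x * (1 - x)⁻¹ := div_eq_mul_inv _ _
    rw [h1, h2]
    rw [show ((x * (1 - x)⁻¹ : ℝ) : ℂ) ^ (u - 1)
        = (x : ℂ) ^ (u - 1) * (((1 - x)⁻¹ : ℝ) : ℂ) ^ (u - 1) by
      rw [Complex.ofReal_mul]
      exact Complex.mul_cpow_ofReal_nonneg hx0.le (inv_nonneg.2 hx1.le) _]
    have hinv : ∀ w : ℂ, (((1 - x)⁻¹ : ℝ) : ℂ) ^ w = ((1 - x : ℝ) : ℂ) ^ (-w) := by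
      intro w
      rw [Complex.ofReal_inv, Complex.inv_cpow _ _ harg, ← Complex.cpow_neg]
    rw [hinv, hinv]
    have habs : |((1 - x) ^ 2)⁻¹| = ((1 - x) ^ 2)⁻¹ := abs_of_pos (by positivity)
    rw [habs, Complex.real_smul]
    rw [show ((((1 - x) ^ 2)⁻¹ : ℝ) : ℂ) = ((1 - x : ℝ) : ℂ) ^ (-2 : ℂ) by
      rw [Complex.ofReal_inv, Complex.ofReal_pow, ← Complex.cpow_natCast,
        ← Complex.cpow_neg]
      norm_num]
    have hcomb : ∀ a b : ℂ, ((1 - x : ℝ):ℂ) ^ a * ((1 - x : ℝ):ℂ) ^ b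
        = ((1 - x : ℝ):ℂ) ^ (a + b) := fun a b => (Complex.cpow_add _ _ h1x).symm
    rw [mul_comm ((x:ℂ) ^ (u-1)) _, ← mul_assoc, ← mul_assoc, hcomb,
      show (v - 1 : ℂ) = (-2 + -(u-1)) + (-(-(u+v))) by ring, ← hcomb]
    ring_nf
    rw [hcomb, mul_right_comm, hcomb]
    ring_nf
  rw [setIntegral_congr_fun measurableSet_Ioo hIoo]
  have hbeta : Complex.betaIntegral u v
      = ∫ x in Ioo (0:ℝ) 1, (x:ℂ) ^ (u - 1) * ((1 - x : ℝ) : ℂ) ^ (v - 1) := by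
    rw [Complex.betaIntegral, intervalIntegral.integral_of_le zero_le_one,
      ← integral_Ioc_eq_integral_Ioo]
    norm_num
  have hre : 0 < (u + v).re := by rw [Complex.add_re]; linarith
  have hne : Complex.Gamma (u + v) ≠ 0 := by
    apply Complex.Gamma_ne_zero
    intro m h
    rw [h] at hre
    simp only [Complex.neg_re, Complex.natCast_re] at hre
    have : (0:ℝ) ≤ m := m.cast_nonneg
    linarith
  rw [← hbeta, Complex.Gamma_mul_Gamma_eq_betaIntegral hu hv,
    mul_div_cancel_left₀ _ hne]


open Set Complex in
/-- The radial integral. -/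
lemma aux_radial (n : ℕ) (hn : 1 ≤ n) (s : ℂ) (hs : (n : ℝ) < s.re) :
    ∫ y in Ioi (0:ℝ), y ^ (n - 1) • (((1 + y ^ 2 : ℝ) : ℂ) ^ (-s / 2)) =
      (2 : ℂ)⁻¹ * (Complex.Gamma ((n:ℂ)/2) * Complex.Gamma ((s - n)/2) / Complex.Gamma (s/2)) := by
  have hnpos : (0:ℝ) < n := by exact_mod_cast Nat.lt_of_lt_of_le Nat.zero_lt_one hn
  have hu : 0 < ((n:ℂ)/2).re := by
    rw [show ((n:ℂ)/2) = (((n:ℝ)/2 : ℝ) : ℂ) by push_cast; ring, Complex.ofReal_re]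
    positivity
  have hv : 0 < (((s - n))/2).re := by
    rw [show (2:ℂ) = ((2:ℝ):ℂ) by norm_num, Complex.div_ofReal_re, Complex.sub_re,
      Complex.natCast_re]
    have : (0:ℝ) < s.re - n := by linarith
    positivity
  have hbeta := aux_betaIoi hu hv
  have huv : (n:ℂ)/2 + (s - n)/2 = s/2 := by ring
  have himg : (fun y : ℝ => y ^ 2) '' Ioi 0 = Ioi (0:ℝ) := by
    ext t
    constructor
    · rintro ⟨x, hx, rfl⟩; exact pow_pos (mem_Ioi.mp hx) 2
    · intro ht; exact ⟨Real.sqrt t, Real.sqrt_pos.2 ht, Real.sq_sqrt ht.out.le⟩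
  have hderiv : ∀ y ∈ Ioi (0:ℝ), HasDerivWithinAt (fun y : ℝ => y ^ 2) (2 * y) (Ioi 0) y := by
    intro y _
    simpa using (hasDerivAt_pow 2 y).hasDerivWithinAt
  have hinj : InjOn (fun y : ℝ => y ^ 2) (Ioi 0) := by
    intro a ha b hb h
    simp only [mem_Ioi] at ha hb
    simp only at h
    nlinarith
  have key := integral_image_eq_integral_abs_deriv_smul measurableSet_Ioi hderiv hinj
    (fun t : ℝ => (t : ℂ) ^ ((n:ℂ)/2 - 1) * ((1 + t : ℝ) : ℂ) ^ (-((n:ℂ)/2 + (s - n)/2)))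
  rw [himg, hbeta] at key
  have hcong : ∀ y ∈ Ioi (0:ℝ),
      |2 * y| • (((y ^ 2 : ℝ) : ℂ) ^ ((n:ℂ)/2 - 1) *
        ((1 + y ^ 2 : ℝ) : ℂ) ^ (-((n:ℂ)/2 + (s - n)/2))) =
      (2 : ℂ) * (y ^ (n - 1) • (((1 + y ^ 2 : ℝ) : ℂ) ^ (-s / 2))) := by
    intro y hy
    have hy0 : (0:ℝ) < y := hy
    have hyC : (y : ℂ) ≠ 0 := by exact_mod_cast hy0.ne'
    rw [huv, abs_of_pos (by positivity), aux_cpow_ofReal_pow hy0 2,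
      Complex.real_smul, Complex.real_smul, Complex.ofReal_mul, Complex.ofReal_pow,
      Complex.ofReal_ofNat, neg_div]
    push_cast
    have e1 : (y:ℂ) * (y:ℂ) ^ ((2:ℂ) * ((n:ℂ)/2 - 1)) = (y:ℂ) ^ (n - 1 : ℕ) := by
      calc (y:ℂ) * (y:ℂ) ^ ((2:ℂ) * ((n:ℂ)/2 - 1))
          = (y:ℂ) ^ ((1:ℂ) + (2:ℂ) * ((n:ℂ)/2 - 1)) := by
            rw [Complex.cpow_add _ _ hyC, Complex.cpow_one]
        _ = (y:ℂ) ^ (((n - 1 : ℕ) : ℂ)) := by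
            congr 1; push_cast [Nat.cast_sub hn]; ring
        _ = (y:ℂ) ^ (n - 1 : ℕ) := Complex.cpow_natCast _ _
    calc (2:ℂ) * (y:ℂ) * ((y:ℂ) ^ ((2:ℂ) * ((n:ℂ)/2 - 1)) *
          (1 + (y:ℂ) ^ 2) ^ (-(s / 2)))
        = (2:ℂ) * (((y:ℂ) * (y:ℂ) ^ ((2:ℂ) * ((n:ℂ)/2 - 1))) *
          (1 + (y:ℂ) ^ 2) ^ (-(s / 2))) := by ring
      _ = (2:ℂ) * ((y:ℂ) ^ (n - 1 : ℕ) * (1 + (y:ℂ) ^ 2) ^ (-(s / 2))) := by rw [e1]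
  rw [setIntegral_congr_fun measurableSet_Ioi hcong] at key
  rw [integral_const_mul] at key
  rw [huv] at key
  rw [key]
  ring


/-- For `n ≥ 1` and `Re s > n`, the function
`x ↦ (1+‖x‖²)^(-Re s/2)` is Lebesgue integrable on `ℝ^n`, and
`∫_{ℝ^n} (1+x₁²+⋯+xₙ²)^(-s/2) dx = π^(n/2) Γ((s-n)/2)/Γ(s/2)`. -/
theorem stmt3 (n : ℕ) (hn : 1 ≤ n) (s : ℂ) (hs : (n : ℝ) < s.re) :
    Integrable (fun x : Fin n → ℝ => (1 + ∑ i, (x i) ^ 2) ^ (-(s.re) / 2)) volume ∧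
    ∫ x : Fin n → ℝ, ((1 + ∑ i, (x i) ^ 2 : ℝ) : ℂ) ^ (-s / 2) =
      (Real.pi : ℂ) ^ ((n : ℂ) / 2) * Complex.Gamma ((s - n) / 2) / Complex.Gamma (s / 2) := by
  open Set Complex in
  constructor
  · -- integrability
    have h : Integrable (fun y : EuclideanSpace ℝ (Fin n) => (1 + ‖y‖ ^ 2) ^ (-(s.re) / 2))
        volume := by
      apply integrable_rpow_neg_one_add_norm_sq
      rwa [finrank_euclideanSpace_fin]
    have hmp := EuclideanSpace.volume_preserving_symm_measurableEquiv_toLp (Fin n)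
    rw [← hmp.map_eq, MeasureTheory.integrable_map_equiv (MeasurableEquiv.toLp 2 (Fin n → ℝ)).symm]
    have hsum : ∀ y : EuclideanSpace ℝ (Fin n),
        (1 + ∑ i, ((MeasurableEquiv.toLp 2 (Fin n → ℝ)).symm y i) ^ 2 : ℝ) = 1 + ‖y‖ ^ 2 := by
      intro y
      congr 1
      rw [EuclideanSpace.norm_eq, Real.sq_sqrt (by positivity)]
      congr 1
      ext i
      simp [MeasurableEquiv.coe_toLp_symm, Real.norm_eq_abs, sq_abs]
    convert h using 1
    · rfl
    ext y
    simp only [Function.comp_apply]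
    rw [hsum y]
  · -- the value of the integral
    have hrad := aux_radial n hn s hs
    haveI : Nonempty (Fin n) := Fin.pos_iff_nonempty.mp hn
    have hmp := EuclideanSpace.volume_preserving_symm_measurableEquiv_toLp (Fin n)
    have hsum : ∀ y : EuclideanSpace ℝ (Fin n),
        (1 + ∑ i, ((MeasurableEquiv.toLp 2 (Fin n → ℝ)).symm y i) ^ 2 : ℝ) = 1 + ‖y‖ ^ 2 := by
      intro y
      congr 1
      rw [EuclideanSpace.norm_eq]
      rw [Real.sq_sqrt (by positivity)]
      congr 1
      ext i
      simp [MeasurableEquiv.coe_toLp_symm, Real.norm_eq_abs, sq_abs]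
    rw [← hmp.integral_comp (MeasurableEquiv.toLp 2 (Fin n → ℝ)).symm.measurableEmbedding
      (fun x : Fin n → ℝ => ((1 + ∑ i, (x i) ^ 2 : ℝ) : ℂ) ^ (-s / 2))]
    have : ∀ y : EuclideanSpace ℝ (Fin n),
        ((1 + ∑ i, ((MeasurableEquiv.toLp 2 (Fin n → ℝ)).symm y i) ^ 2 : ℝ) : ℂ) ^ (-s / 2)
          = (fun r : ℝ => ((1 + r ^ 2 : ℝ) : ℂ) ^ (-s / 2)) ‖y‖ := by
      intro y; rw [hsum y]
    rw [integral_congr_ae (Filter.Eventually.of_forall this)]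
    rw [integral_fun_norm_addHaar volume (fun r : ℝ => ((1 + r ^ 2 : ℝ) : ℂ) ^ (-s / 2))]
    rw [finrank_euclideanSpace_fin, hrad]
    rw [measureReal_def, EuclideanSpace.volume_ball]
    have hpos : (0:ℝ) < Real.sqrt Real.pi ^ n / Real.Gamma ((n:ℝ) / 2 + 1) := by
      have := Real.Gamma_pos_of_pos (s := (n : ℝ) / 2 + 1) (by positivity)
      positivity
    simp only [Fintype.card_fin, ENNReal.ofReal_one, one_pow, one_mul]
    rw [ENNReal.toReal_ofReal hpos.le]
    -- now the algebra
    have hn0 : ((n:ℂ)/2) ≠ 0 := by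
      simp only [ne_eq, div_eq_zero_iff, OfNat.ofNat_ne_zero, or_false, Nat.cast_eq_zero]
      omega
    have hΓne : Complex.Gamma ((n:ℂ)/2) ≠ 0 := by
      apply Complex.Gamma_ne_zero
      intro m h
      have hre : ((n:ℂ)/2).re = (n:ℝ)/2 := by
        rw [show ((n:ℂ)/2) = (((n:ℝ)/2 : ℝ) : ℂ) by push_cast; ring, Complex.ofReal_re]
      rw [h] at hre
      simp only [Complex.neg_re, Complex.natCast_re] at hre
      have h1 : (0:ℝ) ≤ m := m.cast_nonneg
      have h2 : (1:ℝ) ≤ n := by exact_mod_cast hn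
      linarith
    have hΓsne : Complex.Gamma (s/2) ≠ 0 := by
      apply Complex.Gamma_ne_zero
      intro m h
      have hre : (s/2).re = s.re/2 := by
        rw [show (2:ℂ) = ((2:ℝ):ℂ) by norm_num, Complex.div_ofReal_re]
      rw [h] at hre
      simp only [Complex.neg_re, Complex.natCast_re] at hre
      have h1 : (0:ℝ) ≤ m := m.cast_nonneg
      have h2 : (1:ℝ) ≤ n := by exact_mod_cast hn
      linarith
    have hsqrt : ((Real.sqrt Real.pi ^ n : ℝ) : ℂ) = (Real.pi : ℂ) ^ ((n:ℂ)/2) := by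
      have h1 : (Real.sqrt Real.pi) ^ n = Real.pi ^ ((n:ℝ)/2) := by
        rw [Real.sqrt_eq_rpow, ← Real.rpow_natCast (Real.pi ^ ((1:ℝ)/2)) n,
          ← Real.rpow_mul Real.pi_pos.le]
        rw [show (1:ℝ)/2 * (n:ℝ) = (n:ℝ)/2 by ring]
      rw [h1, Complex.ofReal_cpow Real.pi_pos.le,
        show ((((n:ℝ)/2 : ℝ)):ℂ) = (n:ℂ)/2 by push_cast; ring]
    have hGam : ((Real.Gamma ((n:ℝ)/2 + 1) : ℝ) : ℂ) = ((n:ℂ)/2) * Complex.Gamma ((n:ℂ)/2) := by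
      rw [← Complex.Gamma_ofReal]
      rw [show ((((n:ℝ)/2 + 1 : ℝ)) : ℂ) = (n:ℂ)/2 + 1 by push_cast; ring]
      exact Complex.Gamma_add_one _ hn0
    rw [nsmul_eq_mul, Complex.real_smul, Complex.ofReal_div, hsqrt, hGam]
    have hnne : ((n:ℂ)) ≠ 0 := Nat.cast_ne_zero.mpr (by omega)
    field_simp
end

section
/- Let n ≥ 1 be an integer. For every δ > 0 and every compact subset K of the half-plane {s ∈ ℂ : Re(s) > n} there exists a constant c(δ,K) > 0 such that for all a ∈ ℤ^n and all s ∈ K, |∫_{ℝ^n} (1 + x_1² + ⋯ + x_n²)^{−s/2} e^{−2πi(a_1x_1+⋯+a_nx_n)} dx| ≤ c(δ,K) · (1 + |Im(s)|)^δ · (1 + ‖a‖)^{−δ}, where ‖a‖ = (a_1²+⋯+a_n²)^{1/2}. -/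
open MeasureTheory Complex FourierTransform Finset
open scoped Real RealInnerProductSpace

set_option maxHeartbeats 1000000
set_option synthInstance.maxHeartbeats 200000


noncomputable section Stmt4Aux

/-- The function `x ↦ (1+‖x‖²)^(-s/2)` on Euclidean space, written via `exp` and `log`. -/
def phiF (n : ℕ) (s : ℂ) (x : EuclideanSpace ℝ (Fin n)) : ℂ :=
  Complex.exp ((-s / 2) * (Real.log (1 + ‖x‖ ^ 2) : ℝ))

lemma one_add_norm_sq_pos {n : ℕ} (x : EuclideanSpace ℝ (Fin n)) : (0:ℝ) < 1 + ‖x‖ ^ 2 := by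
  positivity

lemma phiF_norm {n : ℕ} (s : ℂ) (x : EuclideanSpace ℝ (Fin n)) :
    ‖phiF n s x‖ = (1 + ‖x‖ ^ 2) ^ (-(s.re) / 2) := by
  have ht := one_add_norm_sq_pos x
  rw [phiF, Complex.norm_exp, Real.rpow_def_of_pos ht]
  congr 1
  simp [Complex.mul_re, Complex.ofReal_re, Complex.ofReal_im]
  ring

lemma phiF_shift {n : ℕ} (s : ℂ) (x : EuclideanSpace ℝ (Fin n)) :
    phiF n (s + 2) x = phiF n s x * ((1 + ‖x‖ ^ 2 : ℝ) : ℂ)⁻¹ := by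
  have ht := one_add_norm_sq_pos x
  have h1 : ((1 + ‖x‖ ^ 2 : ℝ) : ℂ)⁻¹ = Complex.exp (-(Real.log (1 + ‖x‖ ^ 2) : ℝ)) := by
    rw [← Complex.ofReal_neg, ← Complex.ofReal_exp, Real.exp_neg, Real.exp_log ht,
      Complex.ofReal_inv]
  rw [phiF, phiF, h1, ← Complex.exp_add]
  congr 1
  ring

lemma contDiff_phiF {n : ℕ} (s : ℂ) {N : ℕ∞} : ContDiff ℝ N (phiF n s) := by
  apply Complex.contDiff_exp.comp
  apply ContDiff.mul contDiff_const
  apply Complex.ofRealCLM.contDiff.comp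
  rw [contDiff_iff_contDiffAt]
  intro x
  exact (Real.contDiffAt_log.mpr (one_add_norm_sq_pos x).ne').comp x
    ((contDiff_const.add (contDiff_norm_sq ℝ)).contDiffAt)

end Stmt4Aux


noncomputable section B

variable {n : ℕ}

/-- `x ↦ (v ↦ (⟪x,v⟫ : ℂ))` as a continuous linear map. -/
def Bmap (n : ℕ) : EuclideanSpace ℝ (Fin n) →L[ℝ] (EuclideanSpace ℝ (Fin n) →L[ℝ] ℂ) :=
  (ContinuousLinearMap.compL ℝ (EuclideanSpace ℝ (Fin n)) ℝ ℂ Complex.ofRealCLM).comp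
    (innerSL ℝ)

lemma Bmap_apply (x v : EuclideanSpace ℝ (Fin n)) : Bmap n x v = (⟪x, v⟫ : ℝ) := rfl

lemma Bmap_norm_le (x : EuclideanSpace ℝ (Fin n)) : ‖Bmap n x‖ ≤ ‖x‖ := by
  apply ContinuousLinearMap.opNorm_le_bound _ (norm_nonneg x)
  intro v
  rw [Bmap_apply, Complex.norm_real, Real.norm_eq_abs]
  exact abs_real_inner_le_norm x v

lemma Bmap_norm : ‖Bmap n‖ ≤ 1 := by
  apply ContinuousLinearMap.opNorm_le_bound _ zero_le_one
  intro x
  rw [one_mul]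
  exact Bmap_norm_le x

/-- Norm bounds for iterated derivatives of a continuous linear map. -/
lemma clm_iteratedFDeriv_norm {E F : Type*} [NormedAddCommGroup E] [NormedSpace ℝ E]
    [NormedAddCommGroup F] [NormedSpace ℝ F] (M : E →L[ℝ] F) (j : ℕ) (x : E) :
    ‖iteratedFDeriv ℝ j (⇑M) x‖ ≤
      if j = 0 then ‖M‖ * ‖x‖ else if j = 1 then ‖M‖ else 0 := by
  match j with
  | 0 => simpa [norm_iteratedFDeriv_zero] using M.le_opNorm x
  | 1 =>
    simp only [if_neg one_ne_zero, if_pos rfl]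
    rw [← norm_iteratedFDeriv_fderiv (n := 0)]
    simp [norm_iteratedFDeriv_zero, M.fderiv]
  | (j+2) =>
    simp only [Nat.add_eq, if_neg (by omega : j + 2 ≠ 0), if_neg (by omega : j + 2 ≠ 1)]
    rw [← norm_iteratedFDeriv_fderiv (n := j+1)]
    have : fderiv ℝ (⇑M) = fun _ : E => M := funext fun y => M.fderiv
    rw [this, iteratedFDeriv_const_of_ne (by omega)]
    simp

/-- The derivative formula for `phiF`. -/
lemma fderiv_phiF (s : ℂ) :
    fderiv ℝ (phiF n s) = fun x => phiF n (s + 2) x • (((-s) • Bmap n) x) := by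
  funext x
  have ht := one_add_norm_sq_pos x
  have h1 : HasFDerivAt (fun y : EuclideanSpace ℝ (Fin n) => ‖y‖ ^ 2)
      (2 • (innerSL ℝ x)) x := by
    simpa using (hasFDerivAt_id x).norm_sq
  have h2 : HasFDerivAt (fun y : EuclideanSpace ℝ (Fin n) => 1 + ‖y‖ ^ 2)
      (2 • (innerSL ℝ x)) x := by
    exact ((hasFDerivAt_const (1:ℝ) x).add h1).congr_fderiv (zero_add _)
  have h3 : HasFDerivAt (fun y : EuclideanSpace ℝ (Fin n) => Real.log (1 + ‖y‖ ^ 2))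
      ((1 + ‖x‖ ^ 2)⁻¹ • (2 • (innerSL ℝ x))) x := h2.log ht.ne'
  have h4 : HasFDerivAt
      (fun y : EuclideanSpace ℝ (Fin n) => ((Real.log (1 + ‖y‖ ^ 2) : ℝ) : ℂ))
      (Complex.ofRealCLM.comp ((1 + ‖x‖ ^ 2)⁻¹ • (2 • (innerSL ℝ x)))) x :=
    Complex.ofRealCLM.hasFDerivAt.comp x h3
  have h5 : HasFDerivAt
      (fun y : EuclideanSpace ℝ (Fin n) => (-s/2) * ((Real.log (1 + ‖y‖ ^ 2) : ℝ) : ℂ))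
      ((-s/2) • (Complex.ofRealCLM.comp ((1 + ‖x‖ ^ 2)⁻¹ • (2 • (innerSL ℝ x))))) x :=
    h4.const_mul _
  have h6 := h5.cexp
  have h7 : HasFDerivAt (phiF n s)
      (Complex.exp ((-s/2) * ((Real.log (1 + ‖x‖ ^ 2) : ℝ) : ℂ)) •
        ((-s/2) • (Complex.ofRealCLM.comp ((1 + ‖x‖ ^ 2)⁻¹ • (2 • (innerSL ℝ x)))))) x := h6
  rw [h7.fderiv]
  ext v
  have hshift := phiF_shift s x
  simp only [ContinuousLinearMap.smul_apply, ContinuousLinearMap.coe_comp', Function.comp_apply,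
    ContinuousLinearMap.coe_smul', Pi.smul_apply, Complex.ofRealCLM_apply, smul_eq_mul,
    Bmap_apply, hshift, innerSL_apply_apply]
  rw [phiF]
  push_cast
  ring

end B

section Main

lemma phiF_iteratedFDeriv_bound (n m : ℕ) :
    ∀ R : ℝ, ∃ C > (0:ℝ), ∀ i ≤ m, ∀ s : ℂ, 0 ≤ s.re → ‖s‖ ≤ R →
      ∀ x : EuclideanSpace ℝ (Fin n),
        ‖iteratedFDeriv ℝ i (phiF n s) x‖ ≤ C * (1 + ‖x‖ ^ 2) ^ (-(s.re + i) / 2) := by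
  induction m with
  | zero =>
    intro R
    refine ⟨1, one_pos, ?_⟩
    intro i hi s _ _ x
    obtain rfl : i = 0 := Nat.le_zero.mp hi
    rw [norm_iteratedFDeriv_zero, phiF_norm, one_mul]
    apply le_of_eq
    congr 1
    push_cast
    ring
  | succ m IH =>
    intro R
    obtain ⟨C, hC, hCb⟩ := IH (R + 2)
    refine ⟨2 ^ m * C * (|R| + 2) + C, by positivity, ?_⟩
    intro i hi s hs hsR x
    have hR0 : (0:ℝ) ≤ R := le_trans (norm_nonneg s) hsR
    have ht : (0:ℝ) < 1 + ‖x‖ ^ 2 := one_add_norm_sq_pos x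
    have hrpow0 : (0:ℝ) ≤ (1 + ‖x‖ ^ 2) ^ (-(s.re + (i:ℝ)) / 2) := Real.rpow_nonneg ht.le _
    rcases Nat.lt_or_ge i (m + 1) with him | him
    · -- use the inductive bound directly
      have h := hCb i (by omega) s hs (by linarith) x
      refine h.trans ?_
      have h2 : (0:ℝ) ≤ 2 ^ m * C * (|R| + 2) := by positivity
      exact mul_le_mul_of_nonneg_right (by linarith) hrpow0
    · obtain rfl : i = m + 1 := by omega
      set M : EuclideanSpace ℝ (Fin n) →L[ℝ] (EuclideanSpace ℝ (Fin n) →L[ℝ] ℂ) :=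
        (-s) • Bmap n with hM
      have hMnorm : ‖M‖ ≤ R + 2 := by
        apply ContinuousLinearMap.opNorm_le_bound _ (by linarith)
        intro y
        apply ContinuousLinearMap.opNorm_le_bound _ (by positivity)
        intro v
        have hMy : M y v = (-s) * ((⟪y, v⟫ : ℝ) : ℂ) := rfl
        rw [hMy, norm_mul, norm_neg, Complex.norm_real, Real.norm_eq_abs]
        calc ‖s‖ * |(⟪y, v⟫ : ℝ)| ≤ R * (‖y‖ * ‖v‖) :=
              mul_le_mul hsR (abs_real_inner_le_norm y v) (abs_nonneg _) hR0
          _ ≤ (R + 2) * ‖y‖ * ‖v‖ := by nlinarith [norm_nonneg y, norm_nonneg v]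
      have hstep : ‖iteratedFDeriv ℝ (m + 1) (phiF n s) x‖
          = ‖iteratedFDeriv ℝ m (fun y => phiF n (s + 2) y • M y) x‖ := by
        rw [← norm_iteratedFDeriv_fderiv, fderiv_phiF]
      have hsmul := norm_iteratedFDeriv_smul_le (𝕜 := ℝ) (𝕜' := ℂ)
        (f := phiF n (s + 2)) (g := fun y => M y) (N := (m : WithTop ℕ∞))
        (contDiff_phiF _) (M.contDiff) x le_rfl
      -- facts about s + 2
      have hs2re : (s + 2).re = s.re + 2 := by simp
      have hs2abs : ‖s + 2‖ ≤ R + 2 := by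
        calc ‖s + 2‖ ≤ ‖s‖ + ‖(2:ℂ)‖ := norm_add_le s 2
          _ ≤ R + 2 := by simp; linarith
      have hxt : ‖x‖ ≤ (1 + ‖x‖ ^ 2) ^ ((1:ℝ)/2) := by
        rw [← Real.sqrt_eq_rpow]
        calc ‖x‖ = Real.sqrt (‖x‖ ^ 2) := (Real.sqrt_sq (norm_nonneg x)).symm
          _ ≤ Real.sqrt (1 + ‖x‖ ^ 2) := Real.sqrt_le_sqrt (by linarith)
      set D : ℝ := C * (R + 2) * (1 + ‖x‖ ^ 2) ^ (-(s.re + ((m:ℝ) + 1)) / 2) with hD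
      have hD0 : 0 ≤ D := by positivity
      have hterm : ∀ j ∈ Finset.range (m + 1),
          (m.choose j : ℝ) * ‖iteratedFDeriv ℝ j (phiF n (s + 2)) x‖ *
            ‖iteratedFDeriv ℝ (m - j) (⇑M) x‖ ≤ (m.choose j : ℝ) * D := by
        intro j hj
        rw [Finset.mem_range, Nat.lt_succ_iff] at hj
        have hA := hCb j hj (s + 2)
          (by rw [hs2re]; linarith) hs2abs x
        rw [hs2re] at hA
        have hclm := clm_iteratedFDeriv_norm M (m - j) x
        have hAnn : (0:ℝ) ≤ ‖iteratedFDeriv ℝ j (phiF n (s + 2)) x‖ := norm_nonneg _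
        rcases e : m - j with _ | mj
        · -- m - j = 0, so j = m
          have hjm : j = m := by omega
          rw [e] at hclm
          simp only [if_pos rfl] at hclm
          have hBx : ‖iteratedFDeriv ℝ 0 (⇑M) x‖ ≤ (R + 2) * ((1 + ‖x‖ ^ 2) ^ ((1:ℝ)/2)) :=
            hclm.trans (mul_le_mul hMnorm hxt (norm_nonneg x) (by linarith))
          calc (m.choose j : ℝ) * ‖iteratedFDeriv ℝ j (phiF n (s + 2)) x‖ *
                ‖iteratedFDeriv ℝ 0 (⇑M) x‖
              ≤ (m.choose j : ℝ) * (C * (1 + ‖x‖ ^ 2) ^ (-(s.re + 2 + (j:ℝ)) / 2)) *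
                ((R + 2) * ((1 + ‖x‖ ^ 2) ^ ((1:ℝ)/2))) := by
                apply mul_le_mul (mul_le_mul_of_nonneg_left hA (by positivity)) hBx
                  (norm_nonneg _) (by positivity)
            _ = (m.choose j : ℝ) * D := by
                have hjm' : (j:ℝ) = (m:ℝ) := by exact_mod_cast congrArg (Nat.cast (R := ℝ)) hjm
                have hpow : (1 + ‖x‖ ^ 2) ^ (-(s.re + 2 + (j:ℝ)) / 2) *
                    (1 + ‖x‖ ^ 2) ^ ((1:ℝ)/2)
                    = (1 + ‖x‖ ^ 2) ^ (-(s.re + ((m:ℝ) + 1)) / 2) := by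
                  rw [← Real.rpow_add ht]
                  congr 1
                  rw [← hjm']
                  ring
                rw [hD, ← hpow]
                ring
        · rcases mj with _ | mj2
          · -- m - j = 1, so m = j + 1
            have hmj : m = j + 1 := by omega
            rw [e] at hclm
            simp only [if_neg one_ne_zero, if_pos rfl] at hclm
            calc (m.choose j : ℝ) * ‖iteratedFDeriv ℝ j (phiF n (s + 2)) x‖ *
                  ‖iteratedFDeriv ℝ 1 (⇑M) x‖
                ≤ (m.choose j : ℝ) * (C * (1 + ‖x‖ ^ 2) ^ (-(s.re + 2 + (j:ℝ)) / 2)) *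
                  (R + 2) := by
                  apply mul_le_mul (mul_le_mul_of_nonneg_left hA (by positivity))
                    (hclm.trans hMnorm) (norm_nonneg _) (by positivity)
              _ = (m.choose j : ℝ) * D := by
                  rw [hD]
                  have : -(s.re + 2 + (j:ℝ)) / 2 = -(s.re + ((m:ℝ) + 1)) / 2 := by
                    rw [hmj]; push_cast; ring
                  rw [this]; ring
          · -- m - j ≥ 2
            rw [e] at hclm
            simp only [if_neg (by omega : mj2 + 2 ≠ 0), if_neg (by omega : mj2 + 2 ≠ 1)] at hclm
            have : ‖iteratedFDeriv ℝ (mj2 + 2) (⇑M) x‖ = 0 :=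
              le_antisymm hclm (norm_nonneg _)
            rw [this, mul_zero]
            positivity
      have hsum : ‖iteratedFDeriv ℝ m (fun y => phiF n (s + 2) y • M y) x‖ ≤ (2:ℝ) ^ m * D := by
        refine hsmul.trans ?_
        calc (∑ j ∈ Finset.range (m + 1), (m.choose j : ℝ) *
                ‖iteratedFDeriv ℝ j (phiF n (s + 2)) x‖ *
                ‖iteratedFDeriv ℝ (m - j) (fun y => M y) x‖)
            ≤ ∑ j ∈ Finset.range (m + 1), (m.choose j : ℝ) * D := Finset.sum_le_sum hterm
          _ = (∑ j ∈ Finset.range (m + 1), (m.choose j : ℝ)) * D := by rw [Finset.sum_mul]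
          _ = (2:ℝ) ^ m * D := by
              norm_cast
              rw [Nat.sum_range_choose]
      rw [hstep]
      refine hsum.trans ?_
      rw [hD]
      have hexp : -(s.re + ((m:ℝ) + 1)) / 2 = -(s.re + ((m+1 : ℕ):ℝ)) / 2 := by push_cast; ring
      rw [hexp]
      have h2 : (0:ℝ) ≤ (1 + ‖x‖ ^ 2) ^ (-(s.re + ((m+1 : ℕ):ℝ)) / 2) := Real.rpow_nonneg ht.le _
      have : (2:ℝ) ^ m * (C * (R + 2)) ≤ 2 ^ m * C * (|R| + 2) + C := by
        have habs : R ≤ |R| := le_abs_self R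
        have h3 : (2:ℝ) ^ m * C * (R + 2) ≤ 2 ^ m * C * (|R| + 2) :=
          mul_le_mul_of_nonneg_left (by linarith) (by positivity)
        have h4 : (2:ℝ) ^ m * (C * (R + 2)) = 2 ^ m * C * (R + 2) := by ring
        linarith
      calc (2:ℝ) ^ m * (C * (R + 2) * (1 + ‖x‖ ^ 2) ^ (-(s.re + ((m+1 : ℕ):ℝ)) / 2))
          = ((2:ℝ) ^ m * (C * (R + 2))) * (1 + ‖x‖ ^ 2) ^ (-(s.re + ((m+1 : ℕ):ℝ)) / 2) := by ring
        _ ≤ (2 ^ m * C * (|R| + 2) + C) * (1 + ‖x‖ ^ 2) ^ (-(s.re + ((m+1 : ℕ):ℝ)) / 2) :=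
            mul_le_mul_of_nonneg_right this h2

end Main

section Decay

open FourierTransform

lemma phiF_fourier_decay (n m : ℕ) (R σ : ℝ) (hσn : (n:ℝ) < σ) :
    ∃ C > (0:ℝ), ∀ s : ℂ, σ ≤ s.re → ‖s‖ ≤ R →
      ∀ w : EuclideanSpace ℝ (Fin n),
        ‖w‖ ^ m * ‖𝓕 (phiF n s) w‖ ≤ C := by
  obtain ⟨C, hC, hCb⟩ := phiF_iteratedFDeriv_bound n m R
  have hσ0 : (0:ℝ) < σ := lt_of_le_of_lt (Nat.cast_nonneg n) hσn
  have hInt : Integrable (fun x : EuclideanSpace ℝ (Fin n) => (1 + ‖x‖ ^ 2) ^ (-σ / 2)) := by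
    apply integrable_rpow_neg_one_add_norm_sq (E := EuclideanSpace ℝ (Fin n)) (μ := volume)
    rw [finrank_euclideanSpace_fin]
    exact hσn
  set I0 : ℝ := ∫ x : EuclideanSpace ℝ (Fin n), (1 + ‖x‖ ^ 2) ^ (-σ / 2) with hI0def
  have hI0 : 0 ≤ I0 := integral_nonneg fun x => Real.rpow_nonneg (one_add_norm_sq_pos x).le _
  refine ⟨2 ^ m * ((m + 1) * (C * I0)) + 1, by positivity, ?_⟩
  intro s hsσ hsR w
  have hs0 : 0 ≤ s.re := le_trans hσ0.le hsσ
  -- pointwise bounds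
  have hbd : ∀ j ≤ m, ∀ x : EuclideanSpace ℝ (Fin n),
      ‖iteratedFDeriv ℝ j (phiF n s) x‖ ≤ C * (1 + ‖x‖ ^ 2) ^ (-σ / 2) := by
    intro j hj x
    refine (hCb j hj s hs0 hsR x).trans ?_
    apply mul_le_mul_of_nonneg_left _ hC.le
    apply Real.rpow_le_rpow_of_exponent_le (by nlinarith [sq_nonneg ‖x‖])
    have : (0:ℝ) ≤ (j:ℝ) := Nat.cast_nonneg j
    linarith
  have hint : ∀ j ≤ m, Integrable
      (fun x : EuclideanSpace ℝ (Fin n) => ‖iteratedFDeriv ℝ j (phiF n s) x‖) := by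
    intro j hj
    refine (hInt.const_mul C).mono' ?_ (Filter.Eventually.of_forall fun x => ?_)
    · exact (((contDiff_phiF (n := n) (s := s) (N := (j:ℕ∞))).continuous_iteratedFDeriv
        le_rfl).norm).aestronglyMeasurable
    · rw [norm_norm]
      exact hbd j hj x
  have hintegral : ∀ j ≤ m,
      (∫ x : EuclideanSpace ℝ (Fin n), ‖iteratedFDeriv ℝ j (phiF n s) x‖) ≤ C * I0 := by
    intro j hj
    have h := integral_mono (hint j hj) (hInt.const_mul C) (hbd j hj)
    rwa [integral_const_mul] at h
  have key := Real.pow_mul_norm_iteratedFDeriv_fourier_le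
    (V := EuclideanSpace ℝ (Fin n)) (f := phiF n s) (K := 0) (N := (m : ℕ∞))
    (contDiff_phiF s) ?_ (le_refl (0:ℕ∞)) (le_refl ((m : ℕ∞))) w
  · rw [norm_iteratedFDeriv_zero] at key
    refine key.trans ?_
    have hsum : (∑ p ∈ Finset.range (0 + 1) ×ˢ Finset.range (m + 1),
        ∫ v : EuclideanSpace ℝ (Fin n), ‖v‖ ^ p.1 * ‖iteratedFDeriv ℝ p.2 (phiF n s) v‖)
        ≤ ((m + 1) : ℝ) * (C * I0) := by
      have hcard : (Finset.range (0 + 1) ×ˢ Finset.range (m + 1)).card = m + 1 := by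
        simp [Finset.card_product]
      have hterm : ∀ p ∈ Finset.range (0 + 1) ×ˢ Finset.range (m + 1),
          (∫ v : EuclideanSpace ℝ (Fin n), ‖v‖ ^ p.1 * ‖iteratedFDeriv ℝ p.2 (phiF n s) v‖)
            ≤ C * I0 := by
        intro p hp
        obtain ⟨p1, p2⟩ := p
        rw [Finset.mem_product, Finset.mem_range, Finset.mem_range] at hp
        obtain rfl : p1 = 0 := by omega
        have hp2 : p2 ≤ m := by omega
        simp only [pow_zero, one_mul]
        exact hintegral p2 hp2
      calc (∑ p ∈ Finset.range (0 + 1) ×ˢ Finset.range (m + 1),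
            ∫ v : EuclideanSpace ℝ (Fin n), ‖v‖ ^ p.1 * ‖iteratedFDeriv ℝ p.2 (phiF n s) v‖)
          ≤ ∑ _p ∈ Finset.range (0 + 1) ×ˢ Finset.range (m + 1), C * I0 :=
            Finset.sum_le_sum hterm
        _ = ((m + 1) : ℝ) * (C * I0) := by
            rw [Finset.sum_const, hcard, nsmul_eq_mul]
            push_cast
            ring
    calc (2 * Real.pi) ^ 0 * (2 * (0:ℕ) + 2) ^ m *
          ∑ p ∈ Finset.range (0 + 1) ×ˢ Finset.range (m + 1),
            ∫ v : EuclideanSpace ℝ (Fin n), ‖v‖ ^ p.1 * ‖iteratedFDeriv ℝ p.2 (phiF n s) v‖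
        ≤ (2 * Real.pi) ^ 0 * (2 * (0:ℕ) + 2) ^ m * (((m + 1) : ℝ) * (C * I0)) := by
          apply mul_le_mul_of_nonneg_left hsum
          positivity
      _ ≤ 2 ^ m * ((m + 1) * (C * I0)) + 1 := by
          rw [pow_zero, one_mul]
          norm_num
  · intro k j hk hj
    obtain rfl : k = 0 := by
      have hk0 : (k : ℕ∞) = 0 := le_antisymm hk zero_le
      exact_mod_cast hk0
    have hj' : j ≤ m := by exact_mod_cast hj
    simp only [pow_zero, one_mul]
    exact hint j hj'

end Decay

section Transfer

lemma integral_eq_fourier {n : ℕ} (s : ℂ) (w : EuclideanSpace ℝ (Fin n)) :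
    (∫ x : Fin n → ℝ,
        ((1 + ∑ i, (x i) ^ 2 : ℝ) : ℂ) ^ (-s / 2) *
          Complex.exp (-2 * Real.pi * Complex.I * (∑ i, ((w i : ℝ) : ℂ) * (x i : ℂ))))
      = 𝓕 (phiF n s) w := by
  rw [Real.fourier_eq']
  rw [← ((EuclideanSpace.volume_preserving_symm_measurableEquiv_toLp (Fin n)).symm).integral_comp'
    (fun v => Complex.exp ((↑(-2 * Real.pi * ⟪v, w⟫) * Complex.I)) • phiF n s v)]
  apply integral_congr_ae
  filter_upwards with x
  set v : EuclideanSpace ℝ (Fin n) := (MeasurableEquiv.toLp 2 (Fin n → ℝ)).symm.symm x with hv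
  have hvi : ∀ i, v i = x i := fun i => rfl
  have hnormsq : ‖v‖ ^ 2 = ∑ i, (x i) ^ 2 := by
    rw [EuclideanSpace.norm_eq]
    rw [Real.sq_sqrt (by positivity)]
    congr 1
    funext i
    rw [hvi i, Real.norm_eq_abs, _root_.sq_abs]
  have hposn : (0:ℝ) < 1 + ∑ i, (x i) ^ 2 := by positivity
  have hcpow : ((1 + ∑ i, (x i) ^ 2 : ℝ) : ℂ) ^ (-s / 2) = phiF n s v := by
    rw [phiF, hnormsq, Complex.cpow_def_of_ne_zero (by exact_mod_cast hposn.ne'),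
      ← Complex.ofReal_log hposn.le]
    exact congrArg Complex.exp (mul_comm _ _)
  have hinner : (⟪v, w⟫ : ℝ) = ∑ i, x i * w i := by
    rw [PiLp.inner_apply]
    exact Finset.sum_congr rfl fun i _ => by rw [RCLike.inner_apply, conj_trivial, hvi i, mul_comm]
  have hphase : Complex.exp (-2 * Real.pi * Complex.I * (∑ i, ((w i : ℝ) : ℂ) * (x i : ℂ)))
      = Complex.exp ((↑(-2 * Real.pi * ⟪v, w⟫) * Complex.I)) := by
    congr 1
    have hsum : (∑ i, ((w i : ℝ) : ℂ) * ((x i : ℝ) : ℂ)) = ∑ i, ((x i : ℝ) : ℂ) * ((w i : ℝ) : ℂ) :=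
      Finset.sum_congr rfl fun i _ => mul_comm _ _
    rw [hsum, hinner]
    push_cast
    ring
  rw [hcpow, hphase, smul_eq_mul, mul_comm]

end Transfer

/-- For every `δ > 0` and every compact subset `K` of the half-plane
`Re s > n` there is `c(δ,K) > 0` such that for all `a ∈ ℤ^n` and `s ∈ K`,
`|∫_{ℝ^n} (1+‖x‖²)^(-s/2) e^(-2πi a·x) dx| ≤ c(δ,K) (1+|Im s|)^δ (1+‖a‖)^(-δ)`. -/
theorem stmt4 (n : ℕ) (hn : 1 ≤ n) :
    ∀ δ > (0 : ℝ), ∀ K : Set ℂ, IsCompact K → K ⊆ {s : ℂ | (n : ℝ) < s.re} →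
      ∃ c > (0 : ℝ), ∀ (a : Fin n → ℤ), ∀ s ∈ K,
        ‖∫ x : Fin n → ℝ,
            ((1 + ∑ i, (x i) ^ 2 : ℝ) : ℂ) ^ (-s / 2) *
              Complex.exp (-2 * Real.pi * Complex.I * (∑ i, (a i : ℂ) * (x i : ℂ)))‖
          ≤ c * (1 + |s.im|) ^ δ * (1 + Real.sqrt (∑ i, (a i : ℝ) ^ 2)) ^ (-δ) := by
  intro δ hδ K hK hKsub
  rcases K.eq_empty_or_nonempty with rfl | hKne
  · exact ⟨1, one_pos, fun a s hs => absurd hs (Set.notMem_empty s)⟩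
  obtain ⟨s₀, hs₀K, hs₀min⟩ := hK.exists_isMinOn hKne Complex.continuous_re.continuousOn
  have hσn : (n:ℝ) < s₀.re := hKsub hs₀K
  obtain ⟨sR, hsRK, hsRmax⟩ := hK.exists_isMaxOn hKne continuous_norm.continuousOn
  have hRb : ∀ s ∈ K, ‖s‖ ≤ ‖sR‖ := fun s hs => hsRmax hs
  set m := ⌈δ⌉₊ with hm
  obtain ⟨C₁, hC₁, hC₁b⟩ := phiF_fourier_decay n m (‖sR‖) s₀.re hσn
  obtain ⟨C₀, hC₀, hC₀b⟩ := phiF_fourier_decay n 0 (‖sR‖) s₀.re hσn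
  have h2δ : (0:ℝ) < (2:ℝ) ^ δ := Real.rpow_pos_of_pos two_pos δ
  have h2δ1 : (1:ℝ) ≤ (2:ℝ) ^ δ := Real.one_le_rpow one_le_two hδ.le
  refine ⟨(2:ℝ) ^ δ * (C₀ + C₁), by positivity, ?_⟩
  intro a s hsK
  have hsre : s₀.re ≤ s.re := hs₀min hsK
  have hsR : ‖s‖ ≤ ‖sR‖ := hRb s hsK
  set w : EuclideanSpace ℝ (Fin n) := (EuclideanSpace.equiv (Fin n) ℝ).symm (fun i => (a i : ℝ))
    with hw
  have hwa : ∀ i, ((w i : ℝ) : ℂ) = (a i : ℂ) := fun i => by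
    simp [hw]
  have hiw : (∫ x : Fin n → ℝ,
      ((1 + ∑ i, (x i) ^ 2 : ℝ) : ℂ) ^ (-s / 2) *
        Complex.exp (-2 * Real.pi * Complex.I * (∑ i, (a i : ℂ) * (x i : ℂ))))
      = 𝓕 (phiF n s) w := by
    rw [← integral_eq_fourier s w]
    apply integral_congr_ae
    filter_upwards with x
    simp only [hwa]
  have habs : ‖∫ x : Fin n → ℝ,
      ((1 + ∑ i, (x i) ^ 2 : ℝ) : ℂ) ^ (-s / 2) *
        Complex.exp (-2 * Real.pi * Complex.I * (∑ i, (a i : ℂ) * (x i : ℂ)))‖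
      = ‖𝓕 (phiF n s) w‖ := by
    rw [hiw]
  have hnw : ‖w‖ = Real.sqrt (∑ i, (a i : ℝ) ^ 2) := by
    rw [EuclideanSpace.norm_eq]
    congr 1
    exact Finset.sum_congr rfl fun i _ => by
      rw [hw]
      rw [Real.norm_eq_abs, _root_.sq_abs]
      rfl
  have him : (1:ℝ) ≤ (1 + |s.im|) ^ δ :=
    Real.one_le_rpow (by linarith [abs_nonneg s.im]) hδ.le
  have himpos : (0:ℝ) < (1 + |s.im|) ^ δ := lt_of_lt_of_le one_pos him
  rw [habs, ← hnw]
  by_cases ha : a = 0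
  · have hw0 : ‖w‖ = 0 := by
      rw [hnw, ha]
      simp
    have hF := hC₀b s hsre hsR w
    rw [pow_zero, one_mul] at hF
    rw [hw0, add_zero, Real.one_rpow, mul_one]
    calc ‖𝓕 (phiF n s) w‖ ≤ C₀ := hF
      _ ≤ (2:ℝ) ^ δ * (C₀ + C₁) * 1 := by nlinarith
      _ ≤ (2:ℝ) ^ δ * (C₀ + C₁) * (1 + |s.im|) ^ δ := by
          apply mul_le_mul_of_nonneg_left him (by positivity)
  · -- a ≠ 0 : ‖w‖ ≥ 1
    have hw1 : (1:ℝ) ≤ ‖w‖ := by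
      obtain ⟨i, hi⟩ := Function.ne_iff.mp ha
      have hi' : a i ≠ 0 := hi
      have h1 : (1:ℝ) ≤ (a i : ℝ) ^ 2 := by
        have habs1 : (1:ℤ) ≤ |a i| := Int.one_le_abs hi'
        have : (1:ℤ) ≤ (a i) ^ 2 := by nlinarith [_root_.sq_abs (a i)]
        exact_mod_cast this
      have hsum : (1:ℝ) ≤ ∑ j, (a j : ℝ) ^ 2 :=
        le_trans h1 (Finset.single_le_sum (f := fun j => ((a j : ℝ) ^ 2))
          (fun j _ => sq_nonneg _) (Finset.mem_univ i))
      rw [hnw]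
      calc (1:ℝ) = Real.sqrt 1 := Real.sqrt_one.symm
        _ ≤ Real.sqrt (∑ j, (a j : ℝ) ^ 2) := Real.sqrt_le_sqrt hsum
    have hwpos : (0:ℝ) < ‖w‖ := lt_of_lt_of_le one_pos hw1
    have hwm : (0:ℝ) < ‖w‖ ^ m := pow_pos hwpos m
    have hF := hC₁b s hsre hsR w
    have h1δ : (1 + ‖w‖) ^ δ ≤ (2:ℝ) ^ δ * ‖w‖ ^ m := by
      calc (1 + ‖w‖) ^ δ ≤ (2 * ‖w‖) ^ δ :=
            Real.rpow_le_rpow (by positivity) (by linarith) hδ.le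
        _ = (2:ℝ) ^ δ * ‖w‖ ^ δ := Real.mul_rpow (by norm_num) (norm_nonneg w)
        _ ≤ (2:ℝ) ^ δ * ‖w‖ ^ (m : ℝ) := by
            apply mul_le_mul_of_nonneg_left _ h2δ.le
            exact Real.rpow_le_rpow_of_exponent_le hw1 (Nat.le_ceil δ)
        _ = (2:ℝ) ^ δ * ‖w‖ ^ m := by rw [Real.rpow_natCast]
    have hpow1 : (0:ℝ) < (1 + ‖w‖) ^ δ := Real.rpow_pos_of_pos (by positivity) δ
    rw [Real.rpow_neg (by positivity : (0:ℝ) ≤ 1 + ‖w‖)]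
    have hgoal : ‖𝓕 (phiF n s) w‖ * (1 + ‖w‖) ^ δ
        ≤ (2:ℝ) ^ δ * (C₀ + C₁) * (1 + |s.im|) ^ δ := by
      calc ‖𝓕 (phiF n s) w‖ * (1 + ‖w‖) ^ δ
          ≤ ‖𝓕 (phiF n s) w‖ * ((2:ℝ) ^ δ * ‖w‖ ^ m) :=
            mul_le_mul_of_nonneg_left h1δ (norm_nonneg _)
        _ = (2:ℝ) ^ δ * (‖w‖ ^ m * ‖𝓕 (phiF n s) w‖) := by ring
        _ ≤ (2:ℝ) ^ δ * C₁ := mul_le_mul_of_nonneg_left hF h2δ.le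
        _ ≤ (2:ℝ) ^ δ * (C₀ + C₁) := by nlinarith
        _ ≤ (2:ℝ) ^ δ * (C₀ + C₁) * (1 + |s.im|) ^ δ :=
            le_mul_of_one_le_right (by positivity) him
    calc ‖𝓕 (phiF n s) w‖
        = ‖𝓕 (phiF n s) w‖ * (1 + ‖w‖) ^ δ * ((1 + ‖w‖) ^ δ)⁻¹ := by
          field_simp
      _ ≤ (2:ℝ) ^ δ * (C₀ + C₁) * (1 + |s.im|) ^ δ * ((1 + ‖w‖) ^ δ)⁻¹ :=
          mul_le_mul_of_nonneg_right hgoal (by positivity)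
end

section
/- Let p be a prime and ℓ(x_1,x_2) = a x_1 + b x_2 a linear form with integer coefficients satisfying gcd(a,b) = 1. For all integers α > β ≥ 1, the set {x ∈ ℚ_p² : ‖x‖_p = p^α and |ℓ(x)|_p = p^{α−β}} has Haar measure p^{2α−β}·(1 − 1/p)² = p^{2α−β}(p−1)²/p². -/
open MeasureTheory ENNReal

section AUX
instance sepQp (p : ℕ) [Fact p.Prime] : TopologicalSpace.SeparableSpace ℚ_[p] := by
  refine ⟨⟨Set.range ((↑) : ℚ → ℚ_[p]), Set.countable_range _, fun x => ?_⟩⟩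
  rw [Metric.mem_closure_iff]
  intro ε hε
  obtain ⟨r, hr⟩ := Padic.rat_dense _ x hε
  exact ⟨r, Set.mem_range_self r, by simpa [dist_eq_norm] using hr⟩

instance (p : ℕ) [Fact p.Prime] : SecondCountableTopology ℚ_[p] :=
  UniformSpace.secondCountable_of_separable _

variable {p : ℕ} [hp : Fact p.Prime]

lemma normLin (m n : ℤ) (z₁ z₂ : ℚ_[p]) : ‖(m:ℚ_[p])*z₁ + (n:ℚ_[p])*z₂‖ ≤ max ‖z₁‖ ‖z₂‖ := by
  refine le_trans (Padic.nonarchimedean _ _) (max_le_max ?_ ?_) <;>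
  · rw [norm_mul]
    exact mul_le_of_le_one_left (norm_nonneg _) (Padic.norm_int_le_one _)

lemma normLin' (m n : ℤ) (z₁ z₂ : ℚ_[p]) (h₁ : ‖z₁‖ ≤ 1) (h₂ : ‖z₂‖ ≤ 1) :
    ‖(m:ℚ_[p])*z₁ + (n:ℚ_[p])*z₂‖ ≤ 1 :=
  le_trans (normLin m n z₁ z₂) (max_le h₁ h₂)

lemma padic_p_pos : (0:ℝ) < p := by exact_mod_cast hp.out.pos

lemma norm_ppow (j : ℕ) : ‖((p:ℚ_[p]))^j‖ = ((p:ℝ)^j)⁻¹ := by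
  rw [norm_pow, Padic.norm_p, inv_pow]

lemma exists_digit (j : ℕ) (y : ℚ_[p]) (hy : ‖y‖ ≤ (p:ℝ)^j) :
    ∃ u : ℕ, u < p^j ∧ ‖y - (u:ℚ_[p])/(p:ℚ_[p])^j‖ ≤ 1 := by
  have hppos : (0:ℝ) < p := padic_p_pos
  have hz : ‖(p:ℚ_[p])^j * y‖ ≤ 1 := by
    rw [norm_mul, norm_ppow]
    calc ((p:ℝ)^j)⁻¹ * ‖y‖ ≤ ((p:ℝ)^j)⁻¹ * (p:ℝ)^j :=
          mul_le_mul_of_nonneg_left hy (by positivity)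
      _ = 1 := inv_mul_cancel₀ (pow_pos padic_p_pos j).ne'
  set z : ℤ_[p] := ⟨(p:ℚ_[p])^j * y, hz⟩ with hzdef
  refine ⟨z.appr j, z.appr_lt j, ?_⟩
  have hs : ‖z - (z.appr j : ℤ_[p])‖ ≤ (p:ℝ) ^ (-(j:ℤ)) :=
    (PadicInt.norm_le_pow_iff_mem_span_pow _ _).2 (z.appr_spec j)
  have hs' : ‖(p:ℚ_[p])^j * y - (z.appr j : ℚ_[p])‖ ≤ ((p:ℝ)^j)⁻¹ := by
    have hco : ((z - (z.appr j : ℤ_[p]) : ℤ_[p]) : ℚ_[p])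
        = (p:ℚ_[p])^j * y - (z.appr j : ℚ_[p]) := by
      rw [PadicInt.coe_sub, PadicInt.coe_natCast, hzdef]
    rw [← hco, PadicInt.padic_norm_e_of_padicInt]
    rwa [zpow_neg, zpow_natCast] at hs
  have hpj : (p:ℚ_[p])^j ≠ 0 := by
    exact_mod_cast pow_ne_zero j (Nat.cast_ne_zero.2 hp.out.ne_zero)
  have heq : y - (z.appr j : ℚ_[p])/(p:ℚ_[p])^j
      = ((p:ℚ_[p])^j * y - (z.appr j : ℚ_[p]))/(p:ℚ_[p])^j := by
    field_simp
  have hppow : (0:ℝ) < (p:ℝ)^j := pow_pos padic_p_pos j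
  rw [heq, norm_div, norm_ppow, div_eq_mul_inv, inv_inv]
  calc ‖(p:ℚ_[p])^j * y - (z.appr j : ℚ_[p])‖ * (p:ℝ)^j
      ≤ ((p:ℝ)^j)⁻¹ * (p:ℝ)^j := mul_le_mul_of_nonneg_right hs' hppow.le
    _ = 1 := inv_mul_cancel₀ hppow.ne'

lemma uniq_digit (j : ℕ) (y : ℚ_[p]) (u u' : ℕ) (hu : u < p^j) (hu' : u' < p^j)
    (h : ‖y - (u:ℚ_[p])/(p:ℚ_[p])^j‖ ≤ 1) (h' : ‖y - (u':ℚ_[p])/(p:ℚ_[p])^j‖ ≤ 1) :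
    u = u' := by
  have hpj : (p:ℚ_[p])^j ≠ 0 := by
    exact_mod_cast pow_ne_zero j (Nat.cast_ne_zero.2 hp.out.ne_zero)
  have hd : ‖((u:ℤ) - (u':ℤ) : ℤ) * ((p:ℚ_[p])^j)⁻¹‖ ≤ 1 := by
    have : ((((u:ℤ) - (u':ℤ) : ℤ)) : ℚ_[p]) * ((p:ℚ_[p])^j)⁻¹
        = (y - (u':ℚ_[p])/(p:ℚ_[p])^j) - (y - (u:ℚ_[p])/(p:ℚ_[p])^j) := by
      push_cast
      field_simp
      ring
    rw [this, sub_eq_add_neg]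
    refine le_trans (Padic.nonarchimedean _ _) (max_le h' (by rwa [norm_neg]))
  rw [norm_mul, norm_inv, norm_ppow, inv_inv] at hd
  have hdvd : ((p:ℤ)^j) ∣ ((u:ℤ) - (u':ℤ)) := by
    rw [← Padic.norm_int_le_pow_iff_dvd, zpow_neg, zpow_natCast]
    rw [← le_div_iff₀ (pow_pos (padic_p_pos (p := p)) j)] at hd
    simpa [one_div] using hd
  have habs : ((u:ℤ) - (u':ℤ)).natAbs < ((p:ℤ)^j).natAbs := by
    simp only [Int.natAbs_pow, Int.natAbs_natCast]
    omega
  have := Int.eq_zero_of_dvd_of_natAbs_lt_natAbs hdvd habs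
  omega

lemma norm_digit_coe (j u : ℕ) (hu : ¬ p ∣ u) : ‖(u:ℚ_[p])/(p:ℚ_[p])^j‖ = (p:ℝ)^j := by
  have h1 : ‖(u:ℚ_[p])‖ = 1 := by
    refine le_antisymm (by exact_mod_cast Padic.norm_int_le_one (u:ℤ)) ?_
    by_contra hlt
    push_neg at hlt
    have := (Padic.norm_intCast_lt_one_iff (k := (u:ℤ))).1 (by exact_mod_cast hlt)
    exact hu (by exact_mod_cast this)
  rw [norm_div, norm_ppow, h1, one_div, inv_inv]

lemma norm_eq_digit (j : ℕ) (hj : 1 ≤ j) (u : ℕ) (hu : ¬ p ∣ u) (y : ℚ_[p])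
    (h : ‖y - (u:ℚ_[p])/(p:ℚ_[p])^j‖ ≤ 1) : ‖y‖ = (p:ℝ)^j := by
  have hone : (1:ℝ) < (p:ℝ)^j :=
    one_lt_pow₀ (by exact_mod_cast hp.out.one_lt) (by omega)
  have he := norm_digit_coe (p := p) j u hu
  have hy : y = (y - (u:ℚ_[p])/(p:ℚ_[p])^j) + (u:ℚ_[p])/(p:ℚ_[p])^j := by ring
  rw [hy, Padic.add_eq_max_of_ne (by rw [he]; exact ne_of_lt (lt_of_le_of_lt h hone)),
    he, max_eq_right (le_of_lt (lt_of_le_of_lt h hone))]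

lemma digit_not_dvd (j : ℕ) (hj : 1 ≤ j) (u : ℕ) (y : ℚ_[p]) (hy : ‖y‖ = (p:ℝ)^j)
    (h : ‖y - (u:ℚ_[p])/(p:ℚ_[p])^j‖ ≤ 1) : ¬ p ∣ u := by
  intro hdvd
  have hone : (1:ℝ) < (p:ℝ)^j :=
    one_lt_pow₀ (by exact_mod_cast hp.out.one_lt) (by omega)
  have h1 : ‖(u:ℚ_[p])‖ < 1 :=
    (Padic.norm_intCast_lt_one_iff (k := (u:ℤ))).2 (by exact_mod_cast hdvd)
  have he : ‖(u:ℚ_[p])/(p:ℚ_[p])^j‖ < (p:ℝ)^j := by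
    rw [norm_div, norm_ppow, div_eq_mul_inv, inv_inv]
    calc ‖(u:ℚ_[p])‖ * (p:ℝ)^j < 1 * (p:ℝ)^j :=
          mul_lt_mul_of_pos_right h1 (pow_pos padic_p_pos j)
      _ = (p:ℝ)^j := one_mul _
  have hlt : ‖y‖ < (p:ℝ)^j := by
    have hy2 : y = (y - (u:ℚ_[p])/(p:ℚ_[p])^j) + (u:ℚ_[p])/(p:ℚ_[p])^j := by ring
    rw [hy2]
    exact lt_of_le_of_lt (Padic.nonarchimedean _ _)
      (max_lt (lt_of_le_of_lt h hone) he)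
  rw [hy] at hlt
  exact lt_irrefl _ hlt

lemma card_not_dvd {p : ℕ} [hp : Fact p.Prime] (n : ℕ) (hn : 1 ≤ n) :
    ((Finset.range (p^n)).filter fun u => ¬ p ∣ u).card = p^n - p^(n-1) := by
  classical
  have hps : p^n = p * p^(n-1) := by
    rw [← pow_succ']
    congr 1
    omega
  have h1 : ((Finset.range (p^n)).filter fun u => p ∣ u)
      = (Finset.range (p^(n-1))).image (fun i => p * i) := by
    ext m
    simp only [Finset.mem_filter, Finset.mem_range, Finset.mem_image]
    constructor
    · rintro ⟨hm, c, rfl⟩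
      refine ⟨c, ?_, rfl⟩
      rw [hps] at hm
      exact lt_of_mul_lt_mul_left hm (Nat.zero_le p)
    · rintro ⟨i, hi, rfl⟩
      exact ⟨by rw [hps]; exact (Nat.mul_lt_mul_left hp.out.pos).2 hi, ⟨i, rfl⟩⟩
  have h2 : ((Finset.range (p^n)).filter fun u => p ∣ u).card = p^(n-1) := by
    rw [h1, Finset.card_image_of_injective _
      (fun i i' h => Nat.eq_of_mul_eq_mul_left hp.out.pos h), Finset.card_range]
  have h3 := Finset.card_filter_add_card_filter_not
    (s := Finset.range (p^n)) (p := fun u => p ∣ u)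
  rw [Finset.card_range, h2] at h3
  omega

lemma arith (p α β : ℕ) (hp1 : 1 < p) (hβ : 1 ≤ β) (hαβ : β < α) :
    ENNReal.ofReal ((p:ℝ)^(2*α-β) * (1 - 1/p)^2)
      = (((p^(α-β) - p^(α-β-1)) * (p^α - p^(α-1)) : ℕ) : ℝ≥0∞) := by
  have hp0 : (p:ℝ) ≠ 0 := by
    have : (0:ℝ) < p := by exact_mod_cast Nat.lt_of_lt_of_le Nat.zero_lt_one hp1.le
    exact this.ne'
  have hle1 : p^(α-β-1) ≤ p^(α-β) := Nat.pow_le_pow_right (by omega) (by omega)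
  have hle2 : p^(α-1) ≤ p^α := Nat.pow_le_pow_right (by omega) (by omega)
  have hreal : (((p^(α-β) - p^(α-β-1)) * (p^α - p^(α-1)) : ℕ) : ℝ)
      = (p:ℝ)^(2*α-β) * (1 - 1/p)^2 := by
    push_cast [Nat.cast_sub hle1, Nat.cast_sub hle2]
    rw [show 2*α-β = (α-β-1) + (α-1) + 2 by omega,
      show α-β = (α-β-1) + 1 by omega]
    nth_rewrite 3 [show α = (α-1) + 1 by omega]
    field_simp
    rw [show α - β - 1 + 1 - 1 = α - β - 1 by omega]
    ring
  rw [← hreal, ENNReal.ofReal_natCast]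
end AUX

/-- Let `p` be a prime, `ℓ(x₁,x₂) = a x₁ + b x₂` a primitive integral
linear form. For integers `α > β ≥ 1`, the set
`{x ∈ ℚ_p² : ‖x‖_p = p^α, |ℓ(x)|_p = p^(α-β)}` has normalized Haar measure
`p^(2α-β)(1-1/p)²`. -/
theorem stmt7 (p : ℕ) [Fact p.Prime]
    (μ : Measure (ℚ_[p] × ℚ_[p])) (hμ : μ.IsAddHaarMeasure)
    (hμ1 : μ {x | ‖x.1‖ ≤ 1 ∧ ‖x.2‖ ≤ 1} = 1)
    (a b : ℤ) (hab : Int.gcd a b = 1)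
    (α β : ℕ) (hβ : 1 ≤ β) (hαβ : β < α) :
    μ {x : ℚ_[p] × ℚ_[p] | max ‖x.1‖ ‖x.2‖ = (p : ℝ) ^ α ∧
        ‖(a : ℚ_[p]) * x.1 + (b : ℚ_[p]) * x.2‖ = (p : ℝ) ^ (α - β)} =
      ENNReal.ofReal ((p : ℝ) ^ (2 * α - β) * (1 - 1 / p) ^ 2) := by
  classical
  haveI hμ' : μ.IsAddHaarMeasure := hμ
  have hp : Fact p.Prime := ‹_›
  have hp1 : 1 < p := hp.out.one_lt
  have hp1R : (1:ℝ) < p := by exact_mod_cast hp1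
  obtain ⟨A, B, hAB⟩ : ∃ A B : ℤ, a * A + b * B = 1 := by
    refine ⟨Int.gcdA a b, Int.gcdB a b, ?_⟩
    have h := Int.gcd_eq_gcd_ab a b
    rw [hab] at h
    exact_mod_cast h.symm
  have hABq : (a:ℚ_[p]) * (A:ℚ_[p]) + (b:ℚ_[p]) * (B:ℚ_[p]) = 1 := by
    exact_mod_cast congrArg (fun z : ℤ => (z : ℚ_[p])) hAB
  set e : ℕ → ℕ → ℚ_[p] := fun n u => (u:ℚ_[p])/(p:ℚ_[p])^n with he
  set w : ℕ × ℕ → ℚ_[p] × ℚ_[p] := fun uv =>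
    ((A:ℚ_[p]) * e (α-β) uv.1 - (b:ℚ_[p]) * e α uv.2,
     (B:ℚ_[p]) * e (α-β) uv.1 + (a:ℚ_[p]) * e α uv.2) with hw
  set I : Finset (ℕ × ℕ) :=
    ((Finset.range (p^(α-β))).filter fun u => ¬ p ∣ u) ×ˢ
    ((Finset.range (p^α)).filter fun v => ¬ p ∣ v) with hI
  set T : ℕ × ℕ → Set (ℚ_[p] × ℚ_[p]) := fun uv =>
    {x | ‖x.1 - (w uv).1‖ ≤ 1 ∧ ‖x.2 - (w uv).2‖ ≤ 1} with hT
  -- characterization of membership in a tile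
  have hchar : ∀ (x : ℚ_[p] × ℚ_[p]) (u v : ℕ),
      x ∈ T (u, v) ↔
        ‖(a:ℚ_[p]) * x.1 + (b:ℚ_[p]) * x.2 - e (α-β) u‖ ≤ 1 ∧
        ‖((-B:ℤ):ℚ_[p]) * x.1 + (A:ℚ_[p]) * x.2 - e α v‖ ≤ 1 := by
    intro x u v
    constructor
    · rintro ⟨h1, h2⟩
      constructor
      · have hid : (a:ℚ_[p]) * x.1 + (b:ℚ_[p]) * x.2 - e (α-β) u
            = (a:ℚ_[p]) * (x.1 - (w (u,v)).1) + (b:ℚ_[p]) * (x.2 - (w (u,v)).2) := by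
          simp only [hw]
          linear_combination (e (α-β) u) * hABq
        rw [hid]
        exact normLin' a b _ _ h1 h2
      · have hid : ((-B:ℤ):ℚ_[p]) * x.1 + (A:ℚ_[p]) * x.2 - e α v
            = ((-B:ℤ):ℚ_[p]) * (x.1 - (w (u,v)).1) + (A:ℚ_[p]) * (x.2 - (w (u,v)).2) := by
          simp only [hw]
          push_cast
          linear_combination (e α v) * hABq
        rw [hid]
        exact normLin' (-B) A _ _ h1 h2
    · rintro ⟨h1, h2⟩
      constructor
      · have hid : x.1 - (w (u,v)).1
            = (A:ℚ_[p]) * ((a:ℚ_[p]) * x.1 + (b:ℚ_[p]) * x.2 - e (α-β) u)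
              + ((-b:ℤ):ℚ_[p]) * (((-B:ℤ):ℚ_[p]) * x.1 + (A:ℚ_[p]) * x.2 - e α v) := by
          simp only [hw]
          push_cast
          linear_combination (- x.1) * hABq
        rw [hid]
        exact normLin' A (-b) _ _ h1 h2
      · have hid : x.2 - (w (u,v)).2
            = (B:ℚ_[p]) * ((a:ℚ_[p]) * x.1 + (b:ℚ_[p]) * x.2 - e (α-β) u)
              + (a:ℚ_[p]) * (((-B:ℤ):ℚ_[p]) * x.1 + (A:ℚ_[p]) * x.2 - e α v) := by
          simp only [hw]
          push_cast
          linear_combination (- x.2) * hABq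
        rw [hid]
        exact normLin' B a _ _ h1 h2
  -- max norm is preserved by the change of variables
  have hmaxeq : ∀ x : ℚ_[p] × ℚ_[p],
      max ‖(a:ℚ_[p]) * x.1 + (b:ℚ_[p]) * x.2‖ ‖((-B:ℤ):ℚ_[p]) * x.1 + (A:ℚ_[p]) * x.2‖
        = max ‖x.1‖ ‖x.2‖ := by
    intro x
    refine le_antisymm (max_le (normLin a b x.1 x.2) (normLin (-B) A x.1 x.2)) ?_
    set y₁ := (a:ℚ_[p]) * x.1 + (b:ℚ_[p]) * x.2
    set y₂ := ((-B:ℤ):ℚ_[p]) * x.1 + (A:ℚ_[p]) * x.2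
    have hx1 : x.1 = (A:ℚ_[p]) * y₁ + ((-b:ℤ):ℚ_[p]) * y₂ := by
      simp only [y₁, y₂]
      push_cast
      linear_combination (- x.1) * hABq
    have hx2 : x.2 = (B:ℚ_[p]) * y₁ + (a:ℚ_[p]) * y₂ := by
      simp only [y₁, y₂]
      push_cast
      linear_combination (- x.2) * hABq
    refine max_le ?_ ?_
    · rw [hx1]; exact normLin A (-b) y₁ y₂
    · rw [hx2]; exact normLin B a y₁ y₂
  have hj1 : 1 ≤ α - β := by omega
  have hk1 : 1 ≤ α := by omega
  have hplt : (p:ℝ)^(α-β) < (p:ℝ)^α := by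
    apply pow_lt_pow_right₀ hp1R
    omega
  -- the set equality
  have hset : {x : ℚ_[p] × ℚ_[p] | max ‖x.1‖ ‖x.2‖ = (p : ℝ) ^ α ∧
        ‖(a : ℚ_[p]) * x.1 + (b : ℚ_[p]) * x.2‖ = (p : ℝ) ^ (α - β)}
      = ⋃ uv ∈ I, T uv := by
    ext x
    simp only [Set.mem_setOf_eq, Set.mem_iUnion, exists_prop]
    constructor
    · rintro ⟨hmax, hl⟩
      have hy2 : ‖((-B:ℤ):ℚ_[p]) * x.1 + (A:ℚ_[p]) * x.2‖ = (p:ℝ)^α := by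
        have h := hmaxeq x
        rw [hmax] at h
        rcases max_cases ‖(a:ℚ_[p]) * x.1 + (b:ℚ_[p]) * x.2‖
          ‖((-B:ℤ):ℚ_[p]) * x.1 + (A:ℚ_[p]) * x.2‖ with ⟨h1, h2⟩ | ⟨h1, h2⟩
        · rw [h1, hl] at h
          exact absurd h (ne_of_lt hplt)
        · rw [h1] at h
          exact h
      obtain ⟨u, hu_lt, hu⟩ := exists_digit (α-β) _ (le_of_eq hl)
      obtain ⟨v, hv_lt, hv⟩ := exists_digit α _ (le_of_eq hy2)
      have hu_ndvd : ¬ p ∣ u := digit_not_dvd (α-β) hj1 u _ hl hu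
      have hv_ndvd : ¬ p ∣ v := digit_not_dvd α hk1 v _ hy2 hv
      refine ⟨(u, v), ?_, ?_⟩
      · simp only [hI, Finset.mem_product, Finset.mem_filter, Finset.mem_range]
        exact ⟨⟨hu_lt, hu_ndvd⟩, ⟨hv_lt, hv_ndvd⟩⟩
      · exact (hchar x u v).2 ⟨hu, hv⟩
    · rintro ⟨⟨u, v⟩, huv, hx⟩
      simp only [hI, Finset.mem_product, Finset.mem_filter, Finset.mem_range] at huv
      obtain ⟨⟨hu_lt, hu_ndvd⟩, ⟨hv_lt, hv_ndvd⟩⟩ := huv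
      obtain ⟨hu, hv⟩ := (hchar x u v).1 hx
      have hy1 : ‖(a:ℚ_[p]) * x.1 + (b:ℚ_[p]) * x.2‖ = (p:ℝ)^(α-β) :=
        norm_eq_digit (α-β) hj1 u hu_ndvd _ hu
      have hy2 : ‖((-B:ℤ):ℚ_[p]) * x.1 + (A:ℚ_[p]) * x.2‖ = (p:ℝ)^α :=
        norm_eq_digit α hk1 v hv_ndvd _ hv
      refine ⟨?_, hy1⟩
      rw [← hmaxeq x, hy1, hy2]
      exact max_eq_right hplt.le
  -- disjointness
  have hdisj : (I : Set (ℕ × ℕ)).PairwiseDisjoint T := by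
    rintro ⟨u, v⟩ huv ⟨u', v'⟩ huv' hne
    simp only [hI, Finset.coe_product, Set.mem_prod, Finset.coe_filter,
      Set.mem_setOf_eq, Finset.mem_range] at huv huv'
    refine Set.disjoint_left.2 fun x hx hx' => hne ?_
    obtain ⟨hu, hv⟩ := (hchar x u v).1 hx
    obtain ⟨hu', hv'⟩ := (hchar x u' v').1 hx'
    have h1 : u = u' := uniq_digit (α-β) _ u u' huv.1.1 huv'.1.1 hu hu'
    have h2 : v = v' := uniq_digit α _ v v' huv.2.1 huv'.2.1 hv hv'
    simp [h1, h2]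
  -- measurability
  have hmeas : ∀ uv : ℕ × ℕ, MeasurableSet (T uv) := by
    intro uv
    have hTrw : T uv = {x : ℚ_[p] × ℚ_[p] | ‖x.1 - (w uv).1‖ ≤ 1}
        ∩ {x : ℚ_[p] × ℚ_[p] | ‖x.2 - (w uv).2‖ ≤ 1} := rfl
    rw [hTrw]
    exact ((isClosed_le ((continuous_fst.sub continuous_const).norm)
        continuous_const).measurableSet).inter
      ((isClosed_le ((continuous_snd.sub continuous_const).norm)
        continuous_const).measurableSet)
  -- each tile has measure one
  have htrans : ∀ uv : ℕ × ℕ, μ (T uv) = 1 := by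
    intro uv
    have hTrw : T uv = (fun x : ℚ_[p] × ℚ_[p] => -(w uv) + x) ⁻¹'
        {x : ℚ_[p] × ℚ_[p] | ‖x.1‖ ≤ 1 ∧ ‖x.2‖ ≤ 1} := by
      ext x
      simp only [hT, Set.mem_preimage, Set.mem_setOf_eq, Prod.fst_add, Prod.snd_add,
        Prod.fst_neg, Prod.snd_neg, neg_add_eq_sub, Prod.fst_sub, Prod.snd_sub]
    rw [hTrw, measure_preimage_add, hμ1]
  rw [hset, measure_biUnion_finset hdisj (fun uv _ => hmeas uv)]
  rw [Finset.sum_congr rfl (fun uv _ => htrans uv), Finset.sum_const, nsmul_eq_mul, mul_one]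
  have hcard : I.card = (p^(α-β) - p^(α-β-1)) * (p^α - p^(α-1)) := by
    rw [hI, Finset.card_product, card_not_dvd (α-β) hj1, card_not_dvd α hk1]
  rw [hcard, arith p α β hp1 hβ hαβ]
end

section
/- Let p be a prime and ℓ(x_1,x_2) = a x_1 + b x_2 a linear form with integer coefficients satisfying gcd(a,b) = 1. For every integer α ≥ 1, the set {x ∈ ℚ_p² : ‖x‖_p = p^α and |ℓ(x)|_p ≤ 1} has Haar measure p^{α−1}(p−1). -/
open MeasureTheory

section Aux

variable {p : ℕ} [Fact p.Prime]

lemma stmt8_aux (μ : Measure (ℚ_[p] × ℚ_[p])) [μ.IsAddLeftInvariant]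
    (hμ1 : μ {x | ‖x.1‖ ≤ 1 ∧ ‖x.2‖ ≤ 1} = 1)
    (a b : ℚ_[p]) (ha : ‖a‖ = 1) (hb : ‖b‖ ≤ 1)
    (α : ℕ) (hα : 1 ≤ α) :
    μ {x : ℚ_[p] × ℚ_[p] | max ‖x.1‖ ‖x.2‖ = (p : ℝ) ^ α ∧ ‖a * x.1 + b * x.2‖ ≤ 1} =
      ENNReal.ofReal ((p : ℝ) ^ (α - 1) * (p - 1)) := by
  have hp := (Fact.out : p.Prime)
  have hp1 : (1 : ℝ) < p := by exact_mod_cast hp.one_lt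
  have hp0 : (0 : ℝ) < p := by positivity
  have hpne : (p : ℚ_[p]) ≠ 0 := by
    exact_mod_cast (Nat.cast_ne_zero (R := ℚ_[p])).2 hp.pos.ne'
  have ha0 : a ≠ 0 := by
    intro h; rw [h, norm_zero] at ha; norm_num at ha
  -- the translated cells
  set C : ℚ_[p] → Set (ℚ_[p] × ℚ_[p]) :=
    fun c => {x | ‖a * x.1 + b * x.2‖ ≤ 1 ∧ ‖x.2 - c‖ ≤ 1} with hC
  have hCclosed : ∀ c, IsClosed (C c) := by
    intro c
    apply IsClosed.inter
    · exact isClosed_le (((continuous_const.mul continuous_fst).add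
        (continuous_const.mul continuous_snd)).norm) continuous_const
    · exact isClosed_le ((continuous_snd.sub continuous_const).norm) continuous_const
  have hCmeas : ∀ c, MeasurableSet (C c) := fun c => (hCclosed c).measurableSet
  -- C 0 is the unit square
  have hC0 : C 0 = {x : ℚ_[p] × ℚ_[p] | ‖x.1‖ ≤ 1 ∧ ‖x.2‖ ≤ 1} := by
    ext x
    simp only [hC, Set.mem_setOf_eq, sub_zero]
    constructor
    · rintro ⟨h1, h2⟩
      refine ⟨?_, h2⟩
      have e : a * x.1 = (a * x.1 + b * x.2) + (-(b * x.2)) := by ring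
      have h3 : ‖a * x.1‖ ≤ 1 := by
        rw [e]
        refine le_trans (Padic.nonarchimedean _ _) (max_le h1 ?_)
        rw [norm_neg, norm_mul]
        exact mul_le_one₀ hb (norm_nonneg _) h2
      rwa [norm_mul, ha, one_mul] at h3
    · rintro ⟨h1, h2⟩
      refine ⟨?_, h2⟩
      refine le_trans (Padic.nonarchimedean _ _) (max_le ?_ ?_) <;>
        rw [norm_mul]
      · rw [ha, one_mul]; exact h1
      · exact mul_le_one₀ hb (norm_nonneg _) h2
  -- every cell has measure 1
  have hCμ : ∀ c, μ (C c) = 1 := by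
    intro c
    have key : C c = (fun x => ((a⁻¹ * (b * c), -c) + x)) ⁻¹' (C 0) := by
      ext x
      simp only [hC, Set.mem_preimage, Set.mem_setOf_eq, Prod.fst_add, Prod.snd_add, sub_zero]
      have e1 : a * (a⁻¹ * (b * c) + x.1) + b * (-c + x.2) = a * x.1 + b * x.2 := by
        field_simp
        ring
      have e2 : -c + x.2 = x.2 - c := by ring
      rw [e1, e2]
    rw [key, measure_preimage_add, hC0, hμ1]
  -- the sets T β
  set T : ℕ → Set (ℚ_[p] × ℚ_[p]) :=
    fun β => {x | ‖a * x.1 + b * x.2‖ ≤ 1 ∧ ‖x.2‖ ≤ (p : ℝ) ^ β} with hTdef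
  have hTclosed : ∀ β, IsClosed (T β) := by
    intro β
    apply IsClosed.inter
    · exact isClosed_le (((continuous_const.mul continuous_fst).add
        (continuous_const.mul continuous_snd)).norm) continuous_const
    · exact isClosed_le (continuous_snd.norm) continuous_const
  -- decomposition of T β into cells
  have hT : ∀ β : ℕ, T β =
      ⋃ k ∈ Finset.range (p ^ β), C ((k : ℚ_[p]) * (p : ℚ_[p]) ^ (-(β : ℤ))) := by
    intro β
    ext x
    simp only [hTdef, hC, Set.mem_setOf_eq, Set.mem_iUnion, Finset.mem_range, exists_prop]
    constructor
    · rintro ⟨h1, h2⟩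
      have hz : ‖(p : ℚ_[p]) ^ (β : ℤ) * x.2‖ ≤ 1 := by
        rw [norm_mul, Padic.norm_p_zpow]
        calc (p : ℝ) ^ (-(β : ℤ)) * ‖x.2‖ ≤ (p : ℝ) ^ (-(β : ℤ)) * (p : ℝ) ^ (β : ℤ) := by
              refine mul_le_mul_of_nonneg_left ?_ (by positivity)
              rwa [zpow_natCast]
          _ = 1 := by rw [← zpow_add₀ hp0.ne', neg_add_cancel, zpow_zero]
      set z : ℤ_[p] := ⟨(p : ℚ_[p]) ^ (β : ℤ) * x.2, hz⟩ with hzdef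
      refine ⟨z.appr β, PadicInt.appr_lt z β, h1, ?_⟩
      have hs : ‖z - (z.appr β : ℤ_[p])‖ ≤ (p : ℝ) ^ (-(β : ℤ)) :=
        (PadicInt.norm_le_pow_iff_mem_span_pow _ β).2 (PadicInt.appr_spec β z)
      have hs' : ‖(z : ℚ_[p]) - ((z.appr β : ℕ) : ℚ_[p])‖ ≤ (p : ℝ) ^ (-(β : ℤ)) := by
        have : ((z - (z.appr β : ℤ_[p]) : ℤ_[p]) : ℚ_[p])
            = (z : ℚ_[p]) - ((z.appr β : ℕ) : ℚ_[p]) := by push_cast; ring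
        rw [← this, PadicInt.padic_norm_e_of_padicInt]
        exact hs
      have hmul : (p : ℚ_[p]) ^ (β : ℤ) *
          (x.2 - ((z.appr β : ℕ) : ℚ_[p]) * (p : ℚ_[p]) ^ (-(β : ℤ)))
          = (z : ℚ_[p]) - ((z.appr β : ℕ) : ℚ_[p]) := by
        rw [mul_sub]
        congr 1
        rw [mul_comm ((z.appr β : ℚ_[p])) _, ← mul_assoc, ← zpow_add₀ hpne]
        simp
      have hnorm := congrArg (‖·‖) hmul
      simp only [norm_mul, Padic.norm_p_zpow] at hnorm
      have hfin : (p : ℝ) ^ (-(β : ℤ)) *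
          ‖x.2 - ((z.appr β : ℕ) : ℚ_[p]) * (p : ℚ_[p]) ^ (-(β : ℤ))‖ ≤ (p : ℝ) ^ (-(β : ℤ)) := by
        rw [hnorm]; simpa using hs'
      have hpow : (0 : ℝ) < (p : ℝ) ^ (-(β : ℤ)) := by positivity
      nlinarith [hfin, hpow]
    · rintro ⟨k, hk, h1, h2⟩
      refine ⟨h1, ?_⟩
      have e : x.2 = (x.2 - (k : ℚ_[p]) * (p : ℚ_[p]) ^ (-(β : ℤ)))
          + (k : ℚ_[p]) * (p : ℚ_[p]) ^ (-(β : ℤ)) := by ring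
      have hck : ‖(k : ℚ_[p]) * (p : ℚ_[p]) ^ (-(β : ℤ))‖ ≤ (p : ℝ) ^ β := by
        rw [norm_mul, Padic.norm_p_zpow, neg_neg]
        calc ‖(k : ℚ_[p])‖ * (p : ℝ) ^ (β : ℤ) ≤ 1 * (p : ℝ) ^ (β : ℤ) := by
              refine mul_le_mul_of_nonneg_right ?_ (by positivity)
              exact_mod_cast Padic.norm_int_le_one (k : ℤ)
          _ = (p : ℝ) ^ β := by rw [one_mul, zpow_natCast]
      rw [e]
      refine le_trans (Padic.nonarchimedean _ _) (max_le (le_trans h2 ?_) hck)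
      exact one_le_pow₀ hp1.le
  -- disjointness of cells
  have hdisj : ∀ β : ℕ, (↑(Finset.range (p ^ β)) : Set ℕ).PairwiseDisjoint
      (fun k => C ((k : ℚ_[p]) * (p : ℚ_[p]) ^ (-(β : ℤ)))) := by
    intro β k hk k' hk' hne
    simp only [Finset.coe_range, Set.mem_Iio] at hk hk'
    rw [Function.onFun, Set.disjoint_left]
    intro x hxk hxk'
    apply hne
    have h2 : ‖x.2 - (k : ℚ_[p]) * (p : ℚ_[p]) ^ (-(β : ℤ))‖ ≤ 1 := hxk.2
    have h2' : ‖x.2 - (k' : ℚ_[p]) * (p : ℚ_[p]) ^ (-(β : ℤ))‖ ≤ 1 := hxk'.2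
    have e : (((k : ℤ) - (k' : ℤ) : ℤ) : ℚ_[p]) * (p : ℚ_[p]) ^ (-(β : ℤ))
        = ((k : ℚ_[p]) * (p : ℚ_[p]) ^ (-(β : ℤ)) - x.2)
          + (x.2 - (k' : ℚ_[p]) * (p : ℚ_[p]) ^ (-(β : ℤ))) := by push_cast; ring
    have hd : ‖(((k : ℤ) - (k' : ℤ) : ℤ) : ℚ_[p]) * (p : ℚ_[p]) ^ (-(β : ℤ))‖ ≤ 1 := by
      rw [e]
      refine le_trans (Padic.nonarchimedean _ _) (max_le ?_ h2')
      rwa [norm_sub_rev]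
    rw [norm_mul, Padic.norm_p_zpow, neg_neg] at hd
    have hd' : ‖(((k : ℤ) - (k' : ℤ) : ℤ) : ℚ_[p])‖ ≤ (p : ℝ) ^ (-(β : ℤ)) := by
      have hpow : (0 : ℝ) < (p : ℝ) ^ (β : ℤ) := by positivity
      have := mul_le_mul_of_nonneg_right hd (le_of_lt (by positivity :
        (0 : ℝ) < (p : ℝ) ^ (-(β : ℤ))))
      rw [one_mul, mul_assoc, ← zpow_add₀ hp0.ne', add_neg_cancel, zpow_zero, mul_one] at this
      exact this
    have hdvd : ((p : ℤ) ^ β) ∣ ((k : ℤ) - (k' : ℤ)) :=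
      (Padic.norm_int_le_pow_iff_dvd _ β).1 hd'
    by_contra hne'
    have h0 : (0 : ℤ) < |(k : ℤ) - (k' : ℤ)| := by
      rw [abs_pos, sub_ne_zero]
      exact_mod_cast hne'
    have hle := Int.le_of_dvd h0 ((dvd_abs _ _).2 hdvd)
    have hb1 : ((k : ℤ)) < (p : ℤ) ^ β := by exact_mod_cast hk
    have hb2 : ((k' : ℤ)) < (p : ℤ) ^ β := by exact_mod_cast hk'
    have hlt : |(k : ℤ) - (k' : ℤ)| < (p : ℤ) ^ β := by
      rw [abs_sub_lt_iff]
      refine ⟨by linarith [Int.natCast_nonneg k'], by linarith [Int.natCast_nonneg k]⟩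
    exact absurd hle (not_le.2 hlt)
  -- measure of T β
  have hTμ : ∀ β : ℕ, μ (T β) = ((p ^ β : ℕ) : ENNReal) := by
    intro β
    rw [hT β, measure_biUnion_finset (hdisj β) (fun k _ => hCmeas _)]
    simp only [hCμ]
    simp
  -- rewrite α = β + 1
  obtain ⟨β, rfl⟩ : ∃ β, α = β + 1 := ⟨α - 1, (Nat.succ_pred_eq_of_pos hα).symm⟩
  -- the target set is T (β+1) \ T β
  have hS : {x : ℚ_[p] × ℚ_[p] | max ‖x.1‖ ‖x.2‖ = (p : ℝ) ^ (β + 1)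
      ∧ ‖a * x.1 + b * x.2‖ ≤ 1} = T (β + 1) \ T β := by
    ext x
    simp only [hTdef, Set.mem_setOf_eq, Set.mem_diff, not_and, not_le]
    constructor
    · rintro ⟨hmax, h1⟩
      have hx2 : ‖x.2‖ = (p : ℝ) ^ (β + 1) := by
        by_contra hne
        have hx2lt : ‖x.2‖ < (p : ℝ) ^ (β + 1) :=
          lt_of_le_of_ne (hmax ▸ le_max_right _ _) hne
        have hx1 : ‖x.1‖ = (p : ℝ) ^ (β + 1) := by
          rcases max_choice ‖x.1‖ ‖x.2‖ with h | h
          · rw [h] at hmax; exact hmax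
          · rw [h] at hmax; exact absurd hmax hx2lt.ne
        have hna : ‖a * x.1‖ = (p : ℝ) ^ (β + 1) := by
          rw [norm_mul, ha, one_mul, hx1]
        have hnb : ‖b * x.2‖ < (p : ℝ) ^ (β + 1) := by
          rw [norm_mul]
          calc ‖b‖ * ‖x.2‖ ≤ 1 * ‖x.2‖ := by gcongr
            _ = ‖x.2‖ := one_mul _
            _ < _ := hx2lt
        have hne2 : ‖a * x.1‖ ≠ ‖b * x.2‖ := by rw [hna]; exact (hnb.ne).symm
        have := Padic.add_eq_max_of_ne hne2
        rw [this, hna, max_eq_left (le_of_lt (hna ▸ hnb))] at h1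
        have : (1 : ℝ) < (p : ℝ) ^ (β + 1) := by
          calc (1 : ℝ) < p := hp1
            _ ≤ (p : ℝ) ^ (β + 1) := le_self_pow₀ hp1.le (Nat.succ_ne_zero β)
        linarith
      refine ⟨⟨h1, le_of_eq hx2⟩, fun _ => ?_⟩
      rw [hx2]
      exact pow_lt_pow_right₀ hp1 (Nat.lt_succ_self β)
    · rintro ⟨⟨h1, h2⟩, hn⟩
      have hgt : (p : ℝ) ^ β < ‖x.2‖ := hn h1
      have hx2 : ‖x.2‖ = (p : ℝ) ^ (β + 1) := by
        refine le_antisymm h2 ?_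
        by_contra hlt
        push_neg at hlt
        have : ‖x.2‖ ≤ (p : ℝ) ^ (β : ℤ) := by
          rw [Padic.norm_le_pow_iff_norm_lt_pow_add_one]
          have : ((β : ℤ) + 1) = ((β + 1 : ℕ) : ℤ) := by push_cast; ring
          rw [this, zpow_natCast]
          exact hlt
        rw [zpow_natCast] at this
        linarith
      refine ⟨?_, h1⟩
      have hx1 : ‖x.1‖ ≤ (p : ℝ) ^ (β + 1) := by
        have e : a * x.1 = (a * x.1 + b * x.2) + (-(b * x.2)) := by ring
        have h3 : ‖a * x.1‖ ≤ (p : ℝ) ^ (β + 1) := by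
          rw [e]
          refine le_trans (Padic.nonarchimedean _ _) (max_le ?_ ?_)
          · exact le_trans h1 (one_le_pow₀ hp1.le)
          · rw [norm_neg, norm_mul]
            calc ‖b‖ * ‖x.2‖ ≤ 1 * ‖x.2‖ := by gcongr
              _ ≤ (p : ℝ) ^ (β + 1) := by rw [one_mul]; exact h2
        rwa [norm_mul, ha, one_mul] at h3
      rw [hx2]
      exact max_eq_right hx1
  rw [hS]
  have hsub : T β ⊆ T (β + 1) := by
    rintro x ⟨h1, h2⟩
    exact ⟨h1, le_trans h2 (pow_le_pow_right₀ hp1.le (Nat.le_succ β))⟩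
  have hfin : μ (T β) ≠ ⊤ := by rw [hTμ β]; exact ENNReal.natCast_ne_top _
  rw [measure_diff hsub (hTclosed β).measurableSet.nullMeasurableSet hfin, hTμ, hTμ]
  have hle : p ^ β ≤ p ^ (β + 1) := Nat.pow_le_pow_right hp.pos (Nat.le_succ β)
  rw [← ENNReal.natCast_sub]
  have : (p : ℝ) ^ (β + 1 - 1) * ((p : ℝ) - 1) = ((p ^ (β + 1) - p ^ β : ℕ) : ℝ) := by
    rw [Nat.cast_sub hle]
    push_cast
    ring
  rw [this, ENNReal.ofReal_natCast]

end Aux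

/-- Let `p` be a prime, `ℓ(x₁,x₂) = a x₁ + b x₂` a primitive integral
linear form. For every integer `α ≥ 1`, the set
`{x ∈ ℚ_p² : ‖x‖_p = p^α, |ℓ(x)|_p ≤ 1}` has normalized Haar measure `p^(α-1)(p-1)`. -/
theorem stmt8 (p : ℕ) [Fact p.Prime]
    (μ : Measure (ℚ_[p] × ℚ_[p])) (hμ : μ.IsAddHaarMeasure)
    (hμ1 : μ {x | ‖x.1‖ ≤ 1 ∧ ‖x.2‖ ≤ 1} = 1)
    (a b : ℤ) (hab : Int.gcd a b = 1)
    (α : ℕ) (hα : 1 ≤ α) :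
    μ {x : ℚ_[p] × ℚ_[p] | max ‖x.1‖ ‖x.2‖ = (p : ℝ) ^ α ∧
        ‖(a : ℚ_[p]) * x.1 + (b : ℚ_[p]) * x.2‖ ≤ 1} =
      ENNReal.ofReal ((p : ℝ) ^ (α - 1) * (p - 1)) := by
  haveI := hμ.toIsAddLeftInvariant
  have hp := (Fact.out : p.Prime)
  have key : ∀ z : ℤ, ¬ ((p : ℤ) ∣ z) → ‖(z : ℚ_[p])‖ = 1 := by
    intro z hz
    refine le_antisymm (Padic.norm_int_le_one z) (not_lt.1 fun h => hz ?_)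
    exact Padic.norm_intCast_lt_one_iff.1 h
  have hcase : ¬ ((p : ℤ) ∣ a) ∨ ¬ ((p : ℤ) ∣ b) := by
    by_contra h
    push_neg at h
    have : (p : ℤ) ∣ (Int.gcd a b : ℤ) := Int.dvd_coe_gcd h.1 h.2
    rw [hab] at this
    exact hp.one_lt.ne' (by exact_mod_cast Int.eq_one_of_dvd_one (by norm_num) this)
  rcases hcase with hA | hB
  · exact stmt8_aux μ hμ1 (a : ℚ_[p]) (b : ℚ_[p]) (key a hA)
      (Padic.norm_int_le_one b) α hα
  · -- swap coordinates
    set ν : Measure (ℚ_[p] × ℚ_[p]) := μ.map Prod.swap with hν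
    have hswap : Measurable (Prod.swap : ℚ_[p] × ℚ_[p] → ℚ_[p] × ℚ_[p]) := measurable_swap
    haveI : ν.IsAddLeftInvariant := by
      constructor
      intro t
      rw [hν, Measure.map_map (measurable_const_add t) hswap]
      have e : ((t + ·) ∘ Prod.swap : ℚ_[p] × ℚ_[p] → ℚ_[p] × ℚ_[p])
          = Prod.swap ∘ (t.swap + ·) := by
        funext x
        apply Prod.ext <;> simp
      rw [e, ← Measure.map_map hswap (measurable_const_add t.swap),
        map_add_left_eq_self μ t.swap]
    have hUmeas : MeasurableSet {x : ℚ_[p] × ℚ_[p] | ‖x.1‖ ≤ 1 ∧ ‖x.2‖ ≤ 1} := by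
      refine (IsClosed.inter ?_ ?_).measurableSet
      · exact isClosed_le continuous_fst.norm continuous_const
      · exact isClosed_le continuous_snd.norm continuous_const
    have hν1 : ν {x : ℚ_[p] × ℚ_[p] | ‖x.1‖ ≤ 1 ∧ ‖x.2‖ ≤ 1} = 1 := by
      rw [hν, Measure.map_apply hswap hUmeas]
      have : (Prod.swap ⁻¹' {x : ℚ_[p] × ℚ_[p] | ‖x.1‖ ≤ 1 ∧ ‖x.2‖ ≤ 1})
          = {x : ℚ_[p] × ℚ_[p] | ‖x.1‖ ≤ 1 ∧ ‖x.2‖ ≤ 1} := by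
        ext x; simp [and_comm]
      rw [this, hμ1]
    have hAmeas : MeasurableSet {x : ℚ_[p] × ℚ_[p] | max ‖x.1‖ ‖x.2‖ = (p : ℝ) ^ α ∧
        ‖(b : ℚ_[p]) * x.1 + (a : ℚ_[p]) * x.2‖ ≤ 1} := by
      refine MeasurableSet.inter ?_ ?_
      · exact (continuous_fst.norm.max continuous_snd.norm).measurable
          (measurableSet_singleton ((p : ℝ) ^ α))
      · exact (isClosed_le (((continuous_const.mul continuous_fst).add
          (continuous_const.mul continuous_snd)).norm) continuous_const).measurableSet
    have hkey := stmt8_aux ν hν1 (b : ℚ_[p]) (a : ℚ_[p]) (key b hB)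
      (Padic.norm_int_le_one a) α hα
    rw [hν, Measure.map_apply hswap hAmeas] at hkey
    have : (Prod.swap ⁻¹' {x : ℚ_[p] × ℚ_[p] | max ‖x.1‖ ‖x.2‖ = (p : ℝ) ^ α ∧
        ‖(b : ℚ_[p]) * x.1 + (a : ℚ_[p]) * x.2‖ ≤ 1})
        = {x : ℚ_[p] × ℚ_[p] | max ‖x.1‖ ‖x.2‖ = (p : ℝ) ^ α ∧
        ‖(a : ℚ_[p]) * x.1 + (b : ℚ_[p]) * x.2‖ ≤ 1} := by
      ext x
      simp only [Set.mem_preimage, Set.mem_setOf_eq, Prod.fst_swap, Prod.snd_swap]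
      rw [max_comm, add_comm]
    rwa [this] at hkey
end

section
/- With r pairwise non-proportional primitive integer linear forms ℓ_1,…,ℓ_r and S as in the context, let p be a prime with p ∉ S. Then for every integer α ≥ 1, the set U(α) = {x ∈ ℚ_p² : ‖x‖_p = p^α and |ℓ_j(x)|_p = p^α for all 1 ≤ j ≤ r} has Haar measure p^{2α−2}·(p−1)·(p+1−r). -/
open MeasureTheory

namespace Stmt9Aux

variable {p : ℕ} [Fact p.Prime]

/-- Integer representative of a residue class, as a `p`-adic number. -/
noncomputable def rep (c : ZMod p) : ℚ_[p] := ((c.val : ℤ) : ℚ_[p])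

lemma rep_norm_le (c : ZMod p) : ‖rep c‖ ≤ 1 := Padic.norm_int_le_one _

lemma cast_val_int (c : ZMod p) : (((c.val : ℤ)) : ZMod p) = c := by
  simp [ZMod.natCast_val, ZMod.cast_id]

lemma rep_inj {c c' : ZMod p} (h : ‖rep c - rep c'‖ ≤ (p : ℝ)⁻¹) : c = c' := by
  set k : ℤ := (c.val : ℤ) - (c'.val : ℤ) with hk
  have key : ((k : ℤ) : ℚ_[p]) = rep c - rep c' := by
    rw [hk]; push_cast [rep]; ring
  have h1 : ‖((k : ℤ) : ℚ_[p])‖ ≤ (p : ℝ) ^ (-(1 : ℕ) : ℤ) := by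
    rw [key]; simpa [zpow_neg] using h
  rw [Padic.norm_int_le_pow_iff_dvd] at h1
  have h2 : ((k : ℤ) : ZMod p) = 0 := by
    rw [ZMod.intCast_zmod_eq_zero_iff_dvd]
    simpa using h1
  rw [hk] at h2
  push_cast at h2
  simp only [ZMod.natCast_val, ZMod.cast_id] at h2
  exact sub_eq_zero.mp h2

lemma rep_norm_eq_one {c : ZMod p} (hc : c ≠ 0) : ‖rep c‖ = 1 := by
  refine le_antisymm (rep_norm_le c) ?_
  by_contra h
  push_neg at h
  have : (p : ℤ) ∣ (c.val : ℤ) := by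
    rw [← Padic.norm_intCast_lt_one_iff]
    exact h
  have : ((c.val : ℤ) : ZMod p) = 0 := by
    rw [ZMod.intCast_zmod_eq_zero_iff_dvd]; exact this
  rw [cast_val_int] at this
  exact hc this

lemma exists_res (y : ℚ_[p]) (h : ‖y‖ ≤ 1) :
    ∃ c : ZMod p, ‖y - rep c‖ ≤ (p : ℝ)⁻¹ := by
  set z : ℤ_[p] := ⟨y, h⟩ with hz
  refine ⟨PadicInt.toZMod z, ?_⟩
  have hmem := PadicInt.toZMod_spec z
  rw [PadicInt.maximalIdeal_eq_span_p, Ideal.mem_span_singleton] at hmem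
  obtain ⟨w, hw⟩ := hmem
  have key : y - rep (PadicInt.toZMod z) = (((p : ℤ_[p]) * w : ℤ_[p]) : ℚ_[p]) := by
    rw [← hw]
    have h1 : ((ZMod.cast (PadicInt.toZMod z) : ℤ_[p]) : ℚ_[p]) = rep (PadicInt.toZMod z) := by
      rw [← ZMod.natCast_val, rep]
      push_cast
      rfl
    push_cast [← h1]
    rfl
  rw [key]
  push_cast
  rw [norm_mul]
  have h2 : ‖((w : ℚ_[p]))‖ ≤ 1 := w.2
  have h3 : ‖((p : ℚ_[p]))‖ = (p : ℝ)⁻¹ := Padic.norm_p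
  calc ‖((p : ℚ_[p]))‖ * ‖((w : ℚ_[p]))‖ ≤ (p : ℝ)⁻¹ * 1 := by
        rw [h3]; exact mul_le_mul_of_nonneg_left h2 (by positivity)
    _ = (p : ℝ)⁻¹ := mul_one _

lemma hp_pos : (0:ℝ) < p := by
  have := (Fact.out : p.Prime).pos; exact_mod_cast this

lemma hp_one_lt : (1:ℝ) < p := by
  have := (Fact.out : p.Prime).one_lt; exact_mod_cast this

lemma hp_ne_zero : ((p : ℚ_[p])) ≠ 0 := by
  exact_mod_cast Nat.cast_ne_zero.mpr (Fact.out : p.Prime).ne_zero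

lemma norm_pi (n : ℕ) : ‖((p : ℚ_[p]) ^ (-(n:ℤ)))‖ = (p : ℝ) ^ (n:ℤ) := by
  rw [Padic.norm_p_zpow, neg_neg]

/-- 1D cover. -/
lemma cover1 (n : ℕ) (t : ℚ_[p]) (h : ‖t‖ ≤ (p : ℝ) ^ (n:ℤ)) :
    ∃ c : ZMod p, ‖t - (p : ℚ_[p]) ^ (-(n:ℤ)) * rep c‖ ≤ (p : ℝ) ^ ((n:ℤ) - 1) := by
  set y : ℚ_[p] := (p : ℚ_[p]) ^ (n:ℤ) * t with hy
  have hyn : ‖y‖ ≤ 1 := by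
    rw [hy, norm_mul, Padic.norm_p_zpow]
    calc (p:ℝ) ^ (-(n:ℤ)) * ‖t‖ ≤ (p:ℝ) ^ (-(n:ℤ)) * (p:ℝ) ^ (n:ℤ) :=
          mul_le_mul_of_nonneg_left h (by positivity)
      _ = 1 := by rw [← zpow_add₀ (ne_of_gt hp_pos)]; simp
  obtain ⟨c, hc⟩ := exists_res y hyn
  refine ⟨c, ?_⟩
  have ht : t - (p : ℚ_[p]) ^ (-(n:ℤ)) * rep c = (p : ℚ_[p]) ^ (-(n:ℤ)) * (y - rep c) := by
    rw [hy, mul_sub, ← mul_assoc, ← zpow_add₀ hp_ne_zero]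
    simp
  rw [ht, norm_mul, norm_pi]
  calc (p:ℝ) ^ (n:ℤ) * ‖y - rep c‖ ≤ (p:ℝ) ^ (n:ℤ) * (p:ℝ)⁻¹ :=
        mul_le_mul_of_nonneg_left hc (by positivity)
    _ = (p:ℝ) ^ ((n:ℤ) - 1) := by
        rw [zpow_sub₀ (ne_of_gt hp_pos), zpow_one]; ring

/-- 1D containment. -/
lemma sub1 (n : ℕ) (t : ℚ_[p]) (c : ZMod p)
    (h : ‖t - (p : ℚ_[p]) ^ (-(n:ℤ)) * rep c‖ ≤ (p : ℝ) ^ ((n:ℤ) - 1)) :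
    ‖t‖ ≤ (p : ℝ) ^ (n:ℤ) := by
  have hv : ‖(p : ℚ_[p]) ^ (-(n:ℤ)) * rep c‖ ≤ (p : ℝ) ^ (n:ℤ) := by
    rw [norm_mul, norm_pi]
    calc (p:ℝ) ^ (n:ℤ) * ‖rep c‖ ≤ (p:ℝ) ^ (n:ℤ) * 1 :=
          mul_le_mul_of_nonneg_left (rep_norm_le c) (by positivity)
      _ = _ := mul_one _
  have h1 : (p:ℝ) ^ ((n:ℤ) - 1) ≤ (p:ℝ) ^ (n:ℤ) :=
    zpow_le_zpow_right₀ (le_of_lt hp_one_lt) (by omega)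
  calc ‖t‖ = ‖(t - (p : ℚ_[p]) ^ (-(n:ℤ)) * rep c) + (p : ℚ_[p]) ^ (-(n:ℤ)) * rep c‖ := by
        ring_nf
    _ ≤ max ‖t - (p : ℚ_[p]) ^ (-(n:ℤ)) * rep c‖ ‖(p : ℚ_[p]) ^ (-(n:ℤ)) * rep c‖ :=
        Padic.nonarchimedean _ _
    _ ≤ (p:ℝ) ^ (n:ℤ) := max_le (le_trans h h1) hv

/-- 1D disjointness. -/
lemma disj1 (n : ℕ) (t : ℚ_[p]) (c c' : ZMod p)
    (h : ‖t - (p : ℚ_[p]) ^ (-(n:ℤ)) * rep c‖ ≤ (p : ℝ) ^ ((n:ℤ) - 1))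
    (h' : ‖t - (p : ℚ_[p]) ^ (-(n:ℤ)) * rep c'‖ ≤ (p : ℝ) ^ ((n:ℤ) - 1)) : c = c' := by
  apply rep_inj (p := p)
  have key : rep c - rep c' = (p : ℚ_[p]) ^ (n:ℤ) *
      ((t - (p : ℚ_[p]) ^ (-(n:ℤ)) * rep c') - (t - (p : ℚ_[p]) ^ (-(n:ℤ)) * rep c)) := by
    rw [mul_sub, mul_sub, mul_sub, ← mul_assoc, ← mul_assoc, ← zpow_add₀ hp_ne_zero]
    simp
  rw [key, norm_mul, Padic.norm_p_zpow]
  have hd : ‖(t - (p : ℚ_[p]) ^ (-(n:ℤ)) * rep c') - (t - (p : ℚ_[p]) ^ (-(n:ℤ)) * rep c)‖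
      ≤ (p : ℝ) ^ ((n:ℤ) - 1) := by
    calc _ ≤ max ‖t - (p : ℚ_[p]) ^ (-(n:ℤ)) * rep c'‖ ‖t - (p : ℚ_[p]) ^ (-(n:ℤ)) * rep c‖ := by
          rw [sub_eq_add_neg]
          refine le_trans (Padic.nonarchimedean _ _) ?_
          rw [norm_neg]
      _ ≤ _ := max_le h' h
  calc (p:ℝ) ^ (-(n:ℤ)) * ‖_‖ ≤ (p:ℝ) ^ (-(n:ℤ)) * (p:ℝ) ^ ((n:ℤ) - 1) :=
        mul_le_mul_of_nonneg_left hd (by positivity)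
    _ = (p:ℝ)⁻¹ := by
        rw [← zpow_add₀ (ne_of_gt hp_pos), show -(n:ℤ) + ((n:ℤ)-1) = -1 by ring,
          zpow_neg, zpow_one]

variable (p) in
/-- The closed "box" of radius `p^m`. -/
def Bb (m : ℤ) : Set (ℚ_[p] × ℚ_[p]) := {x | ‖x.1‖ ≤ (p:ℝ)^m ∧ ‖x.2‖ ≤ (p:ℝ)^m}

variable (p) in
/-- Center of the coset attached to a residue pair. -/
noncomputable def ctr (n : ℕ) (c : ZMod p × ZMod p) : ℚ_[p] × ℚ_[p] :=
  ((p : ℚ_[p]) ^ (-(n:ℤ)) * rep c.1, (p : ℚ_[p]) ^ (-(n:ℤ)) * rep c.2)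

variable (p) in
/-- The coset attached to a residue pair: a translate of `Bb (n-1)`. -/
def Cs (n : ℕ) (c : ZMod p × ZMod p) : Set (ℚ_[p] × ℚ_[p]) :=
  {x | ‖x.1 - (ctr p n c).1‖ ≤ (p:ℝ)^((n:ℤ)-1) ∧ ‖x.2 - (ctr p n c).2‖ ≤ (p:ℝ)^((n:ℤ)-1)}

lemma measurable_ball1 (v : ℚ_[p]) (R : ℝ) :
    MeasurableSet {x : ℚ_[p] × ℚ_[p] | ‖x.1 - v‖ ≤ R} := by
  have : IsClosed {t : ℚ_[p] | ‖t - v‖ ≤ R} :=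
    isClosed_le (by continuity) continuous_const
  exact measurable_fst this.measurableSet

lemma measurable_ball2 (v : ℚ_[p]) (R : ℝ) :
    MeasurableSet {x : ℚ_[p] × ℚ_[p] | ‖x.2 - v‖ ≤ R} := by
  have : IsClosed {t : ℚ_[p] | ‖t - v‖ ≤ R} :=
    isClosed_le (by continuity) continuous_const
  exact measurable_snd this.measurableSet

lemma measurable_Cs (n : ℕ) (c : ZMod p × ZMod p) : MeasurableSet (Cs p n c) :=
  (measurable_ball1 _ _).inter (measurable_ball2 _ _)

lemma measurable_Bb (m : ℤ) : MeasurableSet (Bb p m) := by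
  have h1 := measurable_ball1 (p := p) 0 ((p:ℝ)^m)
  have h2 := measurable_ball2 (p := p) 0 ((p:ℝ)^m)
  simp only [sub_zero] at h1 h2
  exact h1.inter h2

lemma Cs_eq_preimage (n : ℕ) (c : ZMod p × ZMod p) :
    Cs p n c = (fun x => -(ctr p n c) + x) ⁻¹' Bb p ((n:ℤ)-1) := by
  ext x
  simp only [Cs, Bb, Set.mem_preimage, Set.mem_setOf_eq, Prod.fst_add, Prod.snd_add,
    Prod.fst_neg, Prod.snd_neg, neg_add_eq_sub, Prod.fst_sub, Prod.snd_sub]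

lemma measure_Cs (μ : Measure (ℚ_[p] × ℚ_[p])) [μ.IsAddLeftInvariant]
    (n : ℕ) (c : ZMod p × ZMod p) : μ (Cs p n c) = μ (Bb p ((n:ℤ)-1)) := by
  rw [Cs_eq_preimage, measure_preimage_add]

/-- Every point of the box of radius `p^n` lies in some coset. -/
lemma Cs_cover (n : ℕ) (x : ℚ_[p] × ℚ_[p]) (hx : x ∈ Bb p (n:ℤ)) :
    ∃ c : ZMod p × ZMod p, x ∈ Cs p n c := by
  obtain ⟨c1, hc1⟩ := cover1 n x.1 hx.1
  obtain ⟨c2, hc2⟩ := cover1 n x.2 hx.2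
  exact ⟨(c1, c2), hc1, hc2⟩

lemma Cs_subset (n : ℕ) (c : ZMod p × ZMod p) : Cs p n c ⊆ Bb p (n:ℤ) :=
  fun x hx => ⟨sub1 n x.1 c.1 hx.1, sub1 n x.2 c.2 hx.2⟩

lemma Cs_disjoint (n : ℕ) : Set.PairwiseDisjoint (Set.univ : Set (ZMod p × ZMod p)) (Cs p n) := by
  intro c _ c' _ hne
  rw [Function.onFun, Set.disjoint_left]
  rintro x ⟨h1, h2⟩ ⟨h1', h2'⟩
  exact hne (Prod.ext (disj1 n x.1 c.1 c'.1 h1 h1') (disj1 n x.2 c.2 c'.2 h2 h2'))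

lemma Bb_eq_union (n : ℕ) :
    Bb p (n:ℤ) = ⋃ c ∈ (Finset.univ : Finset (ZMod p × ZMod p)), Cs p n c := by
  ext x
  simp only [Set.mem_iUnion, Finset.mem_univ, exists_prop, true_and]
  exact ⟨fun h => Cs_cover n x h, fun ⟨c, hc⟩ => Cs_subset n c hc⟩

lemma measure_Bb (μ : Measure (ℚ_[p] × ℚ_[p])) [μ.IsAddLeftInvariant]
    (hμ1 : μ {x : ℚ_[p] × ℚ_[p] | ‖x.1‖ ≤ 1 ∧ ‖x.2‖ ≤ 1} = 1) (m : ℕ) :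
    μ (Bb p (m:ℤ)) = (p : ENNReal) ^ (2*m) := by
  induction m with
  | zero =>
    have : Bb p ((0:ℕ):ℤ) = {x : ℚ_[p] × ℚ_[p] | ‖x.1‖ ≤ 1 ∧ ‖x.2‖ ≤ 1} := by
      ext x; simp [Bb]
    rw [this, hμ1]; simp
  | succ m ih =>
    have key : μ (Bb p ((m+1:ℕ):ℤ)) = ∑ c ∈ (Finset.univ : Finset (ZMod p × ZMod p)),
        μ (Cs p (m+1) c) := by
      rw [Bb_eq_union (m+1)]
      exact measure_biUnion_finset (by simpa using Cs_disjoint (m+1))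
        (fun c _ => measurable_Cs (m+1) c)
    have h2 : (((m:ℕ)+1:ℕ):ℤ) - 1 = ((m:ℕ):ℤ) := by push_cast; ring
    rw [key]
    calc ∑ c ∈ (Finset.univ : Finset (ZMod p × ZMod p)), μ (Cs p (m+1) c)
        = ∑ _c ∈ (Finset.univ : Finset (ZMod p × ZMod p)), μ (Bb p ((m:ℕ):ℤ)) := by
          refine Finset.sum_congr rfl fun c _ => ?_
          rw [measure_Cs μ (m+1) c, h2]
      _ = (Finset.univ : Finset (ZMod p × ZMod p)).card • μ (Bb p ((m:ℕ):ℤ)) := by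
          rw [Finset.sum_const]
      _ = (p : ENNReal) ^ (2*(m+1)) := by
          rw [ih, Finset.card_univ]
          have hcard : Fintype.card (ZMod p × ZMod p) = p^2 := by simp [ZMod.card, sq]
          rw [hcard, nsmul_eq_mul]
          push_cast
          ring

lemma line_card {F : Type*} [Field F] [Fintype F] [DecidableEq F] (A B : F)
    (h : ¬(A = 0 ∧ B = 0)) :
    (Finset.univ.filter fun c : F × F => A * c.1 + B * c.2 = 0).card = Fintype.card F := by
  rcases eq_or_ne B 0 with hB | hB
  · have hA : A ≠ 0 := by tauto
    rw [← Finset.card_univ]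
    apply Finset.card_bij' (fun (c : F × F) _ => c.2) (fun t _ => ((0 : F), t))
    · intros; exact Finset.mem_univ _
    · intro t _
      simp [hB]
    · intro c hc
      simp only [Finset.mem_filter, hB, zero_mul, add_zero] at hc
      have hc1 : c.1 = 0 := by
        rcases mul_eq_zero.mp hc.2 with h | h
        · exact absurd h hA
        · exact h
      exact Prod.ext hc1.symm rfl
    · intro t _; rfl
  · rw [← Finset.card_univ]
    apply Finset.card_bij' (fun (c : F × F) _ => c.1) (fun t _ => (t, -A / B * t))
    · intros; exact Finset.mem_univ _
    · intro t _
      simp only [Finset.mem_filter, Finset.mem_univ, true_and]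
      field_simp
      ring
    · intro c hc
      simp only [Finset.mem_filter] at hc
      have hc2 : -A / B * c.1 = c.2 := by
        field_simp
        linear_combination -hc.2
      exact Prod.ext rfl hc2
    · intro t _; rfl

lemma norm_add_big {u e : ℚ_[p]} {R : ℝ} (hu : ‖u‖ = R) (he : ‖e‖ < R) :
    ‖u + e‖ = R := by
  have hlt : ‖e‖ < ‖u‖ := by rw [hu]; exact he
  rw [Padic.add_eq_max_of_ne (ne_of_gt hlt), max_eq_left hlt.le, hu]

lemma coord_norm (n : ℕ) (t : ℚ_[p]) (c : ZMod p) (hc : c ≠ 0)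
    (h : ‖t - (p : ℚ_[p]) ^ (-(n:ℤ)) * rep c‖ ≤ (p:ℝ) ^ ((n:ℤ)-1)) :
    ‖t‖ = (p:ℝ) ^ (n:ℤ) := by
  have hmain : ‖(p : ℚ_[p]) ^ (-(n:ℤ)) * rep c‖ = (p:ℝ) ^ (n:ℤ) := by
    rw [norm_mul, norm_pi, rep_norm_eq_one hc, mul_one]
  have hlt : ‖t - (p : ℚ_[p]) ^ (-(n:ℤ)) * rep c‖ < (p:ℝ) ^ (n:ℤ) :=
    lt_of_le_of_lt h (zpow_lt_zpow_right₀ hp_one_lt (by omega))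
  have := norm_add_big hmain hlt
  rwa [show (p : ℚ_[p]) ^ (-(n:ℤ)) * rep c + (t - (p : ℚ_[p]) ^ (-(n:ℤ)) * rep c) = t
    by ring] at this

lemma coord_small (n : ℕ) (t : ℚ_[p])
    (h : ‖t - (p : ℚ_[p]) ^ (-(n:ℤ)) * rep (0 : ZMod p)‖ ≤ (p:ℝ) ^ ((n:ℤ)-1)) :
    ‖t‖ ≤ (p:ℝ) ^ ((n:ℤ)-1) := by
  have h0 : rep (0 : ZMod p) = 0 := by simp [rep]
  simpa [h0] using h

end Stmt9Aux


open Stmt9Aux in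
/-- Let `ℓ_k(x₁,x₂) = a_k x₁ + b_k x₂` (`1 ≤ k ≤ r`) be pairwise
non-proportional primitive integral linear forms and `p` a prime of good reduction
(dividing none of the determinants `a_j b_k − a_k b_j`, `j ≠ k`). For every `α ≥ 1`,
the set `U(α) = {x ∈ ℚ_p² : ‖x‖_p = p^α, |ℓ_j(x)|_p = p^α for all j}` has normalized
Haar measure `p^(2α−2)(p−1)(p+1−r)`. -/
theorem stmt9 (r : ℕ) (hr : 1 ≤ r) (a b : Fin r → ℤ)
    (hprim : ∀ k, Int.gcd (a k) (b k) = 1)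
    (hnonprop : ∀ j k, j ≠ k → a j * b k - a k * b j ≠ 0)
    (p : ℕ) [Fact p.Prime]
    (hpS : ∀ j k, j ≠ k → ¬ ((p : ℤ) ∣ (a j * b k - a k * b j)))
    (μ : Measure (ℚ_[p] × ℚ_[p])) (hμ : μ.IsAddHaarMeasure)
    (hμ1 : μ {x | ‖x.1‖ ≤ 1 ∧ ‖x.2‖ ≤ 1} = 1)
    (α : ℕ) (hα : 1 ≤ α) :
    μ {x : ℚ_[p] × ℚ_[p] | max ‖x.1‖ ‖x.2‖ = (p : ℝ) ^ α ∧
        ∀ j, ‖(a j : ℚ_[p]) * x.1 + (b j : ℚ_[p]) * x.2‖ = (p : ℝ) ^ α} =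
      ENNReal.ofReal ((p : ℝ) ^ (2 * α - 2) * (p - 1) * (p + 1 - r)) := by
  haveI := hμ.toIsAddLeftInvariant
  classical
  have hp1 : (1:ℝ) < p := hp_one_lt
  have hlt : (p:ℝ) ^ ((α:ℤ)-1) < (p:ℝ) ^ (α:ℤ) := zpow_lt_zpow_right₀ hp1 (by omega)
  have hpowα : (p:ℝ) ^ (α:ℤ) = (p:ℝ) ^ α := zpow_natCast _ _
  set T : Finset (ZMod p × ZMod p) := Finset.univ.filter
    (fun c => c ≠ 0 ∧ ∀ j, (a j : ZMod p) * c.1 + (b j : ZMod p) * c.2 ≠ 0) with hT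
  -- decomposition of the linear forms along a coset
  have hdecomp : ∀ (j : Fin r) (c : ZMod p × ZMod p) (x : ℚ_[p] × ℚ_[p]),
      (a j : ℚ_[p]) * x.1 + (b j : ℚ_[p]) * x.2
        = (p:ℚ_[p]) ^ (-(α:ℤ)) * ((a j * (c.1.val:ℤ) + b j * (c.2.val:ℤ) : ℤ) : ℚ_[p])
          + ((a j : ℚ_[p]) * (x.1 - (ctr p α c).1) + (b j : ℚ_[p]) * (x.2 - (ctr p α c).2)) := by
    intro j c x
    simp only [ctr, rep]
    push_cast
    ring
  have hE : ∀ (j : Fin r) (c : ZMod p × ZMod p) (x : ℚ_[p] × ℚ_[p]), x ∈ Cs p α c →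
      ‖(a j : ℚ_[p]) * (x.1 - (ctr p α c).1) + (b j : ℚ_[p]) * (x.2 - (ctr p α c).2)‖
        ≤ (p:ℝ) ^ ((α:ℤ)-1) := by
    intro j c x hx
    refine le_trans (Padic.nonarchimedean _ _) (max_le ?_ ?_)
    · rw [norm_mul]
      calc ‖((a j : ℤ) : ℚ_[p])‖ * ‖x.1 - (ctr p α c).1‖ ≤ 1 * ((p:ℝ) ^ ((α:ℤ)-1)) :=
            mul_le_mul (Padic.norm_int_le_one _) hx.1 (norm_nonneg _) zero_le_one
        _ = _ := one_mul _
    · rw [norm_mul]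
      calc ‖((b j : ℤ) : ℚ_[p])‖ * ‖x.2 - (ctr p α c).2‖ ≤ 1 * ((p:ℝ) ^ ((α:ℤ)-1)) :=
            mul_le_mul (Padic.norm_int_le_one _) hx.2 (norm_nonneg _) zero_le_one
        _ = _ := one_mul _
  have hNcast : ∀ (j : Fin r) (c : ZMod p × ZMod p),
      ((a j * (c.1.val:ℤ) + b j * (c.2.val:ℤ) : ℤ) : ZMod p)
        = (a j : ZMod p) * c.1 + (b j : ZMod p) * c.2 := by
    intro j c
    push_cast
    simp [ZMod.natCast_val, ZMod.cast_id]
  have hmain_ne : ∀ (j : Fin r) (c : ZMod p × ZMod p),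
      (a j : ZMod p) * c.1 + (b j : ZMod p) * c.2 ≠ 0 →
      ‖(p:ℚ_[p]) ^ (-(α:ℤ)) * ((a j * (c.1.val:ℤ) + b j * (c.2.val:ℤ) : ℤ) : ℚ_[p])‖
        = (p:ℝ) ^ (α:ℤ) := by
    intro j c hne
    rw [norm_mul, norm_pi]
    have h1 : ‖((a j * (c.1.val:ℤ) + b j * (c.2.val:ℤ) : ℤ) : ℚ_[p])‖ = 1 := by
      refine le_antisymm (Padic.norm_int_le_one _) ?_
      by_contra hlt1
      push_neg at hlt1
      have hdvd := Padic.norm_intCast_lt_one_iff.mp hlt1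
      have h0 : ((a j * (c.1.val:ℤ) + b j * (c.2.val:ℤ) : ℤ) : ZMod p) = 0 :=
        (ZMod.intCast_zmod_eq_zero_iff_dvd _ _).mpr hdvd
      rw [hNcast] at h0
      exact hne h0
    rw [h1, mul_one]
  have hmain_dvd : ∀ (j : Fin r) (c : ZMod p × ZMod p),
      (a j : ZMod p) * c.1 + (b j : ZMod p) * c.2 = 0 →
      ‖(p:ℚ_[p]) ^ (-(α:ℤ)) * ((a j * (c.1.val:ℤ) + b j * (c.2.val:ℤ) : ℤ) : ℚ_[p])‖
        ≤ (p:ℝ) ^ ((α:ℤ)-1) := by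
    intro j c h0
    rw [norm_mul, norm_pi]
    have hdvd : ((p:ℤ)) ∣ (a j * (c.1.val:ℤ) + b j * (c.2.val:ℤ)) := by
      rw [← ZMod.intCast_zmod_eq_zero_iff_dvd, hNcast]
      exact h0
    have h1 : ‖((a j * (c.1.val:ℤ) + b j * (c.2.val:ℤ) : ℤ) : ℚ_[p])‖ ≤ (p:ℝ) ^ (-(1:ℕ):ℤ) := by
      rw [Padic.norm_int_le_pow_iff_dvd]
      simpa using hdvd
    calc (p:ℝ) ^ (α:ℤ) * ‖((a j * (c.1.val:ℤ) + b j * (c.2.val:ℤ) : ℤ) : ℚ_[p])‖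
        ≤ (p:ℝ) ^ (α:ℤ) * (p:ℝ) ^ (-(1:ℕ):ℤ) :=
          mul_le_mul_of_nonneg_left h1 (by positivity)
      _ = (p:ℝ) ^ ((α:ℤ)-1) := by
          rw [← zpow_add₀ (ne_of_gt (hp_pos (p := p)))]
          norm_num [sub_eq_add_neg]
  have hform_eq : ∀ (j : Fin r) (c : ZMod p × ZMod p) (x : ℚ_[p] × ℚ_[p]), x ∈ Cs p α c →
      (a j : ZMod p) * c.1 + (b j : ZMod p) * c.2 ≠ 0 →
      ‖(a j : ℚ_[p]) * x.1 + (b j : ℚ_[p]) * x.2‖ = (p:ℝ) ^ (α:ℤ) := by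
    intro j c x hx hne
    rw [hdecomp j c x]
    exact norm_add_big (hmain_ne j c hne) (lt_of_le_of_lt (hE j c x hx) hlt)
  have hform_le : ∀ (j : Fin r) (c : ZMod p × ZMod p) (x : ℚ_[p] × ℚ_[p]), x ∈ Cs p α c →
      (a j : ZMod p) * c.1 + (b j : ZMod p) * c.2 = 0 →
      ‖(a j : ℚ_[p]) * x.1 + (b j : ℚ_[p]) * x.2‖ ≤ (p:ℝ) ^ ((α:ℤ)-1) := by
    intro j c x hx h0
    rw [hdecomp j c x]
    exact le_trans (Padic.nonarchimedean _ _)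
      (max_le (hmain_dvd j c h0) (hE j c x hx))
  -- the set identity
  have hU : {x : ℚ_[p] × ℚ_[p] | max ‖x.1‖ ‖x.2‖ = (p : ℝ) ^ α ∧
      ∀ j, ‖(a j : ℚ_[p]) * x.1 + (b j : ℚ_[p]) * x.2‖ = (p : ℝ) ^ α}
        = ⋃ c ∈ T, Cs p α c := by
    ext x
    simp only [Set.mem_setOf_eq, Set.mem_iUnion, exists_prop]
    constructor
    · rintro ⟨hmax, hforms⟩
      have hx1 : ‖x.1‖ ≤ (p:ℝ) ^ (α:ℤ) := by
        rw [hpowα]; exact le_of_max_le_left (le_of_eq hmax)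
      have hx2 : ‖x.2‖ ≤ (p:ℝ) ^ (α:ℤ) := by
        rw [hpowα]; exact le_of_max_le_right (le_of_eq hmax)
      obtain ⟨c, hc⟩ := Cs_cover α x ⟨hx1, hx2⟩
      refine ⟨c, ?_, hc⟩
      rw [hT, Finset.mem_filter]
      refine ⟨Finset.mem_univ _, ?_, ?_⟩
      · intro h0
        rw [h0] at hc
        have h1 := coord_small α x.1 hc.1
        have h2 := coord_small α x.2 hc.2
        have hm : max ‖x.1‖ ‖x.2‖ ≤ (p:ℝ) ^ ((α:ℤ)-1) := max_le h1 h2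
        rw [hmax, ← hpowα] at hm
        linarith
      · intro j h0
        have h1 := hform_le j c x hc h0
        rw [hforms j, ← hpowα] at h1
        linarith
    · rintro ⟨c, hcT, hc⟩
      rw [hT, Finset.mem_filter] at hcT
      obtain ⟨-, hc0, hcj⟩ := hcT
      refine ⟨?_, fun j => by rw [← hpowα]; exact hform_eq j c x hc (hcj j)⟩
      rw [← hpowα]
      have hne : c.1 ≠ 0 ∨ c.2 ≠ 0 := by
        by_contra hcon
        push_neg at hcon
        exact hc0 (Prod.ext hcon.1 hcon.2)
      rcases hne with h | h
      · rw [coord_norm α x.1 c.1 h hc.1]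
        exact max_eq_left (sub1 α x.2 c.2 hc.2)
      · rw [coord_norm α x.2 c.2 h hc.2]
        exact max_eq_right (sub1 α x.1 c.1 hc.1)
  -- the measure computation
  have hdisjT : (↑T : Set (ZMod p × ZMod p)).PairwiseDisjoint (Cs p α) :=
    (Cs_disjoint α).subset (Set.subset_univ _)
  have hμU : μ {x : ℚ_[p] × ℚ_[p] | max ‖x.1‖ ‖x.2‖ = (p : ℝ) ^ α ∧
      ∀ j, ‖(a j : ℚ_[p]) * x.1 + (b j : ℚ_[p]) * x.2‖ = (p : ℝ) ^ α}
        = (T.card : ENNReal) * (p : ENNReal) ^ (2*(α-1)) := by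
    rw [hU, measure_biUnion_finset hdisjT (fun c _ => measurable_Cs α c)]
    have hstep : ∀ c ∈ T, μ (Cs p α c) = (p : ENNReal) ^ (2*(α-1)) := by
      intro c _
      rw [measure_Cs μ α c]
      have hcast : (α:ℤ) - 1 = ((α - 1 : ℕ) : ℤ) := by
        have h1 : (1:ℕ) ≤ α := hα
        push_cast [h1]
        ring
      rw [hcast, measure_Bb μ hμ1 (α-1)]
    rw [Finset.sum_congr rfl hstep, Finset.sum_const, nsmul_eq_mul]
  rw [hμU]
  -- cardinality of T
  have hcard : (T.card : ℝ) = ((p:ℝ) - 1) * ((p:ℝ) + 1 - (r:ℝ)) := by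
    have hp2 : 2 ≤ p := (Fact.out : p.Prime).two_le
    set L : Fin r → Finset (ZMod p × ZMod p) := fun j =>
      Finset.univ.filter (fun c => c ≠ 0 ∧ (a j : ZMod p) * c.1 + (b j : ZMod p) * c.2 = 0)
      with hL
    have hLcard : ∀ j, (L j).card = p - 1 := by
      intro j
      have hAB : ¬((a j : ZMod p) = 0 ∧ (b j : ZMod p) = 0) := by
        rintro ⟨hA, hB⟩
        rw [ZMod.intCast_zmod_eq_zero_iff_dvd] at hA hB
        have hgcd : (p:ℤ) ∣ ((a j).gcd (b j) : ℤ) := by exact_mod_cast Int.dvd_gcd hA hB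
        rw [hprim j] at hgcd
        have : (p:ℤ) = 1 := Int.eq_one_of_dvd_one (by positivity) (by simpa using hgcd)
        have : p = 1 := by exact_mod_cast this
        omega
      have hline : L j = (Finset.univ.filter
          (fun c : ZMod p × ZMod p => (a j : ZMod p) * c.1 + (b j : ZMod p) * c.2 = 0)).erase 0 := by
        ext c
        simp only [hL, Finset.mem_filter, Finset.mem_univ, true_and, Finset.mem_erase]
        try tauto
      rw [hline, Finset.card_erase_of_mem (by simp), line_card _ _ hAB, ZMod.card]
    have hLdisj : ∀ j ∈ (Finset.univ : Finset (Fin r)), ∀ k ∈ (Finset.univ : Finset (Fin r)),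
        j ≠ k → Disjoint (L j) (L k) := by
      intro j _ k _ hjk
      rw [Finset.disjoint_left]
      rintro c hcj hck
      simp only [hL, Finset.mem_filter, Finset.mem_univ, true_and] at hcj hck
      obtain ⟨hc0, hj⟩ := hcj
      obtain ⟨-, hk⟩ := hck
      have hdet : ((a j * b k - a k * b j : ℤ) : ZMod p) ≠ 0 := by
        rw [Ne, ZMod.intCast_zmod_eq_zero_iff_dvd]
        exact hpS j k hjk
      have hdet' : (a j : ZMod p) * (b k : ZMod p) - (a k : ZMod p) * (b j : ZMod p) ≠ 0 := by
        push_cast at hdet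
        exact hdet
      have h1 : ((a j : ZMod p) * (b k : ZMod p) - (a k : ZMod p) * (b j : ZMod p)) * c.1 = 0 := by
        linear_combination (b k : ZMod p) * hj - (b j : ZMod p) * hk
      have h2 : ((a j : ZMod p) * (b k : ZMod p) - (a k : ZMod p) * (b j : ZMod p)) * c.2 = 0 := by
        linear_combination (a j : ZMod p) * hk - (a k : ZMod p) * hj
      have hc1 : c.1 = 0 := by
        rcases mul_eq_zero.mp h1 with h | h
        · exact absurd h hdet'
        · exact h
      have hc2 : c.2 = 0 := by
        rcases mul_eq_zero.mp h2 with h | h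
        · exact absurd h hdet'
        · exact h
      exact hc0 (Prod.ext hc1 hc2)
    set M : Finset (ZMod p × ZMod p) := (Finset.univ : Finset (Fin r)).biUnion L with hMdef
    set N : Finset (ZMod p × ZMod p) := Finset.univ.erase 0 with hNdef
    have hM : M.card = r * (p - 1) := by
      rw [hMdef, Finset.card_biUnion hLdisj]
      simp [hLcard, Finset.sum_const, Finset.card_univ]
    have hMN : M ⊆ N := by
      intro c hc
      rw [hMdef, Finset.mem_biUnion] at hc
      obtain ⟨j, -, hc⟩ := hc
      simp only [hL, Finset.mem_filter, Finset.mem_univ, true_and] at hc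
      rw [hNdef, Finset.mem_erase]
      exact ⟨hc.1, Finset.mem_univ _⟩
    have hTN : T = N \ M := by
      ext c
      simp only [hT, hNdef, hMdef, hL, Finset.mem_filter, Finset.mem_univ, true_and,
        Finset.mem_sdiff, Finset.mem_erase, Finset.mem_biUnion]
      constructor
      · rintro ⟨h0, hall⟩
        exact ⟨⟨h0, trivial⟩, fun ⟨j, _, hj⟩ => hall j hj⟩
      · rintro ⟨⟨h0, -⟩, hnot⟩
        exact ⟨h0, fun j hj => hnot ⟨j, h0, hj⟩⟩
    have hNcard : N.card = p^2 - 1 := by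
      rw [hNdef, Finset.card_erase_of_mem (Finset.mem_univ _), Finset.card_univ]
      simp [ZMod.card, sq]
    have hTcard : T.card = (p^2 - 1) - r * (p-1) := by
      rw [hTN, Finset.card_sdiff_of_subset hMN, hNcard, hM]
    have hMle : r * (p-1) ≤ p^2 - 1 := by
      rw [← hM, ← hNcard]
      exact Finset.card_le_card hMN
    have h1p : 1 ≤ p^2 := by nlinarith
    have h1p' : 1 ≤ p := by omega
    rw [hTcard, Nat.cast_sub hMle, Nat.cast_sub h1p, Nat.cast_mul, Nat.cast_sub h1p']
    push_cast
    ring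
  -- final arithmetic
  have h2a : 2*(α-1) = 2*α - 2 := by omega
  rw [h2a]
  rw [show ((p : ℝ) ^ (2 * α - 2) * ((p:ℝ) - 1) * ((p:ℝ) + 1 - (r:ℝ)))
      = (p : ℝ) ^ (2 * α - 2) * (T.card : ℝ) by rw [mul_assoc, ← hcard]]
  rw [ENNReal.ofReal_mul (by positivity), ENNReal.ofReal_pow (by positivity),
    ENNReal.ofReal_natCast, ENNReal.ofReal_natCast]
  ring
end
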